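/- arXiv:1404.6632 — 8 statements merged into one kernel-verified Lean document; each statement's English description precedes it below -/
import Mathlib

section
/- Let M = (Q, Σ, δ, q₀, F) be a DFA with |Q| = n and let S ⊆ Q. Then the state complexity of the atom A_S = {w ∈ Σ* : ∀ q ∈ Q, q·w ∈ F ↔ q ∈ S} is at most Ψ(n, |S|). -/
/-- `Psi n s` of Brzozowski–Tamm: the tight upper bound on the state complexity
of an atom `A_S` with `|S| = s` of a language of state complexity `n`. -/
def Psi (n s : ℕ) : ℕ :=
  if s = 0 ∨ s = n then 2 ^ n - 1
  else 1 + ∑ k ∈ Finset.Icc 1 s, ∑ l ∈ Finset.Icc 1 (n - s),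
    Nat.choose n k * Nat.choose (n - k) l

/-- The Myhill–Nerode right congruence of a language `K`. -/
def rightCong {A : Type*} (K : Set (List A)) : Setoid (List A) where
  r x y := ∀ z, x ++ z ∈ K ↔ y ++ z ∈ K
  iseqv := ⟨fun _ _ => Iff.rfl, fun h z => (h z).symm, fun h1 h2 z => (h1 z).trans (h2 z)⟩

/-- The state complexity of a language: the number of classes of its
Myhill–Nerode right congruence. -/
noncomputable def stateComplexity {A : Type*} (K : Set (List A)) : ℕ :=
  Nat.card (Quotient (rightCong K))

/-- The atom `A_S` of the language of the DFA `M`. -/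
def atom {A Q : Type*} (M : DFA A Q) (S : Set Q) : Set (List A) :=
  {w | ∀ q, M.evalFrom q w ∈ M.accept ↔ q ∈ S}

/-- A DFA is minimal iff all its states are reachable and pairwise distinguishable. -/
def IsMinimal {A Q : Type*} (M : DFA A Q) : Prop :=
  (∀ q, ∃ w : List A, M.evalFrom M.start w = q) ∧
  ∀ p q : Q, p ≠ q → ∃ w : List A,
    ¬(M.evalFrom p w ∈ M.accept ↔ M.evalFrom q w ∈ M.accept)

lemma aux_card_quot_le {A : Type*} (K : Set (List A)) {β : Type*} [Finite β] (φ : List A → β)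
    (h : ∀ x y, φ x = φ y → ∀ z, (x ++ z ∈ K ↔ y ++ z ∈ K)) :
    stateComplexity K ≤ Nat.card (Set.range φ) := by
  have hsurj : Function.Surjective
      (fun o : Set.range φ => (Quotient.mk (rightCong K) o.2.choose)) := by
    intro c
    induction c using Quotient.ind with
    | _ x =>
      refine ⟨⟨φ x, ⟨x, rfl⟩⟩, ?_⟩
      exact Quotient.sound (h _ x (⟨x, rfl⟩ : φ x ∈ Set.range φ).choose_spec)
  exact Nat.card_le_card_of_surjective _ hsurj

lemma aux_range_le_finset {α β : Type*} (φ : α → β) (T : Finset β) (h : ∀ x, φ x ∈ T) :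
    Nat.card (Set.range φ) ≤ T.card := by
  rw [Nat.card_coe_set_eq]
  calc (Set.range φ).ncard ≤ (↑T : Set β).ncard :=
        Set.ncard_le_ncard (by rintro _ ⟨x, rfl⟩; exact h x) T.finite_toSet
    _ = T.card := Set.ncard_coe_finset T

lemma aux_card_nonempty_finsets {Q : Type*} [Fintype Q] [DecidableEq Q] :
    (Finset.univ.filter (fun X : Finset Q => X.Nonempty)).card = 2 ^ Fintype.card Q - 1 := by
  classical
  have : (Finset.univ.filter (fun X : Finset Q => X.Nonempty))
      = Finset.univ.erase (∅ : Finset Q) := by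
    ext X
    simp [Finset.nonempty_iff_ne_empty]
  rw [this, Finset.card_erase_of_mem (Finset.mem_univ _), Finset.card_univ,
    Fintype.card_finset]

/-- the state complexity of the atom `A_S` is at most `Ψ(n, |S|)`. -/
theorem statement1 {A Q : Type*} [Fintype A] [Fintype Q] (M : DFA A Q)
    (n : ℕ) (hQ : Fintype.card Q = n) (S : Set Q) :
    stateComplexity (atom M S) ≤ Psi n S.ncard := by
  classical
  set s := S.ncard with hs
  have hfin : S.Finite := S.toFinite
  set SF : Finset Q := hfin.toFinset with hSF
  have hmemSF : ∀ q, q ∈ SF ↔ q ∈ S := fun q => hfin.mem_toFinset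
  have hcardSF : SF.card = s := (Set.ncard_eq_toFinset_card S hfin).symm
  set f : List A → Q → Q := fun x q => M.evalFrom q x with hf
  set φ : List A → Option (Finset Q × Finset Q) := fun x =>
    if Disjoint (SF.image (f x)) (SFᶜ.image (f x))
      then some (SF.image (f x), SFᶜ.image (f x)) else none with hφ
  -- membership characterization
  have hmem : ∀ x z, (x ++ z ∈ atom M S) ↔
      ((∀ p ∈ SF.image (f x), M.evalFrom p z ∈ M.accept) ∧
       (∀ p ∈ SFᶜ.image (f x), M.evalFrom p z ∉ M.accept)) := by
    intro x z
    have heval : ∀ q, M.evalFrom q (x ++ z) = M.evalFrom (f x q) z := fun q =>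
      DFA.evalFrom_of_append M q x z
    constructor
    · intro h
      constructor
      · rintro p hp
        obtain ⟨q, hq, rfl⟩ := Finset.mem_image.1 hp
        rw [← heval q]
        exact (h q).2 ((hmemSF q).1 hq)
      · rintro p hp hacc
        obtain ⟨q, hq, rfl⟩ := Finset.mem_image.1 hp
        rw [← heval q] at hacc
        exact ((hmemSF q).not.1 (Finset.mem_compl.1 hq)) ((h q).1 hacc)
    · rintro ⟨h1, h2⟩ q
      rw [heval q]
      by_cases hq : q ∈ S
      · exact ⟨fun _ => hq, fun _ => h1 _ (Finset.mem_image_of_mem _ ((hmemSF q).2 hq))⟩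
      · exact ⟨fun hacc => absurd hacc (h2 _ (Finset.mem_image_of_mem _
          (Finset.mem_compl.2 ((hmemSF q).not.2 hq)))), fun h => absurd h hq⟩
  have hkey : ∀ x y, φ x = φ y → ∀ z, (x ++ z ∈ atom M S ↔ y ++ z ∈ atom M S) := by
    intro x y hxy z
    by_cases hdx : Disjoint (SF.image (f x)) (SFᶜ.image (f x)) <;>
      by_cases hdy : Disjoint (SF.image (f y)) (SFᶜ.image (f y)) <;>
      simp only [hφ, if_pos, if_neg, hdx, hdy, if_true, if_false, ite_true, ite_false] at hxy
    · -- both disjoint, images equal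
      obtain ⟨h1, h2⟩ := Prod.mk.injEq _ _ _ _ ▸ Option.some.injEq _ _ ▸ hxy
      rw [hmem, hmem, h1, h2]
    · exact absurd hxy (by simp)
    · exact absurd hxy (by simp)
    · -- both non-disjoint: both sides false
      have hdead : ∀ w : List A, ¬ Disjoint (SF.image (f w)) (SFᶜ.image (f w)) →
          ¬ (w ++ z ∈ atom M S) := by
        intro w hd hwz
        obtain ⟨p, hp1, hp2⟩ := Finset.not_disjoint_iff.1 hd
        obtain ⟨h1, h2⟩ := (hmem w z).1 hwz
        exact h2 p hp2 (h1 p hp1)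
      simp only [hdead x hdx, hdead y hdy]
  refine le_trans (aux_card_quot_le _ φ hkey) ?_
  have hslen : s ≤ n := by
    rw [← hcardSF, ← hQ, ← Finset.card_univ]
    exact Finset.card_le_card (Finset.subset_univ _)
  by_cases hcase : s = 0 ∨ s = n
  · -- degenerate cases
    rw [Psi, if_pos hcase]
    rcases hcase with h0 | hn
    · -- S = ∅
      have hSe : S = ∅ := (Set.ncard_eq_zero hfin).1 h0
      have hSFe : SF = ∅ := by
        rw [Finset.eq_empty_iff_forall_notMem]
        intro q hq; rw [hmemSF, hSe] at hq; exact hq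
      set T : Finset (Option (Finset Q × Finset Q)) :=
        (Finset.univ.filter (fun Y : Finset Q => Y.Nonempty)).image
          (fun Y => some ((∅ : Finset Q), Y)) with hT
      have hrange : ∀ x, φ x ∈ T := by
        intro x
        have hd : Disjoint (SF.image (f x)) (SFᶜ.image (f x)) := by
          rw [hSFe]; simp
        have : φ x = some ((∅ : Finset Q), SFᶜ.image (f x)) := by
          rw [hφ]; simp [hSFe]
        rw [this, hT]
        refine Finset.mem_image.2 ⟨SFᶜ.image (f x), Finset.mem_filter.2
          ⟨Finset.mem_univ _, ?_⟩, rfl⟩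
        refine Finset.Nonempty.image ?_ _
        rw [hSFe, Finset.compl_empty]
        exact ⟨M.start, Finset.mem_univ _⟩
      refine le_trans (aux_range_le_finset φ T hrange) ?_
      calc T.card ≤ (Finset.univ.filter (fun Y : Finset Q => Y.Nonempty)).card :=
            Finset.card_image_le
        _ = 2 ^ n - 1 := by rw [aux_card_nonempty_finsets, hQ]
    · -- S = univ
      have hSFu : SF = Finset.univ := by
        apply Finset.eq_univ_of_card
        rw [hcardSF, hn, hQ]
      set T : Finset (Option (Finset Q × Finset Q)) :=
        (Finset.univ.filter (fun X : Finset Q => X.Nonempty)).image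
          (fun X => some (X, (∅ : Finset Q))) with hT
      have hrange : ∀ x, φ x ∈ T := by
        intro x
        have hce : SFᶜ = (∅ : Finset Q) := by rw [hSFu, Finset.compl_univ]
        have hd : Disjoint (SF.image (f x)) (SFᶜ.image (f x)) := by
          rw [hce]; simp
        have : φ x = some (SF.image (f x), (∅ : Finset Q)) := by
          rw [hφ]; simp [hce]
        rw [this, hT]
        refine Finset.mem_image.2 ⟨SF.image (f x), Finset.mem_filter.2
          ⟨Finset.mem_univ _, ?_⟩, rfl⟩
        refine Finset.Nonempty.image ?_ _
        rw [hSFu]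
        exact ⟨M.start, Finset.mem_univ _⟩
      refine le_trans (aux_range_le_finset φ T hrange) ?_
      calc T.card ≤ (Finset.univ.filter (fun X : Finset Q => X.Nonempty)).card :=
            Finset.card_image_le
        _ = 2 ^ n - 1 := by rw [aux_card_nonempty_finsets, hQ]
  · -- main case: 0 < s < n
    push_neg at hcase
    obtain ⟨hs0, hsn⟩ := hcase
    have hslt : s < n := lt_of_le_of_ne hslen hsn
    have hSFne : SF.Nonempty := Finset.card_pos.1 (by rw [hcardSF]; exact Nat.pos_of_ne_zero hs0)
    have hcardc : SFᶜ.card = n - s := by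
      rw [Finset.card_compl, hcardSF, hQ]
    have hSFcne : SFᶜ.Nonempty := Finset.card_pos.1 (by rw [hcardc]; omega)
    set B : Finset (Finset Q × Finset Q) :=
      (Finset.Icc 1 s).biUnion fun k => (Finset.Icc 1 (n - s)).biUnion fun l =>
        (Finset.powersetCard k Finset.univ).biUnion fun X =>
          (Finset.powersetCard l Xᶜ).image fun Y => (X, Y) with hB
    set T : Finset (Option (Finset Q × Finset Q)) := insert none (B.image some) with hT
    have hrange : ∀ x, φ x ∈ T := by
      intro x
      by_cases hd : Disjoint (SF.image (f x)) (SFᶜ.image (f x))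
      · have hφx : φ x = some (SF.image (f x), SFᶜ.image (f x)) := by
          rw [hφ]; simp only [if_pos hd]
        rw [hφx, hT]
        refine Finset.mem_insert_of_mem (Finset.mem_image_of_mem _ ?_)
        set X := SF.image (f x)
        set Y := SFᶜ.image (f x)
        have hXne : X.Nonempty := hSFne.image _
        have hYne : Y.Nonempty := hSFcne.image _
        have hXc : X.card ≤ s := le_trans Finset.card_image_le (le_of_eq hcardSF)
        have hYc : Y.card ≤ n - s := le_trans Finset.card_image_le (le_of_eq hcardc)
        refine Finset.mem_biUnion.2 ⟨X.card, Finset.mem_Icc.2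
          ⟨Finset.card_pos.2 hXne, hXc⟩, ?_⟩
        refine Finset.mem_biUnion.2 ⟨Y.card, Finset.mem_Icc.2
          ⟨Finset.card_pos.2 hYne, hYc⟩, ?_⟩
        refine Finset.mem_biUnion.2 ⟨X, Finset.mem_powersetCard_univ.2 rfl, ?_⟩
        refine Finset.mem_image.2 ⟨Y, Finset.mem_powersetCard.2 ⟨?_, rfl⟩, rfl⟩
        intro a ha
        exact Finset.mem_compl.2 (Finset.disjoint_right.1 hd ha)
      · rw [hφ]; simp only [if_neg hd]
        exact Finset.mem_insert_self _ _
    refine le_trans (aux_range_le_finset φ T hrange) ?_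
    rw [Psi, if_neg (by push_neg; exact ⟨hs0, hsn⟩)]
    have hTcard : T.card ≤ 1 + B.card := by
      rw [hT]
      refine le_trans (Finset.card_insert_le _ _) ?_
      rw [Nat.add_comm]
      exact Nat.add_le_add_left Finset.card_image_le 1
    refine le_trans hTcard (Nat.add_le_add_left ?_ 1)
    rw [hB]
    refine le_trans (Finset.card_biUnion_le) (Finset.sum_le_sum fun k hk => ?_)
    refine le_trans (Finset.card_biUnion_le) (Finset.sum_le_sum fun l hl => ?_)
    refine le_trans (Finset.card_biUnion_le) ?_
    have hXbound : ∀ X ∈ Finset.powersetCard k (Finset.univ : Finset Q),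
        ((Finset.powersetCard l Xᶜ).image fun Y => (X, Y)).card ≤ Nat.choose (n - k) l := by
      intro X hX
      refine le_trans Finset.card_image_le ?_
      rw [Finset.card_powersetCard, Finset.card_compl,
        Finset.mem_powersetCard_univ.1 hX, hQ]
    refine le_trans (Finset.sum_le_sum hXbound) ?_
    rw [Finset.sum_const, Finset.card_powersetCard, Finset.card_univ, hQ, smul_eq_mul]
end

section
/- Let M = (Q, Σ, δ, q₀, F) be a minimal DFA with |Q| = n > 1. If every function f : Q → Q is induced by some nonempty word (i.e., T(M) is the full transformation monoid on Q), then for every subset S ⊆ Q the atom A_S is nonempty; in particular the recognized language has 2^n atoms. -/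
/-- if the transformation semigroup of a minimal DFA with `n > 1`
states is the full transformation monoid, then every atom `A_S` is nonempty;
in particular the recognized language has `2 ^ n` atoms. -/
theorem statement2 {A Q : Type*} [Fintype A] [Fintype Q] (M : DFA A Q)
    (n : ℕ) (hQ : Fintype.card Q = n) (hn : 1 < n) (hmin : IsMinimal M)
    (hfull : ∀ f : Q → Q, ∃ w : List A, w ≠ [] ∧ (fun q => M.evalFrom q w) = f) :
    (∀ S : Set Q, (atom M S).Nonempty) ∧
      Nat.card {S : Set Q // (atom M S).Nonempty} = 2 ^ n := by
  classical
  -- find an accepting state and a non-accepting state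
  have hQ2 : 1 < Fintype.card Q := hQ ▸ hn
  obtain ⟨p, q, hpq⟩ := Fintype.exists_pair_of_one_lt_card hQ2
  obtain ⟨w0, hw0⟩ := hmin.2 p q hpq
  set a' := M.evalFrom p w0
  set b' := M.evalFrom q w0
  have hab : ∃ a b : Q, a ∈ M.accept ∧ b ∉ M.accept := by
    by_cases ha : a' ∈ M.accept
    · exact ⟨a', b', ha, fun hb => hw0 ⟨fun _ => hb, fun _ => ha⟩⟩
    · by_cases hb : b' ∈ M.accept
      · exact ⟨b', a', hb, ha⟩
      · exact absurd ⟨fun h => absurd h ha, fun h => absurd h hb⟩ hw0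
  obtain ⟨a, b, haA, hbA⟩ := hab
  have hmain : ∀ S : Set Q, (atom M S).Nonempty := by
    intro S
    obtain ⟨w, _, hw⟩ := hfull (fun x => if x ∈ S then a else b)
    refine ⟨w, fun x => ?_⟩
    have := congrFun hw x
    rw [this]
    by_cases hx : x ∈ S <;> simp [hx, haA, hbA]
  refine ⟨hmain, ?_⟩
  have : Nat.card {S : Set Q // (atom M S).Nonempty} = Nat.card (Set Q) := by
    exact Nat.card_congr (Equiv.subtypeUnivEquiv hmain)
  rw [this, Nat.card_eq_fintype_card, Fintype.card_set, hQ]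
end

section
/- Let M = (Q, Σ, δ, q₀, F) be a minimal DFA with |Q| = n ≥ 3 and let S ⊆ Q be such that A_S is nonempty and has state complexity Ψ(n, |S|). Then P(M) is |S|-set-transitive: for all X, Y ⊆ Q with |X| = |Y| = |S| there is a word w inducing a permutation of Q with X·w = Y. -/
lemma mem_atom_append {A Q : Type*} (M : DFA A Q) (S : Set Q) (x z : List A) :
    x ++ z ∈ atom M S ↔
      ((∀ p ∈ (fun q => M.evalFrom q x) '' S, M.evalFrom p z ∈ M.accept) ∧
       (∀ p ∈ (fun q => M.evalFrom q x) '' Sᶜ, M.evalFrom p z ∉ M.accept)) := by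
  simp only [atom, Set.mem_setOf_eq, DFA.evalFrom_of_append]
  constructor
  · intro h
    constructor
    · rintro p ⟨q, hq, rfl⟩
      exact (h q).mpr hq
    · rintro p ⟨q, hq, rfl⟩ hacc
      exact hq ((h q).mp hacc)
  · rintro ⟨h1, h2⟩ q
    by_cases hq : q ∈ S
    · exact iff_of_true (h1 _ ⟨q, hq, rfl⟩) hq
    · exact iff_of_false (h2 _ ⟨q, hq, rfl⟩) hq

lemma count_pairs {Q : Type*} [Fintype Q] [DecidableEq Q] (s t : ℕ) :
    ((Finset.univ : Finset (Finset Q × Finset Q)).filter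
      (fun pr => Disjoint pr.1 pr.2 ∧ 1 ≤ pr.1.card ∧ pr.1.card ≤ s ∧
        1 ≤ pr.2.card ∧ pr.2.card ≤ t)).card
    = ∑ k ∈ Finset.Icc 1 s, ∑ l ∈ Finset.Icc 1 t,
        Nat.choose (Fintype.card Q) k * Nat.choose (Fintype.card Q - k) l := by
  rw [Finset.card_eq_sum_card_fiberwise
    (f := fun pr : Finset Q × Finset Q => (pr.1.card, pr.2.card))
    (t := Finset.Icc 1 s ×ˢ Finset.Icc 1 t) (by
      intro pr hpr
      simp only [Finset.mem_coe, Finset.mem_filter] at hpr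
      simp only [Finset.mem_coe, Finset.mem_product, Finset.mem_Icc]
      exact ⟨⟨hpr.2.2.1, hpr.2.2.2.1⟩, hpr.2.2.2.2.1, hpr.2.2.2.2.2⟩)]
  rw [Finset.sum_product]
  refine Finset.sum_congr rfl fun k hk => Finset.sum_congr rfl fun l hl => ?_
  simp only [Finset.mem_Icc] at hk hl
  rw [Finset.filter_filter]
  have hset : (Finset.univ.filter fun pr : Finset Q × Finset Q =>
      (Disjoint pr.1 pr.2 ∧ 1 ≤ pr.1.card ∧ pr.1.card ≤ s ∧ 1 ≤ pr.2.card ∧ pr.2.card ≤ t) ∧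
      (pr.1.card, pr.2.card) = (k, l))
      = (Finset.powersetCard k (Finset.univ : Finset Q)).biUnion
          (fun P => ({P} : Finset (Finset Q)) ×ˢ Finset.powersetCard l Pᶜ) := by
    ext ⟨P, R⟩
    simp only [Finset.mem_filter, Finset.mem_univ, true_and, Prod.mk.injEq,
      Finset.mem_biUnion, Finset.mem_powersetCard, Finset.mem_product,
      Finset.mem_singleton, Finset.subset_univ, true_and]
    constructor
    · rintro ⟨⟨hd, -, -, -, -⟩, hk', hl'⟩
      exact ⟨P, hk', rfl, le_compl_iff_disjoint_left.mpr hd, hl'⟩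
    · rintro ⟨P', hP', rfl, hR, hRl⟩
      have hd : Disjoint P R := le_compl_iff_disjoint_left.mp hR
      exact ⟨⟨hd, by omega, by omega, by omega, by omega⟩, hP', hRl⟩
  rw [hset, Finset.card_biUnion (by
    intro P hP P' hP' hne
    simp only [Finset.disjoint_left, Finset.mem_product, Finset.mem_singleton]
    rintro ⟨a, b⟩ ⟨rfl, -⟩ ⟨rfl, -⟩
    exact hne rfl)]
  have : ∀ P ∈ Finset.powersetCard k (Finset.univ : Finset Q),
      (({P} : Finset (Finset Q)) ×ˢ Finset.powersetCard l Pᶜ).card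
        = Nat.choose (Fintype.card Q - k) l := by
    intro P hP
    simp only [Finset.mem_powersetCard] at hP
    rw [Finset.card_product, Finset.card_singleton, one_mul,
      Finset.card_powersetCard, Finset.card_compl, hP.2]
  rw [Finset.sum_congr rfl this, Finset.sum_const, Finset.card_powersetCard,
    Finset.card_univ, smul_eq_mul]

lemma eval_flatten_replicate {A Q : Type*} (M : DFA A Q) (u : List A) :
    ∀ (k : ℕ) (q : Q), M.evalFrom q (List.flatten (List.replicate k u))
      = (fun p => M.evalFrom p u)^[k] q := by
  intro k
  induction k with
  | zero => intro q; simp [DFA.evalFrom]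
  | succ k ih =>
      intro q
      rw [List.replicate_succ, List.flatten_cons, DFA.evalFrom_of_append,
        Function.iterate_succ_apply]
      exact ih _

/-- if an atom `A_S` of a minimal DFA with `n ≥ 3` states is
nonempty of maximal state complexity `Ψ(n, |S|)`, then `P(M)` is
`|S|`-set-transitive. -/
theorem statement4 {A Q : Type*} [Fintype A] [Fintype Q] (M : DFA A Q)
    (n : ℕ) (hQ : Fintype.card Q = n) (hn : 3 ≤ n) (hmin : IsMinimal M)
    (S : Set Q) (hne : (atom M S).Nonempty)
    (hsc : stateComplexity (atom M S) = Psi n S.ncard) :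
    ∀ X Y : Set Q, X.ncard = S.ncard → Y.ncard = S.ncard →
      ∃ w : List A, Function.Bijective (fun q => M.evalFrom q w) ∧
        (fun q => M.evalFrom q w) '' X = Y := by
  classical
  intro X Y hX hY
  have hidfun : (fun q : Q => M.evalFrom q ([] : List A)) = id := rfl
  have hsn : S.ncard ≤ n := by
    rw [← hQ, ← Nat.card_eq_fintype_card, ← Set.ncard_univ]
    exact Set.ncard_le_ncard (Set.subset_univ S) (Set.toFinite _)
  by_cases hs0 : S.ncard = 0
  · have hX0 : X = ∅ := (Set.ncard_eq_zero (Set.toFinite X)).mp (by omega)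
    have hY0 : Y = ∅ := (Set.ncard_eq_zero (Set.toFinite Y)).mp (by omega)
    exact ⟨[], by rw [hidfun]; exact Function.bijective_id, by simp [hX0, hY0, hidfun]⟩
  by_cases hsn' : S.ncard = n
  · have hXu : X = Set.univ := by
      apply Set.eq_of_subset_of_ncard_le (Set.subset_univ X)
      rw [Set.ncard_univ, Nat.card_eq_fintype_card, hQ]; omega
    have hYu : Y = Set.univ := by
      apply Set.eq_of_subset_of_ncard_le (Set.subset_univ Y)
      rw [Set.ncard_univ, Nat.card_eq_fintype_card, hQ]; omega
    exact ⟨[], by rw [hidfun]; exact Function.bijective_id, by simp [hXu, hYu, hidfun]⟩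
  -- main case
  have hs1 : 1 ≤ S.ncard := by omega
  have hslt : S.ncard < n := by omega
  have hScompl : Sᶜ.ncard = n - S.ncard := by
    have := Set.ncard_add_ncard_compl S
    rw [Nat.card_eq_fintype_card, hQ] at this
    omega
  set T : Finset (Finset Q × Finset Q) := Finset.univ.filter
    (fun pr => Disjoint pr.1 pr.2 ∧ 1 ≤ pr.1.card ∧ pr.1.card ≤ S.ncard ∧
      1 ≤ pr.2.card ∧ pr.2.card ≤ n - S.ncard) with hTdef
  have hmemT : ∀ x : List A, (∃ z, x ++ z ∈ atom M S) →
      (((fun q => M.evalFrom q x) '' S).toFinset,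
       ((fun q => M.evalFrom q x) '' Sᶜ).toFinset) ∈ T := by
    intro x ⟨z, hz⟩
    obtain ⟨h1, h2⟩ := (mem_atom_append M S x z).mp hz
    rw [hTdef, Finset.mem_filter]
    refine ⟨Finset.mem_univ _, ?_, ?_, ?_, ?_, ?_⟩
    · exact Set.disjoint_toFinset.mpr (Set.disjoint_left.mpr fun p hp hp' => h2 p hp' (h1 p hp))
    · exact Finset.card_pos.mpr (Set.toFinset_nonempty.mpr
        ((Set.nonempty_of_ncard_ne_zero (by omega)).image _))
    · rw [← Set.ncard_eq_toFinset_card']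
      exact Set.ncard_image_le (Set.toFinite S)
    · exact Finset.card_pos.mpr (Set.toFinset_nonempty.mpr
        ((Set.nonempty_of_ncard_ne_zero (by omega)).image _))
    · rw [← Set.ncard_eq_toFinset_card']
      exact le_trans (Set.ncard_image_le (Set.toFinite Sᶜ)) (le_of_eq hScompl)
  set Φ : Quotient (rightCong (atom M S)) → Option {pr : Finset Q × Finset Q // pr ∈ T} :=
    fun c => if h : ∃ z, c.out ++ z ∈ atom M S
      then some ⟨_, hmemT c.out h⟩ else none with hΦdef
  have hdet : ∀ x y : List A,
      (fun q => M.evalFrom q x) '' S = (fun q => M.evalFrom q y) '' S →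
      (fun q => M.evalFrom q x) '' Sᶜ = (fun q => M.evalFrom q y) '' Sᶜ →
      ∀ z, (x ++ z ∈ atom M S ↔ y ++ z ∈ atom M S) := by
    intro x y h1 h2 z
    rw [mem_atom_append, mem_atom_append, h1, h2]
  have hinj : Function.Injective Φ := by
    intro c c' h
    rw [← Quotient.out_equiv_out]
    show ∀ z, (c.out ++ z ∈ atom M S ↔ c'.out ++ z ∈ atom M S)
    by_cases h1 : ∃ z, c.out ++ z ∈ atom M S
      <;> by_cases h2 : ∃ z, c'.out ++ z ∈ atom M S
    · rw [hΦdef] at h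
      simp only [dif_pos h1, dif_pos h2, Option.some.injEq, Subtype.mk.injEq,
        Prod.mk.injEq] at h
      exact hdet _ _ (Set.toFinset_inj.mp h.1) (Set.toFinset_inj.mp h.2)
    · rw [hΦdef] at h; simp only [dif_pos h1, dif_neg h2] at h
      exact absurd h (by simp)
    · rw [hΦdef] at h; simp only [dif_neg h1, dif_pos h2] at h
      exact absurd h (by simp)
    · push_neg at h1 h2
      exact fun z => iff_of_false (h1 z) (h2 z)
  have hfin : Finite (Quotient (rightCong (atom M S))) := Finite.of_injective Φ hinj
  have := Fintype.ofFinite (Quotient (rightCong (atom M S)))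
  have hTcard : T.card = ∑ k ∈ Finset.Icc 1 S.ncard, ∑ l ∈ Finset.Icc 1 (n - S.ncard),
      Nat.choose n k * Nat.choose (n - k) l := by
    rw [hTdef, count_pairs, hQ]
  have hcards : Fintype.card (Quotient (rightCong (atom M S)))
      = Fintype.card (Option {pr : Finset Q × Finset Q // pr ∈ T}) := by
    rw [← Nat.card_eq_fintype_card]
    have : Nat.card (Quotient (rightCong (atom M S))) = Psi n S.ncard := hsc
    rw [this, Fintype.card_option, Fintype.card_coe, hTcard, Psi,
      if_neg (by push_neg; exact ⟨hs0, hsn'⟩)]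
    omega
  have hsurj : Function.Surjective Φ :=
    ((Fintype.bijective_iff_injective_and_card Φ).mpr ⟨hinj, hcards⟩).2
  -- key claim
  have key : ∀ P : Set Q, P.ncard = S.ncard → ∃ w : List A,
      Function.Bijective (fun q => M.evalFrom q w) ∧
        (fun q => M.evalFrom q w) '' S = P := by
    intro P hP
    have hPc : Pᶜ.ncard = n - S.ncard := by
      have := Set.ncard_add_ncard_compl P
      rw [Nat.card_eq_fintype_card, hQ] at this
      omega
    have hPT : (P.toFinset, Pᶜ.toFinset) ∈ T := by
      rw [hTdef, Finset.mem_filter]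
      refine ⟨Finset.mem_univ _, ?_, ?_, ?_, ?_, ?_⟩
      · exact Set.disjoint_toFinset.mpr disjoint_compl_right
      · rw [← Set.ncard_eq_toFinset_card']; omega
      · rw [← Set.ncard_eq_toFinset_card']; omega
      · rw [← Set.ncard_eq_toFinset_card']; omega
      · rw [← Set.ncard_eq_toFinset_card']; omega
    obtain ⟨c, hc⟩ := hsurj (some ⟨(P.toFinset, Pᶜ.toFinset), hPT⟩)
    rw [hΦdef] at hc
    by_cases hz : ∃ z, c.out ++ z ∈ atom M S
    · simp only [dif_pos hz, Option.some.injEq, Subtype.mk.injEq, Prod.mk.injEq] at hc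
      have h1 : (fun q => M.evalFrom q c.out) '' S = P := Set.toFinset_inj.mp hc.1
      have h2 : (fun q => M.evalFrom q c.out) '' Sᶜ = Pᶜ := Set.toFinset_inj.mp hc.2
      have hrange : Set.range (fun q => M.evalFrom q c.out) = Set.univ := by
        have hr : Set.range (fun q => M.evalFrom q c.out)
            = (fun q => M.evalFrom q c.out) '' S ∪ (fun q => M.evalFrom q c.out) '' Sᶜ := by
          rw [← Set.image_union, Set.union_compl_self, Set.image_univ]
        rw [hr, h1, h2, Set.union_compl_self]
      have hsurjf : Function.Surjective (fun q => M.evalFrom q c.out) :=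
        Set.range_eq_univ.mp hrange
      exact ⟨c.out, Finite.surjective_iff_bijective.mp hsurjf, h1⟩
    · simp only [dif_neg hz] at hc
      exact absurd hc (by simp)
  -- compose
  obtain ⟨u, hub, huS⟩ := key X hX
  obtain ⟨v, hvb, hvS⟩ := key Y hY
  set e : Equiv.Perm Q := Equiv.ofBijective _ hub with hedef
  have hm : 0 < orderOf e := orderOf_pos e
  set w : List A := List.flatten (List.replicate (orderOf e - 1) u) ++ v with hwdef
  have hw : ∀ q, M.evalFrom q w = M.evalFrom (e.symm q) v := by
    intro q
    rw [hwdef, DFA.evalFrom_of_append, eval_flatten_replicate]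
    congr 1
    have h1 : (fun p => M.evalFrom p u)^[orderOf e - 1] q = (e ^ (orderOf e - 1)) q := by
      rw [Equiv.Perm.coe_pow]; rfl
    rw [h1]
    have h2 : e ^ (orderOf e - 1) = e⁻¹ := by
      rw [← mul_left_cancel_iff (a := e), mul_inv_cancel, ← pow_succ',
        Nat.sub_add_cancel hm, pow_orderOf_eq_one]
    rw [h2]; rfl
  have hwf : (fun q => M.evalFrom q w) = (fun q => M.evalFrom q v) ∘ ⇑e.symm :=
    funext hw
  refine ⟨w, ?_, ?_⟩
  · rw [hwf]; exact hvb.comp e.symm.bijective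
  · rw [hwf, Set.image_comp]
    have heX : ⇑e.symm '' X = S := by
      have : ⇑e '' S = X := huS
      rw [← this, Equiv.symm_image_image]
    rw [heX, hvS]
end

section
/- Let M = (Q, Σ, δ, q₀, F) be a minimal DFA with |Q| = n ≥ 3 and let S ⊆ Q be such that A_S is nonempty and has state complexity Ψ(n, |S|). Then there exists a nonempty word w whose induced transformation f_w : Q → Q, q ↦ q·w, has rank exactly n − 1 (i.e., its image has cardinality n − 1). -/
/-- if an atom `A_S` of a minimal DFA with `n ≥ 3` states is
nonempty of maximal state complexity `Ψ(n, |S|)`, then some nonempty word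
induces a transformation of rank exactly `n - 1`. -/
theorem statement5 {A Q : Type*} [Fintype A] [Fintype Q] (M : DFA A Q)
    (n : ℕ) (hQ : Fintype.card Q = n) (hn : 3 ≤ n) (hmin : IsMinimal M)
    (S : Set Q) (hne : (atom M S).Nonempty)
    (hsc : stateComplexity (atom M S) = Psi n S.ncard) :
    ∃ w : List A, w ≠ [] ∧ (Set.range (fun q => M.evalFrom q w)).ncard = n - 1 := by
  classical
  by_contra hcon
  push_neg at hcon
  set K := atom M S with hK
  set f : List A → Q → Q := fun w q => M.evalFrom q w with hf
  set Sf : Finset Q := Finset.univ.filter (· ∈ S) with hSf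
  set Scf : Finset Q := Finset.univ.filter (· ∉ S) with hScf
  set X : List A → Finset Q := fun w => Sf.image (f w) with hX
  set Y : List A → Finset Q := fun w => Scf.image (f w) with hY
  -- basic cardinalities
  have hcards : Sf.card + Scf.card = n := by
    rw [hSf, hScf, Finset.card_filter_add_card_filter_not, Finset.card_univ, hQ]
  have hs : S.ncard = Sf.card := by
    rw [← Nat.card_coe_set_eq, Nat.card_eq_fintype_card, hSf]
    exact Fintype.card_subtype _
  -- union of images is full image
  have himg : ∀ w, X w ∪ Y w = Finset.univ.image (f w) := by
    intro w
    ext q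
    simp only [hX, hY, Finset.mem_union, Finset.mem_image, hSf, hScf, Finset.mem_filter,
      Finset.mem_univ, true_and]
    constructor
    · rintro (⟨a, _, rfl⟩ | ⟨a, _, rfl⟩) <;> exact ⟨a, rfl⟩
    · rintro ⟨a, rfl⟩
      by_cases ha : a ∈ S
      · exact Or.inl ⟨a, ha, rfl⟩
      · exact Or.inr ⟨a, ha, rfl⟩
  -- no word has full-image cardinality n-1
  have hno : ∀ w, (Finset.univ.image (f w)).card ≠ n - 1 := by
    intro w
    have hr : (Set.range (fun q => M.evalFrom q w)).ncard = (Finset.univ.image (f w)).card := by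
      rw [show Set.range (fun q => M.evalFrom q w) = ((Finset.univ.image (f w) : Finset Q) : Set Q) by
        rw [Finset.coe_image, Finset.coe_univ, Set.image_univ]]
      exact Set.ncard_coe_finset _
    rcases eq_or_ne w [] with rfl | hw
    · have huniv : Finset.univ.image (f []) = Finset.univ := by
        apply Finset.eq_univ_of_forall
        intro q
        exact Finset.mem_image.2 ⟨q, Finset.mem_univ q, rfl⟩
      rw [huniv, Finset.card_univ, hQ]
      omega
    · rw [← hr]; exact hcon w hw
  -- membership of an extension in the atom
  have hmemb : ∀ w z, (w ++ z ∈ K) ↔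
      ((∀ x ∈ X w, M.evalFrom x z ∈ M.accept) ∧ (∀ y ∈ Y w, M.evalFrom y z ∉ M.accept)) := by
    intro w z
    simp only [hK, atom, Set.mem_setOf_eq, DFA.evalFrom_of_append]
    constructor
    · intro h
      constructor
      · intro x hx
        obtain ⟨a, ha, rfl⟩ := Finset.mem_image.1 hx
        rw [hSf, Finset.mem_filter] at ha
        exact (h a).2 ha.2
      · intro y hy hacc
        obtain ⟨a, ha, rfl⟩ := Finset.mem_image.1 hy
        rw [hScf, Finset.mem_filter] at ha
        exact ha.2 ((h a).1 hacc)
    · rintro ⟨h1, h2⟩ q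
      by_cases hq : q ∈ S
      · refine ⟨fun _ => hq, fun _ => ?_⟩
        exact h1 _ (Finset.mem_image.2 ⟨q, by simp [hSf, hq], rfl⟩)
      · refine ⟨fun hacc => absurd hacc ?_, fun h => absurd h hq⟩
        exact h2 _ (Finset.mem_image.2 ⟨q, by simp [hScf, hq], rfl⟩)
  have hdead : ∀ w, ¬ Disjoint (X w) (Y w) → ∀ z, w ++ z ∉ K := by
    intro w hw z hz
    obtain ⟨q, hq1, hq2⟩ := Finset.not_disjoint_iff.1 hw
    obtain ⟨h1, h2⟩ := (hmemb w z).1 hz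
    exact h2 q hq2 (h1 q hq1)
  -- the condition on pairs
  set Cond : Finset Q × Finset Q → Prop :=
    fun p => ∃ w, p.1 = X w ∧ p.2 = Y w ∧ Disjoint p.1 p.2 with hCond
  -- the injection
  set G : Quotient (rightCong K) → Option {p : Finset Q × Finset Q // Cond p} :=
    fun c => if h : Disjoint (X c.out) (Y c.out)
      then some ⟨(X c.out, Y c.out), c.out, rfl, rfl, h⟩ else none with hG
  have hGinj : Function.Injective G := by
    intro c c' h
    have key : ∀ z, c.out ++ z ∈ K ↔ c'.out ++ z ∈ K := by
      by_cases h1 : Disjoint (X c.out) (Y c.out) <;>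
        by_cases h2 : Disjoint (X c'.out) (Y c'.out)
      · simp only [hG, dif_pos h1, dif_pos h2, Option.some.injEq, Subtype.mk.injEq,
          Prod.mk.injEq] at h
        intro z
        rw [hmemb, hmemb, h.1, h.2]
      · simp only [hG, dif_pos h1, dif_neg h2] at h
        exact absurd h (by simp)
      · simp only [hG, dif_neg h1, dif_pos h2] at h
        exact absurd h (by simp)
      · intro z; exact iff_of_false (hdead _ h1 z) (hdead _ h2 z)
    have heq : Quotient.mk (rightCong K) c.out = Quotient.mk (rightCong K) c'.out :=
      Quotient.sound key
    rwa [Quotient.out_eq, Quotient.out_eq] at heq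
  -- cardinality chain
  set V : Finset (Finset Q × Finset Q) := Finset.univ.filter Cond with hV
  have hchain : Psi n S.ncard ≤ 1 + V.card := by
    rw [← hsc]
    calc stateComplexity K = Nat.card (Quotient (rightCong K)) := rfl
      _ ≤ Nat.card (Option {p : Finset Q × Finset Q // Cond p}) :=
          Nat.card_le_card_of_injective G hGinj
      _ = Fintype.card (Option {p : Finset Q × Finset Q // Cond p}) := Nat.card_eq_fintype_card
      _ = Fintype.card {p : Finset Q × Finset Q // Cond p} + 1 := Fintype.card_option
      _ = V.card + 1 := by rw [Fintype.card_subtype]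
      _ = 1 + V.card := by omega
  -- facts about members of V
  have hVmem : ∀ p ∈ V, ∃ w, p.1 = X w ∧ p.2 = Y w ∧ Disjoint p.1 p.2 := by
    intro p hp
    exact (Finset.mem_filter.1 hp).2
  have hVcard : ∀ p ∈ V, p.1.card + p.2.card ≠ n - 1 := by
    intro p hp
    obtain ⟨w, h1, h2, hd⟩ := hVmem p hp
    rw [h1, h2, ← Finset.card_union_of_disjoint (h1 ▸ h2 ▸ hd), himg]
    exact hno w
  -- case split
  by_cases hS0 : S = ∅ ∨ S = Set.univ
  · -- degenerate cases: Psi = 2^n - 1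
    have hpsi : Psi n S.ncard = 2 ^ n - 1 := by
      rcases hS0 with h | h
      · rw [h]; simp [Psi, Set.ncard_empty]
      · rw [h, Set.ncard_univ, Nat.card_eq_fintype_card, hQ, Psi, if_pos (Or.inr rfl)]
    have hVsub : ∃ g : Finset Q × Finset Q → Finset Q, (∀ p ∈ V, g p ≠ ∅ ∧ (g p).card ≠ n - 1) ∧
        Set.InjOn g ↑V := by
      have hQne : Nonempty Q := by
        rw [← Fintype.card_pos_iff, hQ]; omega
      rcases hS0 with hSe | hSu
      · have hXe : ∀ u, X u = ∅ := by
          intro u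
          rw [hX]
          have hSfe : Sf = ∅ := by rw [hSf, hSe]; simp
          rw [hSfe]
          exact Finset.image_empty _
        refine ⟨Prod.snd, fun p hp => ?_, fun p hp q hq hpq => ?_⟩
        · obtain ⟨w, h1, h2, hd⟩ := hVmem p hp
          have hYe : Y w = Finset.univ.image (f w) := by
            rw [← himg, hXe, Finset.empty_union]
          constructor
          · rw [h2, hYe]
            intro hc
            have hcc : (Finset.univ.image (f w)).Nonempty :=
              ⟨f w (Classical.arbitrary Q), Finset.mem_image.2 ⟨_, Finset.mem_univ _, rfl⟩⟩
            rw [hc] at hcc; exact Finset.not_nonempty_empty hcc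
          · have := hVcard p hp
            have hp1 : p.1.card = 0 := by rw [h1, hXe]; simp
            omega
        · obtain ⟨w, h1, _, _⟩ := hVmem p (by simpa using hp)
          obtain ⟨w', h1', _, _⟩ := hVmem q (by simpa using hq)
          have hfst : p.1 = q.1 := by rw [h1, h1', hXe, hXe]
          exact Prod.ext hfst hpq
      · have hYe : ∀ u, Y u = ∅ := by
          intro u
          rw [hY]
          have hScfe : Scf = ∅ := by rw [hScf, hSu]; simp
          rw [hScfe]
          exact Finset.image_empty _
        refine ⟨Prod.fst, fun p hp => ?_, fun p hp q hq hpq => ?_⟩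
        · obtain ⟨w, h1, h2, hd⟩ := hVmem p hp
          have hXe : X w = Finset.univ.image (f w) := by
            rw [← himg, hYe, Finset.union_empty]
          constructor
          · rw [h1, hXe]
            intro hc
            have hcc : (Finset.univ.image (f w)).Nonempty :=
              ⟨f w (Classical.arbitrary Q), Finset.mem_image.2 ⟨_, Finset.mem_univ _, rfl⟩⟩
            rw [hc] at hcc; exact Finset.not_nonempty_empty hcc
          · have := hVcard p hp
            have hp2 : p.2.card = 0 := by rw [h2, hYe]; simp
            omega
        · obtain ⟨w, _, h2, _⟩ := hVmem p (by simpa using hp)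
          obtain ⟨w', _, h2', _⟩ := hVmem q (by simpa using hq)
          have hsnd : p.2 = q.2 := by rw [h2, h2', hYe, hYe]
          exact Prod.ext hpq hsnd
    obtain ⟨g, hg, hginj⟩ := hVsub
    set W : Finset (Finset Q) := Finset.univ.filter (fun T => T ≠ ∅ ∧ T.card ≠ n - 1) with hW
    have hVW : V.card ≤ W.card := by
      apply Finset.card_le_card_of_injOn g
      · intro p hp
        rw [Finset.mem_coe, hW, Finset.mem_filter]
        exact ⟨Finset.mem_univ _, hg p hp⟩
      · exact hginj
    have hWcard : W.card ≤ 2 ^ n - (n + 1) := by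
      have hsub : W ⊆ Finset.univ \ (insert ∅ (Finset.powersetCard (n - 1) Finset.univ)) := by
        intro T hT
        rw [hW, Finset.mem_filter] at hT
        rw [Finset.mem_sdiff]
        refine ⟨Finset.mem_univ _, ?_⟩
        rw [Finset.mem_insert]
        push_neg
        refine ⟨Finset.nonempty_iff_ne_empty.2 hT.2.1, ?_⟩
        intro hc
        exact hT.2.2 ((Finset.mem_powersetCard.1 hc).2)
      calc W.card ≤ _ := Finset.card_le_card hsub
        _ = 2 ^ n - (n + 1) := by
          rw [Finset.card_sdiff_of_subset (Finset.subset_univ _), Finset.card_univ, Fintype.card_finset, hQ]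
          congr 1
          rw [Finset.card_insert_of_notMem, Finset.card_powersetCard, Finset.card_univ, hQ]
          · have h1 : n - (n - 1) = 1 := by omega
            rw [← Nat.choose_symm (by omega : n - 1 ≤ n), h1, Nat.choose_one_right]
          · intro hc
            have := (Finset.mem_powersetCard.1 hc).2
            simp only [Finset.card_empty] at this
            omega
    have hlt : n < 2 ^ n := Nat.lt_two_pow_self
    rw [hpsi] at hchain
    omega
  · -- proper case
    push_neg at hS0
    obtain ⟨hSne, hSnu⟩ := hS0
    have hSfne : Sf.Nonempty := by
      obtain ⟨q, hq⟩ := hSne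
      have hqm : q ∈ Sf := by rw [hSf]; simp [hq]
      exact ⟨q, hqm⟩
    have hScfne : Scf.Nonempty := by
      have hex : ∃ q, q ∉ S := by
        by_contra hc
        push_neg at hc
        exact hSnu (Set.eq_univ_of_forall hc)
      obtain ⟨q, hq⟩ := hex
      have hqm : q ∈ Scf := by rw [hScf]; simp [hq]
      exact ⟨q, hqm⟩
    set s := Sf.card with hsdef
    have hs1 : 1 ≤ s := Finset.card_pos.2 hSfne
    have hs2 : s ≤ n - 1 := by
      have := Finset.card_pos.2 hScfne
      omega
    have hScfcard : Scf.card = n - s := by omega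
    have hpsi : Psi n S.ncard = 1 + ∑ k ∈ Finset.Icc 1 s, ∑ l ∈ Finset.Icc 1 (n - s),
        Nat.choose n k * Nat.choose (n - k) l := by
      have hcond : ¬(s = 0 ∨ s = n) := by push_neg; constructor <;> omega
      rw [hs, Psi, if_neg hcond]
    set D0 : Finset (Finset Q × Finset Q) := Finset.univ.filter
      (fun p => Disjoint p.1 p.2 ∧ p.1.Nonempty ∧ p.2.Nonempty ∧ p.1.card ≤ s ∧
        p.2.card ≤ n - s) with hD0
    have hVD0 : ∀ p ∈ V, p ∈ D0 := by
      intro p hp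
      obtain ⟨w, h1, h2, hd⟩ := hVmem p hp
      rw [hD0, Finset.mem_filter]
      refine ⟨Finset.mem_univ _, hd, ?_, ?_, ?_, ?_⟩
      · rw [h1, hX]; exact hSfne.image _
      · rw [h2, hY]; exact hScfne.image _
      · rw [h1, hX]; exact Finset.card_image_le
      · rw [h2, hY, ← hScfcard]; exact Finset.card_image_le
    -- witness pair of total size n - 1
    have hwitness : ∃ p₀ : Finset Q × Finset Q, p₀ ∈ D0 ∧ p₀.1.card + p₀.2.card = n - 1 := by
      set k := min s (n - 2) with hk
      have hk1 : 1 ≤ k := by omega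
      have hks : k ≤ s := min_le_left _ _
      set l := n - 1 - k with hl
      have hl1 : 1 ≤ l := by omega
      have hln : l ≤ n - s := by omega
      have hkn : k ≤ (Finset.univ : Finset Q).card := by
        rw [Finset.card_univ, hQ]; omega
      obtain ⟨X₀, hX₀sub, hX₀card⟩ := Finset.exists_subset_card_eq hkn
      have hlc : l ≤ X₀ᶜ.card := by
        rw [Finset.card_compl, hX₀card, hQ]; omega
      obtain ⟨Y₀, hY₀sub, hY₀card⟩ := Finset.exists_subset_card_eq hlc
      refine ⟨(X₀, Y₀), ?_, by simp only [hX₀card, hY₀card]; omega⟩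
      rw [hD0, Finset.mem_filter]
      refine ⟨Finset.mem_univ _, ?_, ?_, ?_, ?_, ?_⟩
      · exact Finset.disjoint_left.2 fun a ha ha' => (Finset.mem_compl.1 (hY₀sub ha')) ha
      · apply Finset.card_pos.1; rw [hX₀card]; omega
      · apply Finset.card_pos.1; rw [hY₀card]; omega
      · simpa only [hX₀card] using hks
      · simp only [hY₀card]; omega
    obtain ⟨p₀, hp₀D, hp₀card⟩ := hwitness
    have hp₀V : p₀ ∉ V := fun hc => hVcard p₀ hc hp₀card
    have hVss : V ⊆ D0.erase p₀ := fun p hp =>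
      Finset.mem_erase.2 ⟨fun he => hp₀V (he ▸ hp), hVD0 p hp⟩
    have hVle : V.card ≤ D0.card - 1 :=
      le_trans (Finset.card_le_card hVss) (le_of_eq (Finset.card_erase_of_mem hp₀D))
    have hD0pos : 1 ≤ D0.card := Finset.card_pos.2 ⟨p₀, hp₀D⟩
    -- counting D0
    have hD0le : D0.card ≤ ∑ k ∈ Finset.Icc 1 s, ∑ l ∈ Finset.Icc 1 (n - s),
        Nat.choose n k * Nat.choose (n - k) l := by
      have hsub : D0 ⊆ (Finset.Icc 1 s ×ˢ Finset.Icc 1 (n - s)).biUnion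
          (fun kl => (Finset.powersetCard kl.1 (Finset.univ : Finset Q)).biUnion
            (fun Xa => (Finset.powersetCard kl.2 Xaᶜ).image (fun Ya => (Xa, Ya)))) := by
        intro p hp
        rw [hD0, Finset.mem_filter] at hp
        obtain ⟨-, hd, hne1, hne2, hc1, hc2⟩ := hp
        rw [Finset.mem_biUnion]
        refine ⟨(p.1.card, p.2.card), ?_, ?_⟩
        · rw [Finset.mem_product]
          constructor <;> rw [Finset.mem_Icc]
          · exact ⟨Finset.card_pos.2 hne1, hc1⟩
          · exact ⟨Finset.card_pos.2 hne2, hc2⟩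
        · rw [Finset.mem_biUnion]
          refine ⟨p.1, Finset.mem_powersetCard.2 ⟨Finset.subset_univ _, rfl⟩, ?_⟩
          rw [Finset.mem_image]
          refine ⟨p.2, Finset.mem_powersetCard.2 ⟨?_, rfl⟩, rfl⟩
          intro a ha
          exact Finset.mem_compl.2 (fun ha' => (Finset.disjoint_left.1 hd ha') ha)
      calc D0.card ≤ _ := Finset.card_le_card hsub
        _ ≤ ∑ kl ∈ Finset.Icc 1 s ×ˢ Finset.Icc 1 (n - s),
            ((Finset.powersetCard kl.1 (Finset.univ : Finset Q)).biUnion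
              (fun Xa => (Finset.powersetCard kl.2 Xaᶜ).image (fun Ya => (Xa, Ya)))).card :=
          Finset.card_biUnion_le
        _ ≤ ∑ kl ∈ Finset.Icc 1 s ×ˢ Finset.Icc 1 (n - s),
            Nat.choose n kl.1 * Nat.choose (n - kl.1) kl.2 := by
          apply Finset.sum_le_sum
          intro kl _
          calc ((Finset.powersetCard kl.1 (Finset.univ : Finset Q)).biUnion
              (fun Xa => (Finset.powersetCard kl.2 Xaᶜ).image (fun Ya => (Xa, Ya)))).card
              ≤ ∑ Xa ∈ Finset.powersetCard kl.1 (Finset.univ : Finset Q),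
                ((Finset.powersetCard kl.2 Xaᶜ).image (fun Ya => (Xa, Ya))).card :=
              Finset.card_biUnion_le
            _ ≤ ∑ Xa ∈ Finset.powersetCard kl.1 (Finset.univ : Finset Q),
                Nat.choose (n - kl.1) kl.2 := by
              apply Finset.sum_le_sum
              intro Xa hXa
              refine le_trans Finset.card_image_le ?_
              rw [Finset.card_powersetCard, Finset.card_compl,
                (Finset.mem_powersetCard.1 hXa).2, hQ]
            _ = Nat.choose n kl.1 * Nat.choose (n - kl.1) kl.2 := by
              rw [Finset.sum_const, Finset.card_powersetCard, Finset.card_univ, hQ,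
                smul_eq_mul]
        _ = ∑ k ∈ Finset.Icc 1 s, ∑ l ∈ Finset.Icc 1 (n - s),
            Nat.choose n k * Nat.choose (n - k) l := Finset.sum_product _ _ _
    rw [hpsi] at hchain
    omega
end

section
/- Let M = (Q, Σ, δ, q₀, F) be a minimal DFA with |Q| = n > 2. Suppose P(M) is set-transitive and some nonempty word induces a transformation of Q of rank n − 1. Then for every S ⊆ Q the atom A_S is nonempty and has state complexity Ψ(n, |S|); that is, the recognized language is maximally atomic. -/
namespace Statement9Aux

open Set Function

variable {A Q : Type*}

def tr (M : DFA A Q) (w : List A) : Q → Q := fun q => M.evalFrom q w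

def Real (M : DFA A Q) (f : Q → Q) : Prop := ∃ w : List A, tr M w = f

lemma tr_append (M : DFA A Q) (x z : List A) :
    tr M (x ++ z) = tr M z ∘ tr M x := by
  funext q
  simp [tr, DFA.evalFrom_of_append]

lemma real_id (M : DFA A Q) : Real M id := ⟨[], rfl⟩

lemma real_comp {M : DFA A Q} {f g : Q → Q} (hf : Real M f) (hg : Real M g) :
    Real M (g ∘ f) := by
  obtain ⟨u, hu⟩ := hf
  obtain ⟨v, hv⟩ := hg
  exact ⟨u ++ v, by rw [tr_append, hu, hv]⟩

lemma real_iterate {M : DFA A Q} {f : Q → Q} (hf : Real M f) :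
    ∀ m : ℕ, Real M (f^[m])
  | 0 => real_id M
  | (m + 1) => by
      rw [Function.iterate_succ]
      exact real_comp hf (real_iterate hf m)

section Main

variable [Fintype Q] {M : DFA A Q} {n : ℕ}

def SetTrans (M : DFA A Q) (n : ℕ) : Prop :=
  ∀ k : ℕ, 1 ≤ k → k ≤ n → ∀ X Y : Set Q, X.ncard = k → Y.ncard = k →
    ∃ f : Q → Q, Real M f ∧ Function.Bijective f ∧ f '' X = Y

lemma rank_structure (hQ : Fintype.card Q = n) (hn : 2 ≤ n) {g : Q → Q}
    (hg : (Set.range g).ncard = n - 1) :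
    ∃ p q r : Q, p ≠ q ∧ g p = g q ∧ Set.range g = {r}ᶜ ∧
      (∀ x y : Q, g x = g y → x = y ∨ ({x, y} : Set Q) = {p, q}) := by
  have hninj : ¬ Function.Injective g := by
    intro hinj
    have hsurj : Function.Surjective g := (Finite.injective_iff_surjective).mp hinj
    have : Set.range g = Set.univ := Set.range_eq_univ.mpr hsurj
    rw [this, Set.ncard_univ, Nat.card_eq_fintype_card, hQ] at hg
    omega
  rw [Function.not_injective_iff] at hninj
  obtain ⟨p, q, hgpq, hpq⟩ := hninj
  have hne : Set.range g ≠ Set.univ := by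
    intro h
    rw [h, Set.ncard_univ, Nat.card_eq_fintype_card, hQ] at hg; omega
  obtain ⟨r, hr⟩ := (Set.ne_univ_iff_exists_notMem _).mp hne
  have hrange : Set.range g = {r}ᶜ := by
    refine Set.eq_of_subset_of_ncard_le ?_ ?_ (Set.toFinite _)
    · intro u hu
      simp only [Set.mem_compl_iff, Set.mem_singleton_iff]
      rintro rfl; exact hr hu
    · have h1 : ({r} : Set Q).ncard + ({r} : Set Q)ᶜ.ncard = Nat.card Q :=
        Set.ncard_add_ncard_compl _
      rw [Set.ncard_singleton, Nat.card_eq_fintype_card, hQ] at h1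
      rw [hg]; omega
  refine ⟨p, q, r, hpq, hgpq, hrange, ?_⟩
  intro x y hxy
  by_contra hcon
  push_neg at hcon
  obtain ⟨hxyne, hset⟩ := hcon
  have pairset : ∀ u v : Q, u ≠ v → u = p ∨ u = q → v = p ∨ v = q →
      ({u, v} : Set Q) = ({p, q} : Set Q) := by
    rintro u v huv (rfl | rfl) (rfl | rfl)
    · exact absurd rfl huv
    · rfl
    · exact Set.pair_comm _ _
    · exact absurd rfl huv
  have key : ∃ w w' : Q, w ≠ w' ∧ g w = g w' ∧ w ≠ p ∧ w ≠ q := by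
    by_cases hxp : x = p ∨ x = q
    · have hyp : ¬(y = p ∨ y = q) := fun hyq => hset (pairset x y hxyne hxp hyq)
      push_neg at hyp
      exact ⟨y, x, hxyne.symm, hxy.symm, hyp.1, hyp.2⟩
    · push_neg at hxp
      exact ⟨x, y, hxyne, hxy, hxp.1, hxp.2⟩
  obtain ⟨w, w', hww', hgww', hwp, hwq⟩ := key
  have hqw : q ≠ w := fun h => hwq h.symm
  have hsub : Set.range g ⊆ g '' ({q, w} : Set Q)ᶜ := by
    rintro _ ⟨z, rfl⟩
    have hpmem : p ∈ ({q, w} : Set Q)ᶜ := by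
      simp only [Set.mem_compl_iff, Set.mem_insert_iff, Set.mem_singleton_iff]
      push_neg
      exact ⟨hpq, fun h => hwp h.symm⟩
    by_cases hz : z ∈ ({q, w} : Set Q)
    · simp only [Set.mem_insert_iff, Set.mem_singleton_iff] at hz
      rcases hz with h | h
      · exact ⟨p, hpmem, by rw [hgpq, h]⟩
      · by_cases hw'q : w' = q
        · exact ⟨p, hpmem, by rw [hgpq, ← hw'q, ← hgww', h]⟩
        · refine ⟨w', ?_, by rw [← hgww', h]⟩
          simp only [Set.mem_compl_iff, Set.mem_insert_iff, Set.mem_singleton_iff]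
          push_neg
          exact ⟨hw'q, fun h2 => hww' h2.symm⟩
    · exact ⟨z, hz, rfl⟩
  have h2 : ({q, w} : Set Q).ncard = 2 := Set.ncard_pair hqw
  have hcompl : ({q, w} : Set Q)ᶜ.ncard = n - 2 := by
    have h1 : ({q, w} : Set Q).ncard + ({q, w} : Set Q)ᶜ.ncard = Nat.card Q :=
      Set.ncard_add_ncard_compl _
    rw [h2, Nat.card_eq_fintype_card, hQ] at h1
    omega
  have hle : (Set.range g).ncard ≤ n - 2 := by
    calc (Set.range g).ncard ≤ (g '' ({q, w} : Set Q)ᶜ).ncard :=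
          Set.ncard_le_ncard hsub (Set.toFinite _)
      _ ≤ (({q, w} : Set Q)ᶜ).ncard := Set.ncard_image_le (Set.toFinite _)
      _ = n - 2 := hcompl
  rw [hg] at hle
  omega

lemma exists_collapse (hQ : Fintype.card Q = n) (hn : 2 < n)
    (htrans : SetTrans M n)
    (hrank : ∃ g : Q → Q, Real M g ∧ (Set.range g).ncard = n - 1) :
    ∀ a c : Q, a ≠ c → ∃ e : Q → Q, Real M e ∧ e c = a ∧ ∀ x, x ≠ c → e x = x := by
  obtain ⟨g, hgreal, hgrank⟩ := hrank
  obtain ⟨p, q, r, hpq, hgpq, hrange, huniq⟩ := rank_structure hQ (by omega) hgrank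
  intro a c hac
  obtain ⟨σ, hσreal, hσbij, hσim⟩ := htrans 2 (by omega) (by omega) {a, c} {p, q}
    (Set.ncard_pair hac) (Set.ncard_pair hpq)
  obtain ⟨π, hπreal, hπbij, hπim⟩ := htrans 1 le_rfl (by omega) {r} {c}
    (Set.ncard_singleton r) (Set.ncard_singleton c)
  have hπr : π r = c := by
    have : π r ∈ π '' ({r} : Set Q) := ⟨r, rfl, rfl⟩
    rw [hπim] at this
    exact this
  set h : Q → Q := π ∘ g ∘ σ with hh
  have hreal : Real M h := real_comp (real_comp hσreal hgreal) hπreal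
  have hσa : σ a ∈ ({p, q} : Set Q) := hσim ▸ ⟨a, by simp, rfl⟩
  have hσc : σ c ∈ ({p, q} : Set Q) := hσim ▸ ⟨c, by simp, rfl⟩
  have hσac : σ a ≠ σ c := fun h' => hac (hσbij.1 h')
  simp only [Set.mem_insert_iff, Set.mem_singleton_iff] at hσa hσc
  have hgac : g (σ a) = g (σ c) := by
    rcases hσa with h1 | h1 <;> rcases hσc with h2 | h2
    · exact absurd (h1.trans h2.symm) hσac
    · rw [h1, h2]; exact hgpq
    · rw [h1, h2]; exact hgpq.symm
    · exact absurd (h1.trans h2.symm) hσac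
  have hhac : h a = h c := by
    simp only [hh, Function.comp_apply, hgac]
  have hrangeh : Set.range h = {c}ᶜ := by
    have h1 : Set.range h = π '' Set.range g := by
      rw [hh, Set.range_comp, Set.range_comp, Set.range_eq_univ.mpr hσbij.2,
        Set.image_univ]
    rw [h1, hrange, Set.image_compl_eq hπbij, hπim]
  have hinj : ∀ x y : Q, x ≠ c → y ≠ c → h x = h y → x = y := by
    intro x y hx hy hxy
    have hg' : g (σ x) = g (σ y) := hπbij.1 hxy
    rcases huniq _ _ hg' with h' | h'
    · exact hσbij.1 h'
    · have hxm : σ x ∈ σ '' ({a, c} : Set Q) := by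
        rw [hσim, ← h']; exact Set.mem_insert _ _
      have hym : σ y ∈ σ '' ({a, c} : Set Q) := by
        rw [hσim, ← h']; exact Set.mem_insert_of_mem _ rfl
      obtain ⟨u, hu, hux⟩ := hxm
      obtain ⟨v, hv, hvy⟩ := hym
      have hxu : x = u := (hσbij.1 hux).symm
      have hyv : y = v := (hσbij.1 hvy).symm
      simp only [Set.mem_insert_iff, Set.mem_singleton_iff] at hu hv
      rcases hu with rfl | rfl
      · rcases hv with rfl | rfl
        · rw [hxu, hyv]
        · exact absurd hyv hy
      · exact absurd hxu hx
  have hmemT : ∀ x : Q, h x ≠ c := by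
    intro x hx'
    have hm : h x ∈ Set.range h := Set.mem_range_self x
    rw [hrangeh] at hm
    exact hm hx'
  let T := {x : Q // x ≠ c}
  let hhat : T → T := fun t => ⟨h t, hmemT t⟩
  have hinjT : Function.Injective hhat := by
    intro t t' ht
    have := congrArg Subtype.val ht
    exact Subtype.ext (hinj _ _ t.2 t'.2 this)
  have hbijT : Function.Bijective hhat := Finite.injective_iff_bijective.mp hinjT
  let π' : Equiv.Perm T := Equiv.ofBijective hhat hbijT
  have hmpos : 0 < orderOf π' := orderOf_pos π'
  have hpow : π' ^ (orderOf π') = 1 := pow_orderOf_eq_one π'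
  have hiter : ∀ (k : ℕ) (t : T), ((π' ^ k) t : Q) = h^[k] (t : Q) := by
    intro k
    induction k with
    | zero => intro t; simp
    | succ k ih =>
      intro t
      rw [pow_succ, Equiv.Perm.mul_apply, ih (π' t)]
      have hπ't : ((π' t : T) : Q) = h t := rfl
      rw [hπ't, ← Function.iterate_succ_apply]
  set m := orderOf π' with hm
  have hfix : ∀ x : Q, x ≠ c → h^[m] x = x := by
    intro x hx
    have h1 := hiter m ⟨x, hx⟩
    rw [hpow] at h1
    simpa using h1.symm
  refine ⟨h^[m], real_iterate hreal m, ?_, hfix⟩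
  obtain ⟨mm, hmm⟩ : ∃ mm, m = mm + 1 := ⟨m - 1, by omega⟩
  rw [hmm]
  calc h^[mm + 1] c = h^[mm] (h c) := Function.iterate_succ_apply h mm c
    _ = h^[mm] (h a) := by rw [hhac]
    _ = h^[mm + 1] a := (Function.iterate_succ_apply h mm a).symm
    _ = a := by rw [← hmm]; exact hfix a hac

lemma pair_real (hQ : Fintype.card Q = n) (htrans : SetTrans M n)
    (hcol : ∀ a c : Q, a ≠ c → ∃ e : Q → Q, Real M e ∧ e c = a ∧ ∀ x, x ≠ c → e x = x)
    {B : Set Q} (hB1 : 1 ≤ B.ncard) (hB2 : B.ncard < n) :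
    ∀ (d : ℕ) (X Y : Set Q), X.Nonempty → Y.Nonempty → Disjoint X Y →
      X.ncard ≤ B.ncard → Y.ncard ≤ n - B.ncard → n ≤ X.ncard + Y.ncard + d →
      ∃ f : Q → Q, Real M f ∧ f '' B = X ∧ f '' Bᶜ = Y := by
  have base : ∀ X Y : Set Q, X.Nonempty → Y.Nonempty → Disjoint X Y →
      X.ncard ≤ B.ncard → Y.ncard ≤ n - B.ncard → n ≤ X.ncard + Y.ncard →
      ∃ f : Q → Q, Real M f ∧ f '' B = X ∧ f '' Bᶜ = Y := by
    intro X Y hXne hYne hdisj hX hY hfull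
    have hXcard : X.ncard = B.ncard := by omega
    obtain ⟨f, hfreal, hfbij, hfim⟩ := htrans B.ncard hB1 (le_of_lt hB2) B X rfl hXcard
    have hcomp : f '' Bᶜ = Xᶜ := by rw [Set.image_compl_eq hfbij, hfim]
    have hYX : Y = Xᶜ := by
      refine Set.eq_of_subset_of_ncard_le ?_ ?_ (Set.toFinite _)
      · exact Set.subset_compl_iff_disjoint_left.mpr hdisj
      · have h1 : X.ncard + Xᶜ.ncard = n := by
          rw [Set.ncard_add_ncard_compl, Nat.card_eq_fintype_card, hQ]
        omega
    exact ⟨f, hfreal, hfim, by rw [hcomp, hYX]⟩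
  intro d
  induction d with
  | zero =>
    intro X Y h1 h2 h3 h4 h5 h6
    exact base X Y h1 h2 h3 h4 h5 (by omega)
  | succ d ih =>
    intro X Y hXne hYne hdisj hX hY hbound
    by_cases hfull : n ≤ X.ncard + Y.ncard
    · exact base X Y hXne hYne hdisj hX hY hfull
    · push_neg at hfull
      have hne : X ∪ Y ≠ univ := by
        intro h
        have h1 : (X ∪ Y).ncard ≤ X.ncard + Y.ncard := Set.ncard_union_le X Y
        rw [h, Set.ncard_univ, Nat.card_eq_fintype_card, hQ] at h1
        omega
      obtain ⟨c, hc⟩ := (Set.ne_univ_iff_exists_notMem _).mp hne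
      have hcX : c ∉ X := fun h => hc (Or.inl h)
      have hcY : c ∉ Y := fun h => hc (Or.inr h)
      by_cases hl : Y.ncard < n - B.ncard
      · obtain ⟨f, hfreal, hf1, hf2⟩ := ih X (insert c Y) hXne (Set.insert_nonempty _ _)
          (by rw [Set.insert_eq]; exact Set.disjoint_union_right.mpr ⟨Set.disjoint_singleton_right.mpr hcX, hdisj⟩) hX
          (by rw [Set.ncard_insert_of_notMem hcY]; omega)
          (by rw [Set.ncard_insert_of_notMem hcY]; omega)
        obtain ⟨a, ha⟩ := hYne
        have hac : a ≠ c := fun h => hcY (h ▸ ha)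
        obtain ⟨e, hereal, hec, hefix⟩ := hcol a c hac
        have heX : ∀ x ∈ X, e x = id x := fun x hx => hefix x (fun h => hcX (h ▸ hx))
        have heY : ∀ x ∈ Y, e x = id x := fun x hx => hefix x (fun h => hcY (h ▸ hx))
        refine ⟨e ∘ f, real_comp hfreal hereal, ?_, ?_⟩
        · rw [Set.image_comp, hf1, Set.image_congr heX, Set.image_id]
        · rw [Set.image_comp, hf2, Set.image_insert_eq, hec, Set.image_congr heY,
            Set.image_id, Set.insert_eq_self.mpr ha]
      · push_neg at hl
        have hk : X.ncard < B.ncard := by omega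
        obtain ⟨f, hfreal, hf1, hf2⟩ := ih (insert c X) Y (Set.insert_nonempty _ _) hYne
          (by rw [Set.insert_eq]; exact Set.disjoint_union_left.mpr ⟨Set.disjoint_singleton_left.mpr hcY, hdisj⟩)
          (by rw [Set.ncard_insert_of_notMem hcX]; omega) hY
          (by rw [Set.ncard_insert_of_notMem hcX]; omega)
        obtain ⟨a, ha⟩ := hXne
        have hac : a ≠ c := fun h => hcX (h ▸ ha)
        obtain ⟨e, hereal, hec, hefix⟩ := hcol a c hac
        have heX : ∀ x ∈ X, e x = id x := fun x hx => hefix x (fun h => hcX (h ▸ hx))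
        have heY : ∀ x ∈ Y, e x = id x := fun x hx => hefix x (fun h => hcY (h ▸ hx))
        refine ⟨e ∘ f, real_comp hfreal hereal, ?_, ?_⟩
        · rw [Set.image_comp, hf1, Set.image_insert_eq, hec, Set.image_congr heX,
            Set.image_id, Set.insert_eq_self.mpr ha]
        · rw [Set.image_comp, hf2, Set.image_congr heY, Set.image_id]

lemma image_real (hQ : Fintype.card Q = n)
    (hcol : ∀ a c : Q, a ≠ c → ∃ e : Q → Q, Real M e ∧ e c = a ∧ ∀ x, x ≠ c → e x = x) :
    ∀ (m : ℕ) (I : Set Q), I.Nonempty → n ≤ I.ncard + m →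
      ∃ f : Q → Q, Real M f ∧ f '' univ = I := by
  intro m
  induction m with
  | zero =>
    intro I hIne hIb
    have : I = univ := by
      refine Set.eq_of_subset_of_ncard_le (Set.subset_univ I) ?_ (Set.toFinite _)
      rw [Set.ncard_univ, Nat.card_eq_fintype_card, hQ]; omega
    exact ⟨id, real_id M, by rw [Set.image_id, this]⟩
  | succ m ih =>
    intro I hIne hIb
    by_cases hfull : n ≤ I.ncard + m
    · exact ih I hIne hfull
    · push_neg at hfull
      have hne : I ≠ univ := by
        intro h
        rw [h, Set.ncard_univ, Nat.card_eq_fintype_card, hQ] at hfull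
        omega
      obtain ⟨c, hc⟩ := (Set.ne_univ_iff_exists_notMem _).mp hne
      obtain ⟨f, hfreal, hfim⟩ := ih (insert c I) (Set.insert_nonempty _ _)
        (by rw [Set.ncard_insert_of_notMem hc]; omega)
      obtain ⟨a, ha⟩ := hIne
      have hac : a ≠ c := fun h => hc (h ▸ ha)
      obtain ⟨e, hereal, hec, hefix⟩ := hcol a c hac
      have heI : ∀ x ∈ I, e x = id x := fun x hx => hefix x (fun h => hc (h ▸ hx))
      refine ⟨e ∘ f, real_comp hfreal hereal, ?_⟩
      rw [Set.image_comp, hfim, Set.image_insert_eq, hec, Set.image_congr heI,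
        Set.image_id, Set.insert_eq_self.mpr ha]

lemma accept_proper [Fintype A] (hQ : Fintype.card Q = n) (hn : 2 < n)
    (hmin : IsMinimal M) : ∃ y x : Q, y ∈ M.accept ∧ x ∉ M.accept := by
  have hcard2 : 1 < Fintype.card Q := by omega
  obtain ⟨p, q, hpq⟩ := Fintype.exists_pair_of_one_lt_card hcard2
  obtain ⟨w0, hw0⟩ := hmin.2 p q hpq
  by_cases h : M.evalFrom p w0 ∈ M.accept
  · exact ⟨_, _, h, fun h' => hw0 (iff_of_true h h')⟩
  · have hq : M.evalFrom q w0 ∈ M.accept := by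
      by_contra h'
      exact hw0 (iff_of_false h h')
    exact ⟨_, _, hq, h⟩

lemma atoms_nonempty [Fintype A] (hQ : Fintype.card Q = n) (hn : 2 < n)
    (hmin : IsMinimal M) (htrans : SetTrans M n)
    (hcol : ∀ a c : Q, a ≠ c → ∃ e : Q → Q, Real M e ∧ e c = a ∧ ∀ x, x ≠ c → e x = x) :
    ∀ T : Set Q, ∃ w : List A, ∀ q, (M.evalFrom q w ∈ M.accept ↔ q ∈ T) := by
  intro T
  obtain ⟨y, x, hy, hx⟩ := accept_proper hQ hn hmin
  have hxy : x ≠ y := fun h => hx (h ▸ hy)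
  by_cases hT0 : T = ∅
  · obtain ⟨f, hfreal, hfim⟩ := image_real hQ hcol n {x} (Set.singleton_nonempty x)
      (by rw [Set.ncard_singleton]; omega)
    obtain ⟨w, hw⟩ := hfreal
    refine ⟨w, fun q => ?_⟩
    have he : M.evalFrom q w = f q := congrFun hw q
    have hfq : f q ∈ ({x} : Set Q) := hfim ▸ ⟨q, Set.mem_univ q, rfl⟩
    rw [Set.mem_singleton_iff] at hfq
    rw [he, hfq, hT0]
    exact iff_of_false hx (Set.notMem_empty q)
  by_cases hT1 : T = univ
  · obtain ⟨f, hfreal, hfim⟩ := image_real hQ hcol n {y} (Set.singleton_nonempty y)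
      (by rw [Set.ncard_singleton]; omega)
    obtain ⟨w, hw⟩ := hfreal
    refine ⟨w, fun q => ?_⟩
    have he : M.evalFrom q w = f q := congrFun hw q
    have hfq : f q ∈ ({y} : Set Q) := hfim ▸ ⟨q, Set.mem_univ q, rfl⟩
    rw [Set.mem_singleton_iff] at hfq
    rw [he, hfq, hT1]
    exact iff_of_true hy (Set.mem_univ q)
  · have hTne : T.Nonempty := Set.nonempty_iff_ne_empty.mpr hT0
    have hb1 : 1 ≤ T.ncard := (Set.ncard_pos (Set.toFinite _)).mpr hTne
    have hb2 : T.ncard < n := by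
      have h1 : T.ncard < (univ : Set Q).ncard :=
        Set.ncard_lt_ncard (Set.ssubset_univ_iff.mpr hT1) (Set.toFinite _)
      rwa [Set.ncard_univ, Nat.card_eq_fintype_card, hQ] at h1
    obtain ⟨f, hfreal, hfT, hfTc⟩ := pair_real hQ htrans hcol hb1 hb2 n {y} {x}
      (Set.singleton_nonempty y) (Set.singleton_nonempty x)
      (Set.disjoint_singleton.mpr (fun h => hxy h.symm))
      (by rw [Set.ncard_singleton]; omega)
      (by rw [Set.ncard_singleton]; omega)
      (by rw [Set.ncard_singleton]; omega)
    obtain ⟨w, hw⟩ := hfreal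
    refine ⟨w, fun q => ?_⟩
    have he : M.evalFrom q w = f q := congrFun hw q
    by_cases hq : q ∈ T
    · have hfq : f q ∈ ({y} : Set Q) := hfT ▸ ⟨q, hq, rfl⟩
      rw [Set.mem_singleton_iff] at hfq
      rw [he, hfq]
      exact iff_of_true hy hq
    · have hfq : f q ∈ ({x} : Set Q) := hfTc ▸ ⟨q, hq, rfl⟩
      rw [Set.mem_singleton_iff] at hfq
      rw [he, hfq]
      exact iff_of_false hx hq


section Nerode

set_option linter.unusedSectionVars false

open Classical in
/-- The invariant attached to a word: the pair of images of `S` and `Sᶜ`,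
if disjoint, and `none` otherwise. -/
noncomputable def Phi (M : DFA A Q) (S : Set Q) (x : List A) : Option (Set Q × Set Q) :=
  if Disjoint (tr M x '' S) (tr M x '' Sᶜ) then some (tr M x '' S, tr M x '' Sᶜ) else none

lemma mem_atom_append {M : DFA A Q} {S : Set Q} (x z : List A) :
    x ++ z ∈ atom M S ↔
      (tr M x '' S ⊆ tr M z ⁻¹' M.accept ∧ tr M x '' Sᶜ ⊆ (tr M z ⁻¹' M.accept)ᶜ) := by
  have hev : ∀ q, M.evalFrom q (x ++ z) = tr M z (tr M x q) := fun q => by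
    simp [tr, DFA.evalFrom_of_append]
  constructor
  · intro h
    constructor
    · rintro _ ⟨q, hq, rfl⟩
      have h2 : M.evalFrom q (x ++ z) ∈ M.accept := (h q).mpr hq
      rw [hev q] at h2
      exact h2
    · rintro _ ⟨q, hq, rfl⟩
      intro hmem
      rw [Set.mem_preimage] at hmem
      rw [← hev q] at hmem
      exact hq ((h q).mp hmem)
  · rintro ⟨h1, h2⟩ q
    rw [hev q]
    constructor
    · intro hm
      by_contra hq
      exact h2 ⟨q, hq, rfl⟩ hm
    · intro hq
      exact h1 ⟨q, hq, rfl⟩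

lemma phi_sound {M : DFA A Q} {S : Set Q} {x y : List A}
    (h : Phi M S x = Phi M S y) : (rightCong (atom M S)).r x y := by
  intro z
  rw [mem_atom_append, mem_atom_append]
  unfold Phi at h
  by_cases h1 : Disjoint (tr M x '' S) (tr M x '' Sᶜ) <;>
    by_cases h2 : Disjoint (tr M y '' S) (tr M y '' Sᶜ)
  · rw [if_pos h1, if_pos h2, Option.some_inj, Prod.mk.injEq] at h
    rw [h.1, h.2]
  · rw [if_pos h1, if_neg h2] at h
    exact absurd h (by simp)
  · rw [if_neg h1, if_pos h2] at h
    exact absurd h (by simp)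
  · constructor
    · rintro ⟨ha, hb⟩
      exact absurd (Set.disjoint_of_subset ha hb disjoint_compl_right) h1
    · rintro ⟨ha, hb⟩
      exact absurd (Set.disjoint_of_subset ha hb disjoint_compl_right) h2

lemma phi_complete {M : DFA A Q} {S : Set Q}
    (hatoms : ∀ T : Set Q, ∃ z : List A, tr M z ⁻¹' M.accept = T) {x y : List A}
    (h : (rightCong (atom M S)).r x y) : Phi M S x = Phi M S y := by
  have main : ∀ u v : List A, (rightCong (atom M S)).r u v →
      Disjoint (tr M u '' S) (tr M u '' Sᶜ) →
      tr M v '' S ⊆ tr M u '' S ∧ tr M v '' Sᶜ ⊆ tr M u '' Sᶜ := by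
    intro u v huv hdu
    constructor
    · obtain ⟨z, hz⟩ := hatoms (tr M u '' S)
      have hu : u ++ z ∈ atom M S := (mem_atom_append u z).mpr
        (by rw [hz]; exact ⟨subset_rfl, Set.subset_compl_iff_disjoint_left.mpr hdu⟩)
      have hv := (mem_atom_append v z).mp ((huv z).mp hu)
      rw [hz] at hv
      exact hv.1
    · obtain ⟨z, hz⟩ := hatoms ((tr M u '' Sᶜ)ᶜ)
      have hu : u ++ z ∈ atom M S := (mem_atom_append u z).mpr
        (by rw [hz, compl_compl]
            exact ⟨Set.subset_compl_iff_disjoint_right.mpr hdu, subset_rfl⟩)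
      have hv := (mem_atom_append v z).mp ((huv z).mp hu)
      rw [hz, compl_compl] at hv
      exact hv.2
  have hsymm : (rightCong (atom M S)).r y x := fun z => (h z).symm
  unfold Phi
  by_cases h1 : Disjoint (tr M x '' S) (tr M x '' Sᶜ) <;>
    by_cases h2 : Disjoint (tr M y '' S) (tr M y '' Sᶜ)
  · rw [if_pos h1, if_pos h2]
    obtain ⟨ha, hb⟩ := main x y h h1
    obtain ⟨hc, hd⟩ := main y x hsymm h2
    rw [Option.some_inj, Prod.mk.injEq]
    exact ⟨subset_antisymm hc ha, subset_antisymm hd hb⟩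
  · exfalso
    obtain ⟨z, hz⟩ := hatoms (tr M x '' S)
    have hu : x ++ z ∈ atom M S := (mem_atom_append x z).mpr
      (by rw [hz]; exact ⟨subset_rfl, Set.subset_compl_iff_disjoint_left.mpr h1⟩)
    have hv := (mem_atom_append y z).mp ((h z).mp hu)
    exact h2 (Set.disjoint_of_subset hv.1 hv.2 disjoint_compl_right)
  · exfalso
    obtain ⟨z, hz⟩ := hatoms (tr M y '' S)
    have hu : y ++ z ∈ atom M S := (mem_atom_append y z).mpr
      (by rw [hz]; exact ⟨subset_rfl, Set.subset_compl_iff_disjoint_left.mpr h2⟩)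
    have hv := (mem_atom_append x z).mp ((hsymm z).mp hu)
    exact h1 (Set.disjoint_of_subset hv.1 hv.2 disjoint_compl_right)
  · rw [if_neg h1, if_neg h2]

lemma card_classes {M : DFA A Q} {S : Set Q}
    (hatoms : ∀ T : Set Q, ∃ z : List A, tr M z ⁻¹' M.accept = T) :
    stateComplexity (atom M S) = (Set.range (Phi M S)).ncard := by
  let F : Quotient (rightCong (atom M S)) → Option (Set Q × Set Q) :=
    Quotient.lift (Phi M S) (fun _ _ h => phi_complete hatoms h)
  have hinj : Function.Injective F := by
    intro a b
    refine Quotient.inductionOn₂ a b ?_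
    intro x y hxy
    exact Quotient.sound (phi_sound hxy)
  have hr : Set.range F = Set.range (Phi M S) := by
    ext o
    constructor
    · rintro ⟨a, rfl⟩
      induction a using Quotient.ind with
      | _ x => exact ⟨x, rfl⟩
    · rintro ⟨x, rfl⟩
      exact ⟨Quotient.mk _ x, rfl⟩
  rw [stateComplexity, ← Nat.card_range_of_injective hinj, hr, Nat.card_coe_set_eq]

end Nerode



open Finset in
lemma count_pairs {Q : Type*} [Fintype Q] [DecidableEq Q] {n : ℕ}
    (hc : Fintype.card Q = n) (s : ℕ) :
    {p : Set Q × Set Q | p.1.Nonempty ∧ p.2.Nonempty ∧ Disjoint p.1 p.2 ∧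
      p.1.ncard ≤ s ∧ p.2.ncard ≤ n - s}.ncard
    = ∑ k ∈ Finset.Icc 1 s, ∑ l ∈ Finset.Icc 1 (n - s),
        Nat.choose n k * Nat.choose (n - k) l := by
  classical
  set P : Finset (Finset Q × Finset Q) := Finset.univ.filter (fun p =>
    p.1.Nonempty ∧ p.2.Nonempty ∧ Disjoint p.1 p.2 ∧ p.1.card ≤ s ∧ p.2.card ≤ n - s)
    with hP
  have hset : {p : Set Q × Set Q | p.1.Nonempty ∧ p.2.Nonempty ∧ Disjoint p.1 p.2 ∧
      p.1.ncard ≤ s ∧ p.2.ncard ≤ n - s}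
      = (fun p : Finset Q × Finset Q => ((p.1 : Set Q), (p.2 : Set Q))) '' (↑P) := by
    ext ⟨X, Y⟩
    simp only [Set.mem_setOf_eq, Set.mem_image, Finset.mem_coe, hP, Finset.mem_filter,
      Finset.mem_univ, true_and, Prod.exists, Prod.mk.injEq]
    constructor
    · rintro ⟨h1, h2, h3, h4, h5⟩
      refine ⟨X.toFinset, Y.toFinset, ⟨?_, ?_, ?_, ?_, ?_⟩, ?_, ?_⟩
      · rwa [Set.toFinset_nonempty]
      · rwa [Set.toFinset_nonempty]
      · rwa [Set.disjoint_toFinset]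
      · rwa [← Set.ncard_eq_toFinset_card']
      · rwa [← Set.ncard_eq_toFinset_card']
      · exact Set.coe_toFinset X
      · exact Set.coe_toFinset Y
    · rintro ⟨Xf, Yf, ⟨h1, h2, h3, h4, h5⟩, hX, hY⟩
      subst hX; subst hY
      refine ⟨by rwa [Finset.coe_nonempty], by rwa [Finset.coe_nonempty],
        by rwa [Finset.disjoint_coe], ?_, ?_⟩
      · rwa [Set.ncard_coe_finset]
      · rwa [Set.ncard_coe_finset]
  have hinj : Function.Injective
      (fun p : Finset Q × Finset Q => ((p.1 : Set Q), (p.2 : Set Q))) := by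
    intro p q h
    rw [Prod.mk.injEq] at h
    exact Prod.ext (Finset.coe_injective h.1) (Finset.coe_injective h.2)
  rw [hset, Set.ncard_image_of_injective _ hinj, Set.ncard_coe_finset]
  have hmem1 : ∀ p ∈ P, (p.1.card, p.2.card) ∈ Finset.Icc 1 s ×ˢ Finset.Icc 1 (n - s) := by
    intro p hp
    simp only [hP, Finset.mem_filter, Finset.mem_univ, true_and] at hp
    obtain ⟨h1, h2, _, h4, h5⟩ := hp
    simp only [Finset.mem_product, Finset.mem_Icc]
    exact ⟨⟨h1.card_pos, h4⟩, ⟨h2.card_pos, h5⟩⟩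
  rw [Finset.card_eq_sum_card_fiberwise hmem1, Finset.sum_product]
  apply Finset.sum_congr rfl
  intro k hk
  apply Finset.sum_congr rfl
  intro l hl
  simp only [Finset.mem_Icc] at hk hl
  have hPf : P.filter (fun p => (p.1.card, p.2.card) = (k, l))
      = Finset.univ.filter
        (fun p : Finset Q × Finset Q => Disjoint p.1 p.2 ∧ p.1.card = k ∧ p.2.card = l) := by
    rw [hP, Finset.filter_filter]
    apply Finset.filter_congr
    intro p _
    simp only [Prod.mk.injEq]
    constructor
    · rintro ⟨⟨_, _, h3, _, _⟩, h6, h7⟩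
      exact ⟨h3, h6, h7⟩
    · rintro ⟨h3, h6, h7⟩
      refine ⟨⟨?_, ?_, h3, ?_, ?_⟩, h6, h7⟩
      · rw [← Finset.card_pos, h6]; omega
      · rw [← Finset.card_pos, h7]; omega
      · rw [h6]; exact hk.2
      · rw [h7]; exact hl.2
  rw [hPf]
  have hmem2 : ∀ p ∈ Finset.univ.filter
      (fun p : Finset Q × Finset Q => Disjoint p.1 p.2 ∧ p.1.card = k ∧ p.2.card = l),
      p.1 ∈ Finset.powersetCard k Finset.univ := by
    intro p hp
    simp only [Finset.mem_filter, Finset.mem_univ, true_and] at hp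
    rw [Finset.mem_powersetCard_univ]
    exact hp.2.1
  rw [Finset.card_eq_sum_card_fiberwise hmem2]
  have hfiber : ∀ X ∈ Finset.powersetCard k Finset.univ,
      ((Finset.univ.filter
        (fun p : Finset Q × Finset Q => Disjoint p.1 p.2 ∧ p.1.card = k ∧ p.2.card = l)).filter
        (fun p => p.1 = X)).card = Nat.choose (n - k) l := by
    intro X hX
    have hXcard : X.card = k := Finset.mem_powersetCard_univ.mp hX
    have hbij : ((Finset.univ.filter
        (fun p : Finset Q × Finset Q => Disjoint p.1 p.2 ∧ p.1.card = k ∧ p.2.card = l)).filter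
        (fun p => p.1 = X)).card = (Finset.powersetCard l Xᶜ).card := by
      apply Finset.card_bij (fun p _ => p.2)
      · intro p hp
        simp only [Finset.mem_filter, Finset.mem_univ, true_and] at hp
        obtain ⟨⟨hd, _, h7⟩, h8⟩ := hp
        rw [Finset.mem_powersetCard]
        refine ⟨?_, h7⟩
        intro y hy
        rw [Finset.mem_compl]
        intro hyX
        exact Finset.disjoint_left.mp hd (h8 ▸ hyX) hy
      · intro p hp q hq h2
        simp only [Finset.mem_filter] at hp hq
        exact Prod.ext (hp.2.trans hq.2.symm) h2
      · intro Y hY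
        rw [Finset.mem_powersetCard] at hY
        refine ⟨(X, Y), ?_, rfl⟩
        simp only [Finset.mem_filter, Finset.mem_univ, true_and]
        refine ⟨⟨?_, hXcard, hY.2⟩, trivial⟩
        rw [Finset.disjoint_left]
        intro a haX haY
        have := hY.1 haY
        rw [Finset.mem_compl] at this
        exact this haX
    rw [hbij, Finset.card_powersetCard, Finset.card_compl, hXcard, hc]
  rw [Finset.sum_congr rfl hfiber, Finset.sum_const, Finset.card_powersetCard,
    Finset.card_univ, hc, smul_eq_mul]

lemma ncard_nonempty_sets (hQ : Fintype.card Q = n) :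
    {I : Set Q | I.Nonempty}.ncard = 2 ^ n - 1 := by
  have h : {I : Set Q | I.Nonempty} = ({(∅ : Set Q)} : Set (Set Q))ᶜ := by
    ext I
    simp [Set.nonempty_iff_ne_empty]
  rw [h]
  have h1 := Set.ncard_add_ncard_compl ({(∅ : Set Q)} : Set (Set Q))
  rw [Set.ncard_singleton, Nat.card_eq_fintype_card, Fintype.card_set, hQ] at h1
  omega

lemma range_phi_middle (hQ : Fintype.card Q = n) (htrans : SetTrans M n)
    (hcol : ∀ a c : Q, a ≠ c → ∃ e : Q → Q, Real M e ∧ e c = a ∧ ∀ x, x ≠ c → e x = x)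
    {S : Set Q} (hS1 : S.Nonempty) (hS2 : Sᶜ.Nonempty) :
    Set.range (Phi M S) = insert none (some '' {p : Set Q × Set Q |
      p.1.Nonempty ∧ p.2.Nonempty ∧ Disjoint p.1 p.2 ∧ p.1.ncard ≤ S.ncard ∧
      p.2.ncard ≤ n - S.ncard}) := by
  have hadd := Set.ncard_add_ncard_compl S
  rw [Nat.card_eq_fintype_card, hQ] at hadd
  have hSc : Sᶜ.ncard = n - S.ncard := by omega
  have hb1 : 1 ≤ S.ncard := (Set.ncard_pos (Set.toFinite _)).mpr hS1
  have hb2 : S.ncard < n := by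
    have h2 : 1 ≤ Sᶜ.ncard := (Set.ncard_pos (Set.toFinite _)).mpr hS2
    omega
  ext o
  constructor
  · rintro ⟨x, rfl⟩
    unfold Phi
    by_cases h1 : Disjoint (tr M x '' S) (tr M x '' Sᶜ)
    · rw [if_pos h1]
      refine Set.mem_insert_of_mem _
        ⟨(tr M x '' S, tr M x '' Sᶜ), ⟨hS1.image _, hS2.image _, h1, ?_, ?_⟩, rfl⟩
      · exact Set.ncard_image_le (Set.toFinite _)
      · exact hSc ▸ Set.ncard_image_le (Set.toFinite _)
    · rw [if_neg h1]
      exact Set.mem_insert _ _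
  · intro ho
    rcases Set.mem_insert_iff.mp ho with rfl | ⟨⟨X, Y⟩, ⟨hXne, hYne, hdisj, hX, hY⟩, rfl⟩
    · obtain ⟨v, hv⟩ := hS1
      obtain ⟨f, hfreal, hfim⟩ := image_real hQ hcol n {v} (Set.singleton_nonempty v)
        (by rw [Set.ncard_singleton]; omega)
      obtain ⟨w, hw⟩ := hfreal
      refine ⟨w, ?_⟩
      have hconst : ∀ q : Q, f q = v := by
        intro q
        have : f q ∈ ({v} : Set Q) := hfim ▸ ⟨q, Set.mem_univ q, rfl⟩
        simpa using this
      have hnd : ¬ Disjoint (tr M w '' S) (tr M w '' Sᶜ) := by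
        rw [hw, Set.not_disjoint_iff]
        obtain ⟨u, hu⟩ := hS2
        exact ⟨v, ⟨v, hv, hconst v⟩, ⟨u, hu, hconst u⟩⟩
      unfold Phi
      rw [if_neg hnd]
    · obtain ⟨f, hfreal, hf1, hf2⟩ := pair_real hQ htrans hcol hb1 hb2 n X Y hXne hYne
        hdisj hX hY (by omega)
      obtain ⟨w, hw⟩ := hfreal
      refine ⟨w, ?_⟩
      unfold Phi
      rw [hw, hf1, hf2, if_pos hdisj]

lemma range_phi_empty (hQ : Fintype.card Q = n) (hn : 0 < n)
    (hcol : ∀ a c : Q, a ≠ c → ∃ e : Q → Q, Real M e ∧ e c = a ∧ ∀ x, x ≠ c → e x = x) :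
    Set.range (Phi M (∅ : Set Q))
      = (fun I : Set Q => some ((∅ : Set Q), I)) '' {I : Set Q | I.Nonempty} := by
  have hQne : Nonempty Q := Fintype.card_pos_iff.mp (by omega)
  ext o
  constructor
  · rintro ⟨x, rfl⟩
    unfold Phi
    rw [Set.image_empty, Set.compl_empty, if_pos (by simp)]
    exact ⟨tr M x '' Set.univ, Set.Nonempty.image _ Set.univ_nonempty, rfl⟩
  · rintro ⟨I, hI, rfl⟩
    obtain ⟨f, hfreal, hfim⟩ := image_real hQ hcol n I hI (by omega)
    obtain ⟨w, hw⟩ := hfreal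
    refine ⟨w, ?_⟩
    unfold Phi
    rw [hw, Set.image_empty, Set.compl_empty, hfim, if_pos (by simp)]

lemma range_phi_univ (hQ : Fintype.card Q = n) (hn : 0 < n)
    (hcol : ∀ a c : Q, a ≠ c → ∃ e : Q → Q, Real M e ∧ e c = a ∧ ∀ x, x ≠ c → e x = x) :
    Set.range (Phi M (Set.univ : Set Q))
      = (fun I : Set Q => some (I, (∅ : Set Q))) '' {I : Set Q | I.Nonempty} := by
  have hQne : Nonempty Q := Fintype.card_pos_iff.mp (by omega)
  ext o
  constructor
  · rintro ⟨x, rfl⟩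
    unfold Phi
    rw [Set.compl_univ, Set.image_empty, if_pos (by simp)]
    exact ⟨tr M x '' Set.univ, Set.Nonempty.image _ Set.univ_nonempty, rfl⟩
  · rintro ⟨I, hI, rfl⟩
    obtain ⟨f, hfreal, hfim⟩ := image_real hQ hcol n I hI (by omega)
    obtain ⟨w, hw⟩ := hfreal
    refine ⟨w, ?_⟩
    unfold Phi
    rw [hw, Set.compl_univ, Set.image_empty, hfim, if_pos (by simp)]


end Main

end Statement9Aux

/-- if `P(M)` is set-transitive and some nonempty word induces a
transformation of rank `n - 1`, where `M` is a minimal DFA with `n > 2` states,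
then every atom `A_S` is nonempty and has state complexity `Ψ(n, |S|)`,
i.e. the recognized language is maximally atomic. -/
theorem statement9 {A Q : Type*} [Fintype A] [Fintype Q] (M : DFA A Q)
    (n : ℕ) (hQ : Fintype.card Q = n) (hn : 2 < n) (hmin : IsMinimal M)
    (htrans : ∀ k : ℕ, 1 ≤ k → k ≤ n → ∀ X Y : Set Q, X.ncard = k → Y.ncard = k →
      ∃ w : List A, Function.Bijective (fun q => M.evalFrom q w) ∧
        (fun q => M.evalFrom q w) '' X = Y)
    (hrank : ∃ w : List A, w ≠ [] ∧
      (Set.range (fun q => M.evalFrom q w)).ncard = n - 1) :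
    ∀ S : Set Q, (atom M S).Nonempty ∧
      stateComplexity (atom M S) = Psi n S.ncard := by
  classical
  intro S
  have htrans' : Statement9Aux.SetTrans M n := by
    intro k hk1 hk2 X Y hX hY
    obtain ⟨w, hbij, him⟩ := htrans k hk1 hk2 X Y hX hY
    exact ⟨fun q => M.evalFrom q w, ⟨w, rfl⟩, hbij, him⟩
  have hrank' : ∃ g : Q → Q, Statement9Aux.Real M g ∧ (Set.range g).ncard = n - 1 := by
    obtain ⟨w, -, hw⟩ := hrank
    exact ⟨fun q => M.evalFrom q w, ⟨w, rfl⟩, hw⟩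
  have hcol := Statement9Aux.exists_collapse hQ hn htrans' hrank'
  have hatoms := Statement9Aux.atoms_nonempty hQ hn hmin htrans' hcol
  have hatoms' : ∀ T : Set Q, ∃ z : List A, Statement9Aux.tr M z ⁻¹' M.accept = T := by
    intro T
    obtain ⟨z, hz⟩ := hatoms T
    exact ⟨z, Set.ext fun q => hz q⟩
  refine ⟨?_, ?_⟩
  · obtain ⟨w, hw⟩ := hatoms S
    exact ⟨w, hw⟩
  · rw [Statement9Aux.card_classes hatoms']
    by_cases hS0 : S = ∅
    · subst hS0
      rw [Statement9Aux.range_phi_empty hQ (by omega) hcol,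
        Set.ncard_image_of_injective _ (fun a b h => by simpa using h),
        Statement9Aux.ncard_nonempty_sets hQ, Set.ncard_empty]
      simp [Psi]
    by_cases hSu : S = Set.univ
    · subst hSu
      rw [Statement9Aux.range_phi_univ hQ (by omega) hcol,
        Set.ncard_image_of_injective _ (fun a b h => by simpa using h),
        Statement9Aux.ncard_nonempty_sets hQ, Set.ncard_univ, Nat.card_eq_fintype_card, hQ]
      rw [Psi, if_pos (Or.inr rfl)]
    · have hS1 : S.Nonempty := Set.nonempty_iff_ne_empty.mpr hS0
      have hS2 : Sᶜ.Nonempty := by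
        rw [Set.nonempty_compl]
        exact hSu
      have hb1 : 1 ≤ S.ncard := (Set.ncard_pos (Set.toFinite _)).mpr hS1
      have hb2 : S.ncard < n := by
        have h2 : 1 ≤ Sᶜ.ncard := (Set.ncard_pos (Set.toFinite _)).mpr hS2
        have hadd := Set.ncard_add_ncard_compl S
        rw [Nat.card_eq_fintype_card, hQ] at hadd
        omega
      rw [Statement9Aux.range_phi_middle hQ htrans' hcol hS1 hS2,
        Set.ncard_insert_of_notMem (by rintro ⟨p, -, h⟩; simp at h) (Set.toFinite _),
        Set.ncard_image_of_injective _ (Option.some_injective _),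
        Statement9Aux.count_pairs hQ S.ncard, Psi, if_neg (by push_neg; omega)]
      omega
end

section
/- Let M = (Q, Σ, δ, q₀, F) be a minimal DFA with |Q| = n ≥ 3 recognizing L. The following are equivalent: (1) L is maximally atomic (A_S is nonempty for every S ⊆ Q and each A_S has state complexity Ψ(n, |S|)); (2) every nonempty atom A_S has state complexity Ψ(n, |S|); (3) some nonempty word induces a transformation of Q of rank n − 1, and P(M) is set-transitive. -/
noncomputable section
namespace S10
set_option linter.unusedSectionVars false

open Finset Function

attribute [local instance] Classical.propDecidable

variable {A Q : Type*} [Fintype A] [Fintype Q]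

/-- The transformation of the state set induced by a word. -/
def ev (M : DFA A Q) (w : List A) : Q → Q := fun q => M.evalFrom q w

lemma ev_nil (M : DFA A Q) : ev M ([] : List A) = id := rfl

lemma ev_append (M : DFA A Q) (u v : List A) : ev M (u ++ v) = ev M v ∘ ev M u := by
  funext q; simp [ev, DFA.evalFrom_of_append]

/-- The left quotient of a language by a word. -/
def quotLang (K : Set (List A)) (x : List A) : Set (List A) := {z | x ++ z ∈ K}

lemma stateComplexity_eq_ncard_range (K : Set (List A)) :
    stateComplexity K = (Set.range (quotLang K)).ncard := by
  have key : ∀ x y : List A, (rightCong K).r x y ↔ quotLang K x = quotLang K y := by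
    intro x y
    constructor
    · intro h; ext z; exact h z
    · intro h z; exact Set.ext_iff.mp h z
  have hbij : Function.Bijective
      (Quotient.lift (fun x => (⟨quotLang K x, x, rfl⟩ : Set.range (quotLang K)))
        (fun x y hxy => Subtype.ext ((key x y).mp hxy))) := by
    constructor
    · refine Quotient.ind₂ ?_
      intro x y h
      exact Quotient.sound ((key x y).mpr (congrArg Subtype.val h))
    · rintro ⟨-, x, rfl⟩
      exact ⟨Quotient.mk _ x, rfl⟩
  rw [stateComplexity, Nat.card_congr (Equiv.ofBijective _ hbij), Nat.card_coe_set_eq]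

variable (M : DFA A Q)

/-- The pair of images of `S` and `Sᶜ` under the transformation of a word. -/
def pairOf (S : Finset Q) (x : List A) : Finset Q × Finset Q :=
  (S.image (ev M x), Sᶜ.image (ev M x))

/-- The language determined by a pair of sets of states: words mapping all of `X`
into final states and all of `Y` into non-final states. -/
def DL (X Y : Finset Q) : Set (List A) :=
  {z | (∀ q ∈ X, M.evalFrom q z ∈ M.accept) ∧ (∀ q ∈ Y, M.evalFrom q z ∉ M.accept)}

lemma atom_eq_DL (S : Finset Q) : atom M (↑S) = DL M S Sᶜ := by
  ext w
  simp only [atom, DL, Set.mem_setOf_eq, Finset.mem_coe, Finset.mem_compl]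
  constructor
  · intro h; exact ⟨fun q hq => (h q).mpr hq, fun q hq hacc => hq ((h q).mp hacc)⟩
  · intro ⟨h1, h2⟩ q
    constructor
    · intro hacc; by_contra hq; exact h2 q hq hacc
    · exact h1 q

lemma quotLang_atom (S : Finset Q) (x : List A) :
    quotLang (atom M (↑S)) x = DL M (pairOf M S x).1 (pairOf M S x).2 := by
  ext z
  simp only [quotLang, atom, Set.mem_setOf_eq, DL, pairOf, Finset.mem_image,
    Finset.mem_compl]
  constructor
  · intro h
    constructor
    · rintro q ⟨a, ha, rfl⟩
      have := (h a).mpr ha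
      rwa [DFA.evalFrom_of_append] at this
    · rintro q ⟨a, ha, rfl⟩ hacc
      have : M.evalFrom a (x ++ z) ∈ M.accept := by
        rw [DFA.evalFrom_of_append]; exact hacc
      exact ha ((h a).mp this)
  · intro ⟨h1, h2⟩ q
    rw [DFA.evalFrom_of_append]
    constructor
    · intro hacc
      by_contra hq
      exact h2 _ ⟨q, hq, rfl⟩ hacc
    · intro hq
      exact h1 _ ⟨q, hq, rfl⟩

lemma range_quotLang_atom (S : Finset Q) :
    Set.range (quotLang (atom M (↑S))) =
      (fun P : Finset Q × Finset Q => DL M P.1 P.2) '' (Set.range (pairOf M S)) := by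
  have h : quotLang (atom M (↑S)) = (fun P : Finset Q × Finset Q => DL M P.1 P.2) ∘ pairOf M S := by
    funext x
    exact quotLang_atom M S x
  rw [h, Set.range_comp]

/-! ### Permutation words form a group -/

lemma ev_flatten_replicate (M : DFA A Q) (w : List A) (k : ℕ) :
    ev M (List.flatten (List.replicate k w)) = (ev M w)^[k] := by
  induction k with
  | zero => simp [ev_nil]
  | succ k ih =>
    rw [List.replicate_succ, List.flatten_cons, ev_append, ih]
    exact (Function.iterate_succ (ev M w) k).symm

lemma exists_inv {w : List A} (h : Bijective (ev M w)) :
    ∃ v, Bijective (ev M v) ∧ ev M v ∘ ev M w = id ∧ ev M w ∘ ev M v = id := by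
  set e : Equiv.Perm Q := Equiv.ofBijective _ h with he
  have hcoe : ⇑e = ev M w := rfl
  set N := Fintype.card (Equiv.Perm Q) with hN
  have hNpos : 0 < N := Fintype.card_pos
  have hEN : e ^ N = 1 := pow_card_eq_one
  refine ⟨List.flatten (List.replicate (N - 1) w), ?_, ?_, ?_⟩
  · rw [ev_flatten_replicate, ← hcoe, ← Equiv.Perm.coe_pow]
    exact (e ^ (N - 1)).bijective
  · rw [ev_flatten_replicate, ← hcoe, ← Equiv.Perm.coe_pow, ← Equiv.Perm.coe_mul]
    have : e ^ (N - 1) * e = 1 := by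
      rw [← pow_succ]
      have h1 : N - 1 + 1 = N := Nat.succ_pred_eq_of_pos hNpos
      rw [h1]; exact hEN
    rw [this]; rfl
  · rw [ev_flatten_replicate, ← hcoe, ← Equiv.Perm.coe_pow, ← Equiv.Perm.coe_mul]
    have : e * e ^ (N - 1) = 1 := by
      rw [← pow_succ']
      have h1 : N - 1 + 1 = N := Nat.succ_pred_eq_of_pos hNpos
      rw [h1]; exact hEN
    rw [this]; rfl

/-! ### Transformations of rank `n - 1` -/

/-- A transformation of rank `n-1` realized by a word: it merges exactly the
pair `{p, q}`, sending it to `c`, and its range misses exactly `r`. -/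
structure Elem (M : DFA A Q) where
  w : List A
  p : Q
  q : Q
  r : Q
  c : Q
  hpq : p ≠ q
  hp : ev M w p = c
  hq : ev M w q = c
  hcol : ∀ x y, ev M w x = ev M w y → x = y ∨ (x = p ∧ y = q) ∨ (x = q ∧ y = p)
  hrange : Set.range (ev M w) = {r}ᶜ

variable {M}

lemma Elem.mem_range (E : Elem M) {z : Q} (hz : z ≠ E.r) : ∃ x, ev M E.w x = z := by
  have : z ∈ Set.range (ev M E.w) := by rw [E.hrange]; exact hz
  exact this

lemma Elem.ne_r (E : Elem M) (x : Q) : ev M E.w x ≠ E.r := by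
  intro hx
  have : ev M E.w x ∈ Set.range (ev M E.w) := ⟨x, rfl⟩
  rw [E.hrange] at this
  exact this hx

lemma Elem.c_ne_r (E : Elem M) : E.c ≠ E.r := E.hp ▸ E.ne_r E.p

lemma Elem.swap (E : Elem M) : ∃ E' : Elem M, E'.p = E.q ∧ E'.q = E.p ∧ E'.r = E.r ∧
    E'.c = E.c ∧ E'.w = E.w := by
  refine ⟨⟨E.w, E.q, E.p, E.r, E.c, E.hpq.symm, E.hq, E.hp, ?_, E.hrange⟩,
    rfl, rfl, rfl, rfl, rfl⟩
  intro x y hxy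
  rcases E.hcol x y hxy with h | h | h
  · exact Or.inl h
  · exact Or.inr (Or.inr h)
  · exact Or.inr (Or.inl h)

/-- Post-composing an `Elem` with a permutation word. -/
lemma Elem.post (E : Elem M) {v : List A} (hv : Bijective (ev M v)) :
    ∃ E' : Elem M, E'.r = ev M v E.r ∧ E'.c = ev M v E.c ∧ E'.p = E.p ∧ E'.q = E.q := by
  refine ⟨⟨E.w ++ v, E.p, E.q, ev M v E.r, ev M v E.c, E.hpq, ?_, ?_, ?_, ?_⟩,
    rfl, rfl, rfl, rfl⟩
  · rw [ev_append]; simp [E.hp]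
  · rw [ev_append]; simp [E.hq]
  · intro x y hxy
    rw [ev_append] at hxy
    exact E.hcol x y (hv.1 hxy)
  · rw [ev_append, Set.range_comp, E.hrange, Set.image_compl_eq hv, Set.image_singleton]

/-- Pre-composing an `Elem` with a permutation word. -/
lemma Elem.pre (E : Elem M) {v : List A} (hv : Bijective (ev M v)) {p' q' : Q}
    (hp' : ev M v p' = E.p) (hq' : ev M v q' = E.q) :
    ∃ E' : Elem M, E'.r = E.r ∧ E'.c = E.c ∧ E'.p = p' ∧ E'.q = q' ∧ E'.w = v ++ E.w := by
  have hne : p' ≠ q' := by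
    intro h; exact E.hpq (by rw [← hp', ← hq', h])
  refine ⟨⟨v ++ E.w, p', q', E.r, E.c, hne, ?_, ?_, ?_, ?_⟩, rfl, rfl, rfl, rfl, rfl⟩
  · rw [ev_append]; simp [hp', E.hp]
  · rw [ev_append]; simp [hq', E.hq]
  · intro x y hxy
    rw [ev_append] at hxy
    rcases E.hcol _ _ hxy with h | ⟨h1, h2⟩ | ⟨h1, h2⟩
    · exact Or.inl (hv.1 h)
    · exact Or.inr (Or.inl ⟨hv.1 (h1.trans hp'.symm), hv.1 (h2.trans hq'.symm)⟩)
    · exact Or.inr (Or.inr ⟨hv.1 (h1.trans hq'.symm), hv.1 (h2.trans hp'.symm)⟩)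
  · rw [ev_append, Set.range_comp, hv.2.range_eq, Set.image_univ, E.hrange]

/-- Composing two `Elem`s when the missing point of the first is in the merged
pair of the second. -/
lemma Elem.comp (E₁ E₂ : Elem M) (h : E₁.r = E₂.p ∨ E₁.r = E₂.q) :
    ∃ E' : Elem M, E'.r = E₂.r ∧ E'.c = ev M E₂.w E₁.c := by
  refine ⟨⟨E₁.w ++ E₂.w, E₁.p, E₁.q, E₂.r, ev M E₂.w E₁.c, E₁.hpq, ?_, ?_, ?_, ?_⟩, rfl, rfl⟩
  · rw [ev_append]; simp [E₁.hp]
  · rw [ev_append]; simp [E₁.hq]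
  · intro x y hxy
    rw [ev_append] at hxy
    rcases E₂.hcol _ _ hxy with h' | ⟨h1, h2⟩ | ⟨h1, h2⟩
    · exact E₁.hcol x y h'
    · rcases h with hr | hr
      · exact absurd (h1.trans hr.symm) (E₁.ne_r x)
      · exact absurd (h2.trans hr.symm) (E₁.ne_r y)
    · rcases h with hr | hr
      · exact absurd (h2.trans hr.symm) (E₁.ne_r y)
      · exact absurd (h1.trans hr.symm) (E₁.ne_r x)
  · rw [ev_append, Set.range_comp]
    apply Set.eq_of_subset_of_subset
    · rintro z ⟨u, -, rfl⟩
      exact Set.mem_compl_singleton_iff.mpr (E₂.ne_r u)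
    · intro z hz
      have hz' : z ≠ E₂.r := hz
      obtain ⟨u, hu⟩ := E₂.mem_range hz'
      by_cases hur : u = E₁.r
      · subst hur
        rcases h with hr | hr
        · refine ⟨E₂.q, ?_, ?_⟩
          · rw [E₁.hrange]
            refine Set.mem_compl_singleton_iff.mpr ?_
            intro heq
            exact E₂.hpq (hr.symm.trans heq.symm)
          · rw [E₂.hq, ← E₂.hp, ← hr]; exact hu
        · refine ⟨E₂.p, ?_, ?_⟩
          · rw [E₁.hrange]
            refine Set.mem_compl_singleton_iff.mpr ?_
            intro heq
            exact E₂.hpq (heq.trans hr)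
          · rw [E₂.hp, ← E₂.hq, ← hr]; exact hu
      · exact ⟨u, by rw [E₁.hrange]; exact Set.mem_compl_singleton_iff.mpr hur, hu⟩

/-- Construction of an `Elem` from a word of rank `n - 1`. -/
lemma elem_of_rank (hn3 : 3 ≤ Fintype.card Q) {w : List A}
    (hw : (Set.range (ev M w)).ncard = Fintype.card Q - 1) :
    ∃ E : Elem M, E.w = w := by
  set f := ev M w with hf
  set n := Fintype.card Q with hn
  have hcard : Nat.card Q = n := Nat.card_eq_fintype_card
  have hcompl : (Set.range f)ᶜ.ncard = 1 := by
    have := Set.ncard_add_ncard_compl (Set.range f)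
    rw [hw, hcard] at this
    omega
  obtain ⟨r, hr⟩ := Set.ncard_eq_one.mp hcompl
  have hrange : Set.range f = {r}ᶜ := by
    rw [← compl_compl (Set.range f), hr]
  have hninj : ¬Injective f := by
    intro hinj
    have hsurj := Finite.injective_iff_surjective.mp hinj
    rw [hsurj.range_eq, Set.ncard_univ, hcard] at hw
    omega
  rw [Injective] at hninj
  push_neg at hninj
  obtain ⟨p, q, hfpq, hpq⟩ := hninj
  refine ⟨⟨w, p, q, r, f p, hpq, rfl, hfpq.symm, ?_, hrange⟩, rfl⟩
  intro x y hxy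
  by_contra hcon
  push_neg at hcon
  obtain ⟨hxney, hc1, hc2⟩ := hcon
  -- find v ∈ {x,y} \ {p,q} and its collision partner u
  have key : ∃ v u : Q, v ≠ p ∧ v ≠ q ∧ u ≠ v ∧ f u = f v := by
    by_cases hx : x = p ∨ x = q
    · have hy1 : y ≠ p := by
        rintro rfl
        rcases hx with rfl | rfl
        · exact hxney rfl
        · exact (hc2 rfl) rfl
      have hy2 : y ≠ q := by
        rintro rfl
        rcases hx with rfl | rfl
        · exact (hc1 rfl) rfl
        · exact hxney rfl
      exact ⟨y, x, hy1, hy2, hxney, hxy⟩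
    · push_neg at hx
      exact ⟨x, y, hx.1, hx.2, (Ne.symm hxney), hxy.symm⟩
  obtain ⟨v, u, hvp, hvq, huv, hfu⟩ := key
  have hqv : q ≠ v := fun h => hvq h.symm
  have hsub : Set.range f ⊆ f '' (Set.univ \ {q, v}) := by
    rintro z ⟨a, rfl⟩
    by_cases haq : a = q
    · refine ⟨p, ⟨trivial, ?_⟩, by rw [haq, ← hfpq]⟩
      simp only [Set.mem_insert_iff, Set.mem_singleton_iff]
      push_neg
      exact ⟨hpq, fun h => hvp h.symm⟩
    · by_cases hav : a = v
      · by_cases huq : u = q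
        · refine ⟨p, ⟨trivial, ?_⟩, by rw [hav, ← hfu, huq, ← hfpq]⟩
          simp only [Set.mem_insert_iff, Set.mem_singleton_iff]
          push_neg
          exact ⟨hpq, fun h => hvp h.symm⟩
        · refine ⟨u, ⟨trivial, ?_⟩, by rw [hav, hfu]⟩
          simp only [Set.mem_insert_iff, Set.mem_singleton_iff]
          push_neg
          exact ⟨huq, huv⟩
      · exact ⟨a, ⟨trivial, by simp [haq, hav]⟩, rfl⟩
  have h1 : (Set.range f).ncard ≤ (Set.univ \ ({q, v} : Set Q)).ncard :=
    le_trans (Set.ncard_le_ncard hsub (Set.toFinite _)) (Set.ncard_image_le (Set.toFinite _))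
  have h2 : (Set.univ \ ({q, v} : Set Q)).ncard = n - 2 := by
    rw [Set.ncard_diff (Set.subset_univ _), Set.ncard_univ, hcard, Set.ncard_pair hqv]
  rw [hw, h2] at h1
  omega

/-! ### Availability of all ordered rank `n-1` data -/

variable (M)

/-- `Avl M α β` means there is a rank `n-1` word whose range misses exactly `α`
and whose merged pair is sent to `β`. -/
def Avl (α β : Q) : Prop := ∃ E : Elem M, E.r = α ∧ E.c = β

/-- Set-transitivity of the group of permutation words, in `Finset` form. -/
def SetTrans : Prop := ∀ X Y : Finset Q, X.Nonempty → X.card = Y.card →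
  ∃ v, Bijective (ev M v) ∧ X.image (ev M v) = Y

variable {M}

lemma Avl.ne {α β : Q} (h : Avl M α β) : α ≠ β := by
  obtain ⟨E, hr, hc⟩ := h
  rw [← hr, ← hc]
  exact fun hh => E.c_ne_r hh.symm

lemma Avl.perm {α β : Q} (h : Avl M α β) {v : List A} (hv : Bijective (ev M v)) :
    Avl M (ev M v α) (ev M v β) := by
  obtain ⟨E, hr, hc⟩ := h
  obtain ⟨E', h1, h2, -, -⟩ := E.post hv
  exact ⟨E', by rw [h1, hr], by rw [h2, hc]⟩

lemma avl_step {z : Q} (E0 : Elem M) (h : Avl M E0.p z ∨ Avl M E0.q z) :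
    Avl M E0.r (ev M E0.w z) := by
  rcases h with ⟨E, hr, hc⟩ | ⟨E, hr, hc⟩
  · obtain ⟨E', h1, h2⟩ := E.comp E0 (Or.inl hr)
    exact ⟨E', h1, by rw [h2, hc]⟩
  · obtain ⟨E', h1, h2⟩ := E.comp E0 (Or.inr hr)
    exact ⟨E', h1, by rw [h2, hc]⟩

/-- Transport of an ordered pair by a permutation word, up to orientation. -/
lemma pair_transport (hT : SetTrans M) {α β γ δ : Q} (h1 : α ≠ β) (h2 : γ ≠ δ) :
    ∃ v, Bijective (ev M v) ∧
      ((ev M v α = γ ∧ ev M v β = δ) ∨ (ev M v α = δ ∧ ev M v β = γ)) := by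
  obtain ⟨v, hv, him⟩ := hT {α, β} {γ, δ} ⟨α, Finset.mem_insert_self _ _⟩
    (by rw [Finset.card_pair h1, Finset.card_pair h2])
  refine ⟨v, hv, ?_⟩
  have hmem : ∀ x ∈ ({α, β} : Finset Q), ev M v x ∈ ({γ, δ} : Finset Q) := by
    intro x hx
    rw [← him]
    exact Finset.mem_image_of_mem _ hx
  have hα := hmem α (Finset.mem_insert_self _ _)
  have hβ := hmem β (Finset.mem_insert_of_mem (Finset.mem_singleton_self _))
  simp only [Finset.mem_insert, Finset.mem_singleton] at hα hβ
  have hne : ev M v α ≠ ev M v β := fun hh => h1 (hv.1 hh)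
  rcases hα with hα | hα <;> rcases hβ with hβ | hβ
  · exact absurd (hα.trans hβ.symm) hne
  · exact Or.inl ⟨hα, hβ⟩
  · exact Or.inr ⟨hα, hβ⟩
  · exact absurd (hα.trans hβ.symm) hne

lemma point_transport (hT : SetTrans M) (α β : Q) :
    ∃ v, Bijective (ev M v) ∧ ev M v α = β := by
  obtain ⟨v, hv, him⟩ := hT {α} {β} (Finset.singleton_nonempty α) (by simp)
  refine ⟨v, hv, ?_⟩
  have : ev M v α ∈ ({β} : Finset Q) := by
    rw [← him]; exact Finset.mem_image_of_mem _ (Finset.mem_singleton_self _)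
  exact Finset.mem_singleton.mp this

/-- The master lemma: with a set-transitive permutation group and one rank `n-1`
transformation, every ordered pair `(α, β)` is available. -/
lemma avail_all (hT : SetTrans M) (E0 : Elem M) :
    ∀ α β : Q, α ≠ β → Avl M α β := by
  have A1 : ∀ a b : Q, a ≠ b → Avl M a b ∨ Avl M b a := by
    intro a b hab
    have base : Avl M E0.r E0.c := ⟨E0, rfl, rfl⟩
    obtain ⟨v, hv, hor⟩ := pair_transport hT E0.c_ne_r.symm hab
    rcases hor with ⟨h1, h2⟩ | ⟨h1, h2⟩
    · exact Or.inl (h1 ▸ h2 ▸ base.perm hv)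
    · exact Or.inr (h2 ▸ h1 ▸ base.perm hv)
  by_contra hc
  push_neg at hc
  obtain ⟨α₀, β₀, hne0, hnav⟩ := hc
  have noboth : ∀ a b : Q, ¬(Avl M a b ∧ Avl M b a) := by
    rintro a b ⟨h1, h2⟩
    have hab : a ≠ b := h1.ne
    obtain ⟨v, hv, hor⟩ := pair_transport hT hab hne0
    rcases hor with ⟨hh1, hh2⟩ | ⟨hh1, hh2⟩
    · exact hnav (hh1 ▸ hh2 ▸ h1.perm hv)
    · exact hnav (hh2 ▸ hh1 ▸ h2.perm hv)
  -- wlog: an Elem whose merged pair is `Avl`-oriented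
  obtain ⟨E, hE⟩ : ∃ E : Elem M, Avl M E.p E.q := by
    rcases A1 E0.p E0.q E0.hpq with h | h
    · exact ⟨E0, h⟩
    · obtain ⟨E', h1, h2, -, -, -⟩ := E0.swap
      exact ⟨E', by rw [h1, h2]; exact h⟩
  -- out-neighbourhoods
  set Np : Q → Finset Q := fun a => Finset.univ.filter (fun z => Avl M a z) with hNp
  have hconst : ∀ a b : Q, (Np a).card = (Np b).card := by
    have hle : ∀ a b : Q, (Np a).card ≤ (Np b).card := by
      intro a b
      obtain ⟨v, hv, hab⟩ := point_transport hT a b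
      have hsub : (Np a).image (ev M v) ⊆ Np b := by
        intro z hz
        obtain ⟨u, hu, rfl⟩ := Finset.mem_image.mp hz
        have : Avl M a u := (Finset.mem_filter.mp hu).2
        have := this.perm hv
        rw [hab] at this
        exact Finset.mem_filter.mpr ⟨Finset.mem_univ _, this⟩
      calc (Np a).card = ((Np a).image (ev M v)).card :=
            (Finset.card_image_of_injective _ hv.1).symm
        _ ≤ (Np b).card := Finset.card_le_card hsub
    exact fun a b => le_antisymm (hle a b) (hle b a)
  -- the contradiction
  set B : Finset Q := Np E.p ∪ Np E.q with hB
  have hstep : ∀ z ∈ B, ev M E.w z ∈ Np E.r := by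
    intro z hz
    rcases Finset.mem_union.mp hz with h | h
    · exact Finset.mem_filter.mpr ⟨Finset.mem_univ _,
        avl_step E (Or.inl (Finset.mem_filter.mp h).2)⟩
    · exact Finset.mem_filter.mpr ⟨Finset.mem_univ _,
        avl_step E (Or.inr (Finset.mem_filter.mp h).2)⟩
  have hpB : E.p ∉ B := by
    intro hp
    rcases Finset.mem_union.mp hp with h | h
    · exact (Finset.mem_filter.mp h).2.ne rfl
    · exact noboth E.q E.p ⟨(Finset.mem_filter.mp h).2, hE⟩
  have hinj : Set.InjOn (ev M E.w) ↑B := by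
    intro x hx y hy hxy
    rcases E.hcol x y hxy with h | ⟨h1, h2⟩ | ⟨h1, h2⟩
    · exact h
    · exact absurd (h1 ▸ hx) hpB
    · exact absurd (h2 ▸ hy) hpB
  have hcard1 : (Np E.q).card + 1 ≤ B.card := by
    have hsub : insert E.q (Np E.q) ⊆ B := by
      intro z hz
      rcases Finset.mem_insert.mp hz with rfl | h
      · exact Finset.mem_union.mpr (Or.inl (Finset.mem_filter.mpr ⟨Finset.mem_univ _, hE⟩))
      · exact Finset.mem_union.mpr (Or.inr h)
    have hq : E.q ∉ Np E.q := fun h => (Finset.mem_filter.mp h).2.ne rfl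
    calc (Np E.q).card + 1 = (insert E.q (Np E.q)).card :=
          (Finset.card_insert_of_notMem hq).symm
      _ ≤ B.card := Finset.card_le_card hsub
  have hcard2 : B.card ≤ (Np E.r).card := by
    calc B.card = (B.image (ev M E.w)).card := (Finset.card_image_of_injOn hinj).symm
      _ ≤ (Np E.r).card := Finset.card_le_card (by
          intro z hz
          obtain ⟨u, hu, rfl⟩ := Finset.mem_image.mp hz
          exact hstep u hu)
  have := hconst E.r E.q
  omega

/-- A word merging exactly a prescribed pair `{a, b}`. -/
lemma exists_merge (hT : SetTrans M) (E0 : Elem M) {a b : Q} (hab : a ≠ b) :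
    ∃ w, ev M w a = ev M w b ∧
      ∀ x y, ev M w x = ev M w y → x = y ∨ (x = a ∧ y = b) ∨ (x = b ∧ y = a) := by
  obtain ⟨v, hv, hor⟩ := pair_transport hT hab E0.hpq
  rcases hor with ⟨h1, h2⟩ | ⟨h1, h2⟩
  · obtain ⟨E', -, -, hp', hq', hw⟩ := E0.pre hv h1 h2
    refine ⟨E'.w, ?_, ?_⟩
    · rw [← hp', ← hq', E'.hp, E'.hq]
    · intro x y hxy
      rcases E'.hcol x y hxy with h | ⟨hh1, hh2⟩ | ⟨hh1, hh2⟩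
      · exact Or.inl h
      · exact Or.inr (Or.inl ⟨hh1.trans hp', hh2.trans hq'⟩)
      · exact Or.inr (Or.inr ⟨hh1.trans hq', hh2.trans hp'⟩)
  · obtain ⟨E', -, -, hp', hq', hw⟩ := E0.pre hv h2 h1
    refine ⟨E'.w, ?_, ?_⟩
    · rw [← hp', ← hq', E'.hp, E'.hq]
    · intro x y hxy
      rcases E'.hcol x y hxy with h | ⟨hh1, hh2⟩ | ⟨hh1, hh2⟩
      · exact Or.inl h
      · exact Or.inr (Or.inr ⟨hh1.trans hp', hh2.trans hq'⟩)
      · exact Or.inr (Or.inl ⟨hh1.trans hq', hh2.trans hp'⟩)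

/-! ### Ordered distinguishability and nonemptiness of the pair languages -/

/-- The right language of a state. -/
def KK (M : DFA A Q) (a : Q) : Set (List A) := {w | M.evalFrom a w ∈ M.accept}

lemma KK_inj (hmin : IsMinimal M) {a b : Q} (h : KK M a = KK M b) : a = b := by
  by_contra hab
  obtain ⟨w, hw⟩ := hmin.2 a b hab
  exact hw ⟨fun hh => (Set.ext_iff.mp h w).mp hh, fun hh => (Set.ext_iff.mp h w).mpr hh⟩

lemma KK_transport {v : List A} {x y : Q} (h : KK M x ⊆ KK M y) :
    KK M (ev M v x) ⊆ KK M (ev M v y) := by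
  intro w hw
  have h1 : (v ++ w) ∈ KK M x := by
    show M.evalFrom x (v ++ w) ∈ M.accept
    rw [DFA.evalFrom_of_append]
    exact hw
  have h2 : M.evalFrom y (v ++ w) ∈ M.accept := h h1
  rw [DFA.evalFrom_of_append] at h2
  exact h2

lemma ordered_distinguish (hT : SetTrans M) (hmin : IsMinimal M)
    (h2 : 2 ≤ Fintype.card Q) :
    ∀ a b : Q, a ≠ b → ∃ w, M.evalFrom a w ∈ M.accept ∧ M.evalFrom b w ∉ M.accept := by
  by_contra hcon
  push_neg at hcon
  obtain ⟨a, b, hab, hsub'⟩ := hcon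
  have hsub : KK M a ⊆ KK M b := fun w hw => hsub' w hw
  -- every two states are comparable
  have hcomp : ∀ x y : Q, KK M x ⊆ KK M y ∨ KK M y ⊆ KK M x := by
    intro x y
    by_cases hxy : x = y
    · exact Or.inl (hxy ▸ le_refl _)
    · obtain ⟨v, hv, hor⟩ := pair_transport hT hab hxy
      rcases hor with ⟨h1', h2'⟩ | ⟨h1', h2'⟩
      · exact Or.inl (h1' ▸ h2' ▸ KK_transport hsub)
      · exact Or.inr (h2' ▸ h1' ▸ KK_transport hsub)
  -- a maximum state
  set rk : Q → ℕ := fun x => (Finset.univ.filter (fun z => KK M z ⊆ KK M x)).card with hrk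
  obtain ⟨mx, -, hmx⟩ := Finset.exists_max_image (Finset.univ : Finset Q) rk
    ⟨a, Finset.mem_univ a⟩
  have hmax : ∀ x : Q, KK M x ⊆ KK M mx := by
    intro x
    rcases hcomp x mx with h | h
    · exact h
    · have hss : (Finset.univ.filter (fun z => KK M z ⊆ KK M mx)) ⊆
          (Finset.univ.filter (fun z => KK M z ⊆ KK M x)) := by
        intro z hz
        exact Finset.mem_filter.mpr ⟨Finset.mem_univ _,
          le_trans (Finset.mem_filter.mp hz).2 h⟩
      have heq : (Finset.univ.filter (fun z => KK M z ⊆ KK M mx)) =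
          (Finset.univ.filter (fun z => KK M z ⊆ KK M x)) :=
        Finset.eq_of_subset_of_card_le hss (hmx x (Finset.mem_univ x))
      have : x ∈ Finset.univ.filter (fun z => KK M z ⊆ KK M x) :=
        Finset.mem_filter.mpr ⟨Finset.mem_univ _, le_refl _⟩
      rw [← heq] at this
      exact (Finset.mem_filter.mp this).2
  obtain ⟨b₀, hb₀⟩ := Fintype.exists_ne_of_one_lt_card (by omega) mx
  obtain ⟨v, hv, hvb⟩ := point_transport hT b₀ mx
  have hvmx : ev M v mx = mx := by
    apply KK_inj hmin
    apply le_antisymm (hmax _)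
    obtain ⟨y, hy⟩ := hv.2 mx
    calc KK M mx = KK M (ev M v y) := by rw [hy]
      _ ⊆ KK M (ev M v mx) := KK_transport (hmax y)
  exact hb₀ (hv.1 (hvb.trans hvmx.symm))

lemma accept_both (hmin : IsMinimal M) (h2 : 2 ≤ Fintype.card Q) :
    (∃ s, s ∈ M.accept) ∧ (∃ s, s ∉ M.accept) := by
  obtain ⟨p, q, hpq⟩ := Fintype.exists_pair_of_one_lt_card (α := Q) (by omega)
  obtain ⟨w, hw⟩ := hmin.2 p q hpq
  rw [not_iff] at hw
  by_cases h : M.evalFrom p w ∈ M.accept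
  · exact ⟨⟨_, h⟩, ⟨_, fun hq => hw.mpr hq h⟩⟩
  · exact ⟨⟨_, hw.mp h⟩, ⟨_, h⟩⟩

/-- Nonemptiness of the pair languages for disjoint pairs. -/
lemma DL_nonempty (hT : SetTrans M) (E0 : Elem M) (hmin : IsMinimal M)
    (h2 : 2 ≤ Fintype.card Q) :
    ∀ X Y : Finset Q, Disjoint X Y → (DL M X Y).Nonempty := by
  haveI : Nonempty Q := ⟨E0.p⟩
  suffices h : ∀ m, ∀ X Y : Finset Q, X.card + Y.card = m → Disjoint X Y →
      (DL M X Y).Nonempty by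
    intro X Y hd
    exact h _ X Y rfl hd
  intro m
  induction m using Nat.strong_induction_on with
  | _ m ih =>
    intro X Y hm hd
    -- merging step
    have merge_step : ∀ (a b : Q), a ∈ X ∪ Y → b ∈ X ∪ Y → a ≠ b →
        ((a ∈ X ∧ b ∈ X) ∨ (a ∈ Y ∧ b ∈ Y)) → (DL M X Y).Nonempty := by
      rintro a b hax hbx hab habXY
      obtain ⟨w, hwab, hwcol⟩ := exists_merge hT E0 hab
      set X' := X.image (ev M w) with hX'
      set Y' := Y.image (ev M w) with hY'
      have hd' : Disjoint X' Y' := by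
        rw [Finset.disjoint_left]
        rintro u hu hu'
        obtain ⟨x, hx, rfl⟩ := Finset.mem_image.mp hu
        obtain ⟨y, hy, hxy⟩ := Finset.mem_image.mp hu'
        rcases hwcol y x hxy with rfl | ⟨rfl, rfl⟩ | ⟨rfl, rfl⟩
        · exact Finset.disjoint_left.mp hd hx hy
        · rcases habXY with ⟨h1, h1'⟩ | ⟨h1, h1'⟩
          · exact Finset.disjoint_left.mp hd h1 hy
          · exact Finset.disjoint_left.mp hd hx h1'
        · rcases habXY with ⟨h1, h1'⟩ | ⟨h1, h1'⟩
          · exact Finset.disjoint_left.mp hd h1' hy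
          · exact Finset.disjoint_left.mp hd hx h1
      have hlt : X'.card + Y'.card < m := by
        have hX'le : X'.card ≤ X.card := Finset.card_image_le
        have hY'le : Y'.card ≤ Y.card := Finset.card_image_le
        rcases habXY with ⟨h1, h1'⟩ | ⟨h1, h1'⟩
        · have : X' ⊆ (X.erase b).image (ev M w) := by
            intro u hu
            obtain ⟨x, hx, rfl⟩ := Finset.mem_image.mp hu
            by_cases hxb : x = b
            · subst hxb
              exact Finset.mem_image.mpr ⟨a, Finset.mem_erase.mpr ⟨hab, h1⟩, hwab⟩
            · exact Finset.mem_image.mpr ⟨x, Finset.mem_erase.mpr ⟨hxb, hx⟩, rfl⟩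
          have h3 : X'.card ≤ (X.erase b).card :=
            le_trans (Finset.card_le_card this) Finset.card_image_le
          have h4 : (X.erase b).card = X.card - 1 := Finset.card_erase_of_mem h1'
          have h5 : 0 < X.card := Finset.card_pos.mpr ⟨b, h1'⟩
          omega
        · have : Y' ⊆ (Y.erase b).image (ev M w) := by
            intro u hu
            obtain ⟨y, hy, rfl⟩ := Finset.mem_image.mp hu
            by_cases hyb : y = b
            · subst hyb
              exact Finset.mem_image.mpr ⟨a, Finset.mem_erase.mpr ⟨hab, h1⟩, hwab⟩
            · exact Finset.mem_image.mpr ⟨y, Finset.mem_erase.mpr ⟨hyb, hy⟩, rfl⟩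
          have h3 : Y'.card ≤ (Y.erase b).card :=
            le_trans (Finset.card_le_card this) Finset.card_image_le
          have h4 : (Y.erase b).card = Y.card - 1 := Finset.card_erase_of_mem h1'
          have h5 : 0 < Y.card := Finset.card_pos.mpr ⟨b, h1'⟩
          omega
      obtain ⟨z, hz1, hz2⟩ := ih _ hlt X' Y' rfl hd'
      refine ⟨w ++ z, ?_, ?_⟩
      · intro q hq
        rw [DFA.evalFrom_of_append]
        exact hz1 _ (Finset.mem_image_of_mem _ hq)
      · intro q hq
        rw [DFA.evalFrom_of_append]
        exact hz2 _ (Finset.mem_image_of_mem _ hq)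
    by_cases hX2 : 2 ≤ X.card
    · obtain ⟨a, ha, b, hb, hab⟩ := Finset.one_lt_card.mp hX2
      exact merge_step a b (Finset.mem_union_left _ ha) (Finset.mem_union_left _ hb) hab
        (Or.inl ⟨ha, hb⟩)
    · by_cases hY2 : 2 ≤ Y.card
      · obtain ⟨a, ha, b, hb, hab⟩ := Finset.one_lt_card.mp hY2
        exact merge_step a b (Finset.mem_union_right _ ha) (Finset.mem_union_right _ hb) hab
          (Or.inr ⟨ha, hb⟩)
      · -- base case: both at most singletons
        push_neg at hX2 hY2
        obtain ⟨⟨sf, hsf⟩, ⟨sr, hsr⟩⟩ := accept_both hmin h2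
        have hXcases : X = ∅ ∨ ∃ a, X = {a} := by
          rcases Finset.card_le_one_iff_subset_singleton.mp (show X.card ≤ 1 by omega) with ⟨a, haX⟩
          by_cases hX0 : X = ∅
          · exact Or.inl hX0
          · exact Or.inr ⟨a, Finset.eq_singleton_iff_nonempty_unique_mem.mpr
              ⟨Finset.nonempty_of_ne_empty hX0,
               fun x hx => Finset.mem_singleton.mp (haX hx)⟩⟩
        have hYcases : Y = ∅ ∨ ∃ b, Y = {b} := by
          rcases Finset.card_le_one_iff_subset_singleton.mp (show Y.card ≤ 1 by omega) with ⟨b, hbY⟩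
          by_cases hY0 : Y = ∅
          · exact Or.inl hY0
          · exact Or.inr ⟨b, Finset.eq_singleton_iff_nonempty_unique_mem.mpr
              ⟨Finset.nonempty_of_ne_empty hY0,
               fun y hy => Finset.mem_singleton.mp (hbY hy)⟩⟩
        rcases hXcases with rfl | ⟨a, rfl⟩ <;> rcases hYcases with rfl | ⟨b, rfl⟩
        · exact ⟨[], by simp [DL]⟩
        · obtain ⟨v, hv, hvb⟩ := point_transport hT b sr
          refine ⟨v, by simp [DL], ?_⟩
          intro q hq
          rw [Finset.mem_singleton.mp hq]
          show ev M v b ∉ M.accept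
          rw [hvb]
          exact hsr
        · obtain ⟨v, hv, hva⟩ := point_transport hT a sf
          refine ⟨v, ?_, by simp [DL]⟩
          intro q hq
          rw [Finset.mem_singleton.mp hq]
          show ev M v a ∈ M.accept
          rw [hva]
          exact hsf
        · have hab : a ≠ b := by
            intro h
            exact Finset.disjoint_left.mp hd (Finset.mem_singleton_self a)
              (h ▸ Finset.mem_singleton_self b)
          obtain ⟨w, hw1, hw2⟩ := ordered_distinguish hT hmin h2 a b hab
          refine ⟨w, ?_, ?_⟩
          · intro q hq; rw [Finset.mem_singleton.mp hq]; exact hw1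
          · intro q hq; rw [Finset.mem_singleton.mp hq]; exact hw2

lemma DL_empty_of_not_disjoint {X Y : Finset Q} (h : ¬Disjoint X Y) :
    DL M X Y = ∅ := by
  rw [Finset.not_disjoint_iff] at h
  obtain ⟨q, hqX, hqY⟩ := h
  ext z
  simp only [DL, Set.mem_setOf_eq, Set.mem_empty_iff_false, iff_false, not_and]
  intro h1 h2
  exact h2 q hqY (h1 q hqX)

/-- Injectivity of the pair languages on disjoint pairs. -/
lemma DL_inj (hT : SetTrans M) (E0 : Elem M) (hmin : IsMinimal M)
    (h2 : 2 ≤ Fintype.card Q) {X Y X' Y' : Finset Q}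
    (hd : Disjoint X Y) (hd' : Disjoint X' Y') (h : DL M X Y = DL M X' Y') :
    X = X' ∧ Y = Y' := by
  have key : ∀ U V U' V' : Finset Q, Disjoint U V → Disjoint U' V' →
      DL M U V = DL M U' V' → U ⊆ U' ∧ V ⊆ V' := by
    intro U V U' V' hUV hUV' hDL
    constructor
    · intro a ha
      by_contra ha'
      by_cases haV' : a ∈ V'
      · obtain ⟨z, hz1, hz2⟩ := DL_nonempty hT E0 hmin h2 U V hUV
        have : (z : List A) ∈ DL M U' V' := hDL ▸ (⟨hz1, hz2⟩ : z ∈ DL M U V)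
        exact this.2 a haV' (hz1 a ha)
      · have hdd : Disjoint U' (insert a V') := by
          rw [Finset.disjoint_left]
          intro x hx hx'
          rcases Finset.mem_insert.mp hx' with rfl | hx''
          · exact ha' hx
          · exact Finset.disjoint_left.mp hUV' hx hx''
        obtain ⟨z, hz1, hz2⟩ := DL_nonempty hT E0 hmin h2 U' (insert a V') hdd
        have hzUV : (z : List A) ∈ DL M U V := by
          rw [hDL]
          exact ⟨hz1, fun q hq => hz2 q (Finset.mem_insert_of_mem hq)⟩
        exact hz2 a (Finset.mem_insert_self _ _) (hzUV.1 a ha)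
    · intro a ha
      by_contra ha'
      by_cases haU' : a ∈ U'
      · obtain ⟨z, hz1, hz2⟩ := DL_nonempty hT E0 hmin h2 U V hUV
        have : (z : List A) ∈ DL M U' V' := hDL ▸ (⟨hz1, hz2⟩ : z ∈ DL M U V)
        exact hz2 a ha (this.1 a haU')
      · have hdd : Disjoint (insert a U') V' := by
          rw [Finset.disjoint_left]
          intro x hx hx'
          rcases Finset.mem_insert.mp hx with rfl | hx''
          · exact ha' hx'
          · exact Finset.disjoint_left.mp hUV' hx'' hx'
        obtain ⟨z, hz1, hz2⟩ := DL_nonempty hT E0 hmin h2 (insert a U') V' hdd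
        have hzUV : (z : List A) ∈ DL M U V := by
          rw [hDL]
          exact ⟨fun q hq => hz1 q (Finset.mem_insert_of_mem hq), hz2⟩
        exact hzUV.2 a ha (hz1 a (Finset.mem_insert_self _ _))
  obtain ⟨h1, h2'⟩ := key X Y X' Y' hd hd' h
  obtain ⟨h3, h4⟩ := key X' Y' X Y hd' hd h.symm
  exact ⟨le_antisymm h1 h3, le_antisymm h2' h4⟩

/-! ### Preimages under an `Elem` -/

def preim (E : Elem M) (Z : Finset Q) : Finset Q :=
  Finset.univ.filter (fun z => ev M E.w z ∈ Z)

lemma preim_image (E : Elem M) (Z : Finset Q) (hZr : E.r ∉ Z) :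
    (preim E Z).image (ev M E.w) = Z := by
  apply Finset.Subset.antisymm
  · intro z hz
    obtain ⟨u, hu, rfl⟩ := Finset.mem_image.mp hz
    exact (Finset.mem_filter.mp hu).2
  · intro z hz
    have hzr : z ≠ E.r := fun h => hZr (h ▸ hz)
    obtain ⟨u, hu⟩ := E.mem_range hzr
    exact Finset.mem_image.mpr ⟨u, Finset.mem_filter.mpr ⟨Finset.mem_univ _, hu ▸ hz⟩, hu⟩

lemma preim_card_mem (E : Elem M) (Z : Finset Q) (hZr : E.r ∉ Z) (hc : E.c ∈ Z) :
    (preim E Z).card = Z.card + 1 := by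
  have hqmem : E.q ∈ preim E Z := Finset.mem_filter.mpr ⟨Finset.mem_univ _, E.hq ▸ hc⟩
  have hpmem : E.p ∈ (preim E Z).erase E.q :=
    Finset.mem_erase.mpr ⟨E.hpq, Finset.mem_filter.mpr ⟨Finset.mem_univ _, E.hp ▸ hc⟩⟩
  have hinj : Set.InjOn (ev M E.w) ↑((preim E Z).erase E.q) := by
    intro x hx y hy hxy
    rcases E.hcol x y hxy with h | ⟨h1, h2⟩ | ⟨h1, h2⟩
    · exact h
    · exact absurd (Finset.mem_erase.mp hy).1 (by rw [h2]; exact fun hh => hh rfl)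
    · exact absurd (Finset.mem_erase.mp hx).1 (by rw [h1]; exact fun hh => hh rfl)
  have himg : ((preim E Z).erase E.q).image (ev M E.w) = Z := by
    apply Finset.Subset.antisymm
    · intro z hz
      obtain ⟨u, hu, rfl⟩ := Finset.mem_image.mp hz
      exact (Finset.mem_filter.mp (Finset.mem_erase.mp hu).2).2
    · intro z hz
      have hzr : z ≠ E.r := fun h => hZr (h ▸ hz)
      obtain ⟨u, hu⟩ := E.mem_range hzr
      by_cases huq : u = E.q
      · refine Finset.mem_image.mpr ⟨E.p, hpmem, ?_⟩
        rw [E.hp, ← E.hq, ← huq, hu]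
      · exact Finset.mem_image.mpr ⟨u, Finset.mem_erase.mpr ⟨huq,
          Finset.mem_filter.mpr ⟨Finset.mem_univ _, hu ▸ hz⟩⟩, hu⟩
  have h1 : ((preim E Z).erase E.q).card = Z.card := by
    rw [← Finset.card_image_of_injOn hinj, himg]
  have h2 := Finset.card_erase_of_mem hqmem
  have h3 : 0 < (preim E Z).card := Finset.card_pos.mpr ⟨E.q, hqmem⟩
  omega

lemma preim_card_notmem (E : Elem M) (Z : Finset Q) (hZr : E.r ∉ Z) (hc : E.c ∉ Z) :
    (preim E Z).card = Z.card := by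
  have hinj : Set.InjOn (ev M E.w) ↑(preim E Z) := by
    intro x hx y hy hxy
    rcases E.hcol x y hxy with h | ⟨h1, h2⟩ | ⟨h1, h2⟩
    · exact h
    · exact absurd ((h1 ▸ E.hp : ev M E.w x = E.c) ▸ (Finset.mem_filter.mp hx).2) hc
    · exact absurd ((h1 ▸ E.hq : ev M E.w x = E.c) ▸ (Finset.mem_filter.mp hx).2) hc
  rw [← Finset.card_image_of_injOn hinj, preim_image E Z hZr]

/-! ### Reachability of all admissible pairs -/

lemma image_append (S : Finset Q) (u v : List A) :
    S.image (ev M (u ++ v)) = (S.image (ev M u)).image (ev M v) := by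
  rw [Finset.image_image, ev_append]

lemma reach (hT : SetTrans M) (E0 : Elem M) (S : Finset Q) :
    ∀ X Y : Finset Q, Disjoint X Y → X.card ≤ S.card → Y.card ≤ Sᶜ.card →
      (S.Nonempty → X.Nonempty) → (Sᶜ.Nonempty → Y.Nonempty) →
      ∃ w, S.image (ev M w) = X ∧ Sᶜ.image (ev M w) = Y := by
  suffices h : ∀ d, ∀ X Y : Finset Q, Fintype.card Q - (X.card + Y.card) = d →
      Disjoint X Y → X.card ≤ S.card → Y.card ≤ Sᶜ.card →
      (S.Nonempty → X.Nonempty) → (Sᶜ.Nonempty → Y.Nonempty) →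
      ∃ w, S.image (ev M w) = X ∧ Sᶜ.image (ev M w) = Y by
    intro X Y h1 h2 h3 h4 h5
    exact h _ X Y rfl h1 h2 h3 h4 h5
  intro d
  induction d using Nat.strong_induction_on with
  | _ d ih =>
    intro X Y hd hdisj hXc hYc hXne hYne
    have hsum_le : X.card + Y.card ≤ Fintype.card Q := by
      rw [← Finset.card_union_of_disjoint hdisj]
      exact Finset.card_le_univ _
    have hScompl : S.card + Sᶜ.card = Fintype.card Q := Finset.card_add_card_compl S
    by_cases hd0 : d = 0
    · -- base case : a partition
      subst hd0
      have hXS : X.card = S.card := by omega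
      have hYS : Y.card = Sᶜ.card := by omega
      have hYXc : Y = Xᶜ := by
        apply Finset.eq_of_subset_of_card_le
        · intro y hy
          exact Finset.mem_compl.mpr (fun hyX => Finset.disjoint_left.mp hdisj hyX hy)
        · rw [Finset.card_compl, hXS, hYS, Finset.card_compl]
      by_cases hS0 : S = ∅
      · subst hS0
        have hX0 : X = ∅ := Finset.card_eq_zero.mp (by rw [hXS, Finset.card_empty])
        refine ⟨[], ?_, ?_⟩
        · simp [hX0]
        · rw [ev_nil, Finset.image_id, hYXc, hX0]
      · obtain ⟨v, hv, him⟩ := hT S X (Finset.nonempty_of_ne_empty hS0) hXS.symm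
        refine ⟨v, him, ?_⟩
        have hsub : Sᶜ.image (ev M v) ⊆ Xᶜ := by
          intro z hz
          obtain ⟨u, hu, rfl⟩ := Finset.mem_image.mp hz
          refine Finset.mem_compl.mpr ?_
          intro hzX
          rw [← him] at hzX
          obtain ⟨u', hu', huu⟩ := Finset.mem_image.mp hzX
          exact Finset.mem_compl.mp hu (hv.1 huu ▸ hu')
        have hcard : Xᶜ.card ≤ (Sᶜ.image (ev M v)).card := by
          rw [Finset.card_image_of_injective _ hv.1, Finset.card_compl, Finset.card_compl]
          omega
        rw [hYXc]
        exact Finset.eq_of_subset_of_card_le hsub hcard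
    · -- inductive step
      have hsum_lt : X.card + Y.card < Fintype.card Q := by omega
      have hcompl_ne : ∃ e, e ∉ X ∪ Y := by
        by_contra hcc
        push_neg at hcc
        have : X ∪ Y = Finset.univ := Finset.eq_univ_iff_forall.mpr hcc
        have := Finset.card_union_of_disjoint hdisj ▸ congrArg Finset.card this
        rw [Finset.card_univ] at this
        omega
      obtain ⟨e, he⟩ := hcompl_ne
      have heX : e ∉ X := fun h => he (Finset.mem_union_left _ h)
      have heY : e ∉ Y := fun h => he (Finset.mem_union_right _ h)
      by_cases hks : X.card < S.card
      · -- grow X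
        have hSne : S.Nonempty := Finset.card_pos.mp (by omega)
        obtain ⟨x, hx⟩ := hXne hSne
        obtain ⟨E, hEr, hEc⟩ := avail_all hT E0 e x (fun h => heX (h ▸ hx))
        have hrX : E.r ∉ X := hEr ▸ heX
        have hrY : E.r ∉ Y := hEr ▸ heY
        have hcX : E.c ∈ X := hEc ▸ hx
        have hcY : E.c ∉ Y := fun h => Finset.disjoint_left.mp hdisj hcX h
        have hdisj' : Disjoint (preim E X) (preim E Y) := by
          rw [Finset.disjoint_left]
          intro z hz hz'
          exact Finset.disjoint_left.mp hdisj (Finset.mem_filter.mp hz).2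
            (Finset.mem_filter.mp hz').2
        have hPX := preim_card_mem E X hrX hcX
        have hPY := preim_card_notmem E Y hrY hcY
        obtain ⟨w', hw1, hw2⟩ := ih (Fintype.card Q - ((preim E X).card + (preim E Y).card))
          (by omega) (preim E X) (preim E Y) rfl hdisj' (by omega) (by omega)
          (fun _ => ⟨E.q, Finset.mem_filter.mpr ⟨Finset.mem_univ _, E.hq ▸ hcX⟩⟩)
          (fun hSc => by
            obtain ⟨y, hy⟩ := hYne hSc
            have hyr : y ≠ E.r := fun h => hrY (h ▸ hy)
            obtain ⟨u, hu⟩ := E.mem_range hyr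
            exact ⟨u, Finset.mem_filter.mpr ⟨Finset.mem_univ _, hu ▸ hy⟩⟩)
        refine ⟨w' ++ E.w, ?_, ?_⟩
        · rw [image_append, hw1, preim_image E X hrX]
        · rw [image_append, hw2, preim_image E Y hrY]
      · -- grow Y
        have hXS : X.card = S.card := le_antisymm hXc (not_lt.mp hks)
        have hls : Y.card < Sᶜ.card := by omega
        have hScne : Sᶜ.Nonempty := Finset.card_pos.mp (by omega)
        obtain ⟨y, hy⟩ := hYne hScne
        obtain ⟨E, hEr, hEc⟩ := avail_all hT E0 e y (fun h => heY (h ▸ hy))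
        have hrX : E.r ∉ X := hEr ▸ heX
        have hrY : E.r ∉ Y := hEr ▸ heY
        have hcY : E.c ∈ Y := hEc ▸ hy
        have hcX : E.c ∉ X := fun h => Finset.disjoint_left.mp hdisj h hcY
        have hdisj' : Disjoint (preim E X) (preim E Y) := by
          rw [Finset.disjoint_left]
          intro z hz hz'
          exact Finset.disjoint_left.mp hdisj (Finset.mem_filter.mp hz).2
            (Finset.mem_filter.mp hz').2
        have hPX := preim_card_notmem E X hrX hcX
        have hPY := preim_card_mem E Y hrY hcY
        obtain ⟨w', hw1, hw2⟩ := ih (Fintype.card Q - ((preim E X).card + (preim E Y).card))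
          (by omega) (preim E X) (preim E Y) rfl hdisj' (by omega) (by omega)
          (fun hSc => by
            obtain ⟨x, hx⟩ := hXne hSc
            have hxr : x ≠ E.r := fun h => hrX (h ▸ hx)
            obtain ⟨u, hu⟩ := E.mem_range hxr
            exact ⟨u, Finset.mem_filter.mpr ⟨Finset.mem_univ _, hu ▸ hx⟩⟩)
          (fun _ => ⟨E.q, Finset.mem_filter.mpr ⟨Finset.mem_univ _, E.hq ▸ hcY⟩⟩)
        refine ⟨w' ++ E.w, ?_, ?_⟩
        · rw [image_append, hw1, preim_image E X hrX]
        · rw [image_append, hw2, preim_image E Y hrY]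

/-! ### Counting admissible pairs -/

variable (Q)

/-- The set of admissible disjoint pairs for an atom of size `s`. -/
def pairsSet (s : ℕ) : Finset (Finset Q × Finset Q) :=
  Finset.univ.filter (fun P => Disjoint P.1 P.2 ∧ 1 ≤ P.1.card ∧ P.1.card ≤ s ∧
    1 ≤ P.2.card ∧ P.2.card ≤ Fintype.card Q - s)

variable {Q}

lemma card_pair_fiber (k l : ℕ) :
    (Finset.univ.filter (fun P : Finset Q × Finset Q =>
        Disjoint P.1 P.2 ∧ P.1.card = k ∧ P.2.card = l)).card =
      Nat.choose (Fintype.card Q) k * Nat.choose (Fintype.card Q - k) l := by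
  set F := Finset.univ.filter (fun P : Finset Q × Finset Q =>
    Disjoint P.1 P.2 ∧ P.1.card = k ∧ P.2.card = l) with hF
  have hmem : ∀ P ∈ F, P.1 ∈ Finset.powersetCard k (Finset.univ : Finset Q) := by
    intro P hP
    have := (Finset.mem_filter.mp hP).2
    exact Finset.mem_powersetCard.mpr ⟨Finset.subset_univ _, this.2.1⟩
  rw [Finset.card_eq_sum_card_fiberwise hmem]
  have hfib : ∀ X ∈ Finset.powersetCard k (Finset.univ : Finset Q),
      (F.filter (fun P => P.1 = X)).card = Nat.choose (Fintype.card Q - k) l := by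
    intro X hX
    have hXcard : X.card = k := (Finset.mem_powersetCard.mp hX).2
    have heq : F.filter (fun P => P.1 = X) =
        (Finset.powersetCard l Xᶜ).image (fun Y => (X, Y)) := by
      ext P
      simp only [Finset.mem_filter, Finset.mem_image, Finset.mem_powersetCard, hF,
        Finset.mem_univ, true_and]
      constructor
      · rintro ⟨⟨hdisj, hk, hl⟩, h1⟩
        refine ⟨P.2, ⟨?_, hl⟩, ?_⟩
        · intro y hy
          exact Finset.mem_compl.mpr (fun hyX =>
            Finset.disjoint_left.mp hdisj (h1 ▸ hyX) hy)
        · rw [← h1]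
      · rintro ⟨Y, ⟨hYsub, hYl⟩, rfl⟩
        refine ⟨⟨?_, hXcard, hYl⟩, rfl⟩
        rw [Finset.disjoint_left]
        intro a haX haY
        exact Finset.mem_compl.mp (hYsub haY) haX
    rw [heq, Finset.card_image_of_injective _ (fun Y Y' h => (Prod.ext_iff.mp h).2),
      Finset.card_powersetCard, Finset.card_compl, hXcard]
  rw [Finset.sum_congr rfl hfib, Finset.sum_const, Finset.card_powersetCard,
    Finset.card_univ, smul_eq_mul]

lemma card_pairsSet (s : ℕ) :
    (pairsSet Q s).card =
      ∑ k ∈ Finset.Icc 1 s, ∑ l ∈ Finset.Icc 1 (Fintype.card Q - s),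
        Nat.choose (Fintype.card Q) k * Nat.choose (Fintype.card Q - k) l := by
  have hmem : ∀ P ∈ pairsSet Q s, (P.1.card, P.2.card) ∈
      Finset.Icc 1 s ×ˢ Finset.Icc 1 (Fintype.card Q - s) := by
    intro P hP
    have := (Finset.mem_filter.mp hP).2
    exact Finset.mem_product.mpr ⟨Finset.mem_Icc.mpr ⟨this.2.1, this.2.2.1⟩,
      Finset.mem_Icc.mpr ⟨this.2.2.2.1, this.2.2.2.2⟩⟩
  rw [Finset.card_eq_sum_card_fiberwise hmem, Finset.sum_product]
  apply Finset.sum_congr rfl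
  intro k hk
  apply Finset.sum_congr rfl
  intro l hl
  rw [← card_pair_fiber k l]
  congr 1
  ext P
  simp only [Finset.mem_filter, pairsSet, Finset.mem_univ, true_and, Prod.mk.injEq]
  rw [Finset.mem_Icc] at hk hl
  constructor
  · rintro ⟨⟨hdisj, h1, h2, h3, h4⟩, h5, h6⟩
    exact ⟨hdisj, h5, h6⟩
  · rintro ⟨hdisj, h5, h6⟩
    exact ⟨⟨hdisj, by omega, by omega, by omega, by omega⟩, h5, h6⟩

lemma card_nonempty_finsets :
    (Finset.univ.filter (fun Z : Finset Q => Z ≠ ∅)).card =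
      2 ^ (Fintype.card Q) - 1 := by
  have h : Finset.univ.filter (fun Z : Finset Q => Z ≠ ∅) =
      (Finset.univ : Finset (Finset Q)).erase ∅ := by
    ext Z
    simp [Finset.mem_erase, and_comm]
  rw [h, Finset.card_erase_of_mem (Finset.mem_univ _), Finset.card_univ,
    Fintype.card_finset]

/-! ### The forward direction: (3) implies maximal atomicity -/

lemma range_eq_image_univ (f : Q → Q) :
    Set.range f = ↑(Finset.univ.image f) := by
  ext z
  simp

theorem maximal_of_trans (hmin : IsMinimal M) (hn3 : 3 ≤ Fintype.card Q)
    (hT : SetTrans M) (E0 : Elem M) (S : Finset Q) :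
    (atom M (↑S)).Nonempty ∧
      stateComplexity (atom M (↑S)) = Psi (Fintype.card Q) S.card := by
  haveI : Nonempty Q := ⟨E0.p⟩
  have h2 : 2 ≤ Fintype.card Q := by omega
  set n := Fintype.card Q with hn
  constructor
  · rw [atom_eq_DL]
    exact DL_nonempty hT E0 hmin h2 S Sᶜ disjoint_compl_right
  rw [stateComplexity_eq_ncard_range, range_quotLang_atom]
  set DD : Finset Q × Finset Q → Set (List A) := fun P => DL M P.1 P.2 with hDD
  by_cases hS0 : S = ∅
  · -- s = 0
    subst hS0
    have hZrange : Set.range (pairOf M (∅ : Finset Q)) =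
        (fun Z : Finset Q => ((∅ : Finset Q), Z)) ''
          ↑(Finset.univ.filter (fun Z : Finset Q => Z ≠ ∅)) := by
      apply Set.eq_of_subset_of_subset
      · rintro P ⟨x, rfl⟩
        refine ⟨(∅ : Finset Q)ᶜ.image (ev M x), ?_, ?_⟩
        · simp only [Finset.coe_filter, Set.mem_setOf_eq, Finset.mem_univ, true_and]
          rw [← Finset.nonempty_iff_ne_empty]
          exact ⟨ev M x (Classical.arbitrary Q),
            Finset.mem_image_of_mem _ (by simp)⟩
        · simp [pairOf]
      · rintro P ⟨Z, hZ, rfl⟩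
        simp only [Finset.coe_filter, Set.mem_setOf_eq, Finset.mem_univ, true_and] at hZ
        obtain ⟨w, hw1, hw2⟩ := reach hT E0 (∅ : Finset Q) ∅ Z
          (Finset.disjoint_empty_left Z) (by simp) (by simp [Finset.card_le_univ])
          (fun h => absurd h (by simp)) (fun _ => Finset.nonempty_of_ne_empty hZ)
        exact ⟨w, by rw [pairOf, hw1, hw2]⟩
    rw [hZrange, ← Set.image_comp]
    have hinj : Set.InjOn (DD ∘ fun Z : Finset Q => ((∅ : Finset Q), Z))
        ↑(Finset.univ.filter (fun Z : Finset Q => Z ≠ ∅)) := by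
      intro Z hZ Z' hZ' hDL
      exact (DL_inj hT E0 hmin h2 (Finset.disjoint_empty_left Z)
        (Finset.disjoint_empty_left Z') hDL).2
    rw [Set.ncard_image_of_injOn hinj, Set.ncard_coe_finset, card_nonempty_finsets]
    have : Finset.card (∅ : Finset Q) = 0 := rfl
    rw [this, Psi, if_pos (Or.inl rfl)]
  · by_cases hSu : S = Finset.univ
    · -- s = n
      subst hSu
      have hZrange : Set.range (pairOf M (Finset.univ : Finset Q)) =
          (fun Z : Finset Q => (Z, (∅ : Finset Q))) ''
            ↑(Finset.univ.filter (fun Z : Finset Q => Z ≠ ∅)) := by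
        apply Set.eq_of_subset_of_subset
        · rintro P ⟨x, rfl⟩
          refine ⟨(Finset.univ : Finset Q).image (ev M x), ?_, ?_⟩
          · simp only [Finset.coe_filter, Set.mem_setOf_eq, Finset.mem_univ, true_and]
            rw [← Finset.nonempty_iff_ne_empty]
            exact ⟨ev M x (Classical.arbitrary Q),
              Finset.mem_image_of_mem _ (by simp)⟩
          · simp [pairOf]
        · rintro P ⟨Z, hZ, rfl⟩
          simp only [Finset.coe_filter, Set.mem_setOf_eq, Finset.mem_univ, true_and] at hZ
          obtain ⟨w, hw1, hw2⟩ := reach hT E0 (Finset.univ : Finset Q) Z ∅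
            (Finset.disjoint_empty_right Z) (Finset.card_le_univ Z) (by simp)
            (fun _ => Finset.nonempty_of_ne_empty hZ)
            (fun h => absurd h (by simp))
          exact ⟨w, by rw [pairOf, hw1, hw2]⟩
      rw [hZrange, ← Set.image_comp]
      have hinj : Set.InjOn (DD ∘ fun Z : Finset Q => (Z, (∅ : Finset Q)))
          ↑(Finset.univ.filter (fun Z : Finset Q => Z ≠ ∅)) := by
        intro Z hZ Z' hZ' hDL
        exact (DL_inj hT E0 hmin h2 (Finset.disjoint_empty_right Z)
          (Finset.disjoint_empty_right Z') hDL).1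
      rw [Set.ncard_image_of_injOn hinj, Set.ncard_coe_finset, card_nonempty_finsets]
      rw [Finset.card_univ, Psi, if_pos (Or.inr rfl)]
    · -- 0 < s < n
      have hSne : S.Nonempty := Finset.nonempty_of_ne_empty hS0
      have hScne : Sᶜ.Nonempty := by
        obtain ⟨b, hb⟩ : ∃ b, b ∉ S := by
          by_contra hbb
          push_neg at hbb
          exact hSu (Finset.eq_univ_iff_forall.mpr hbb)
        exact ⟨b, Finset.mem_compl.mpr hb⟩
      have hs1 : 1 ≤ S.card := Finset.card_pos.mpr hSne
      have hcompl := Finset.card_add_card_compl S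
      have hsn : S.card ≤ n - 1 := by
        have h1 : 1 ≤ Sᶜ.card := Finset.card_pos.mpr hScne
        omega
      have hrange : DD '' Set.range (pairOf M S) =
          DD '' ↑(pairsSet Q S.card) ∪ {∅} := by
        apply Set.eq_of_subset_of_subset
        · rintro L ⟨P, ⟨x, rfl⟩, rfl⟩
          by_cases hdisj : Disjoint (pairOf M S x).1 (pairOf M S x).2
          · left
            refine ⟨pairOf M S x, ?_, rfl⟩
            refine Finset.mem_coe.mpr (Finset.mem_filter.mpr
              ⟨Finset.mem_univ _, hdisj, ?_, ?_, ?_, ?_⟩)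
            · exact Finset.card_pos.mpr (hSne.image _)
            · exact Finset.card_image_le
            · exact Finset.card_pos.mpr (hScne.image _)
            · calc (pairOf M S x).2.card ≤ Sᶜ.card := Finset.card_image_le
                _ = n - S.card := by rw [Finset.card_compl]
          · right
            simp only [Set.mem_singleton_iff]
            exact DL_empty_of_not_disjoint hdisj
        · rintro L (⟨P, hP, rfl⟩ | hL)
          · obtain ⟨hdisj, h1, h2', h3, h4⟩ :=
              (Finset.mem_filter.mp (Finset.mem_coe.mp hP)).2
            obtain ⟨w, hw1, hw2⟩ := reach hT E0 S P.1 P.2 hdisj h2'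
              (by rw [Finset.card_compl]; exact h4)
              (fun _ => Finset.card_pos.mp h1) (fun _ => Finset.card_pos.mp h3)
            have hpw : pairOf M S w = P := Prod.ext hw1 hw2
            exact ⟨pairOf M S w, ⟨w, rfl⟩, by rw [hpw]⟩
          · obtain ⟨a, ha⟩ := hSne
            obtain ⟨b, hb⟩ := hScne
            have hab : a ≠ b := fun h => (Finset.mem_compl.mp hb) (h ▸ ha)
            obtain ⟨w, hwab, -⟩ := exists_merge hT E0 hab
            refine ⟨pairOf M S w, ⟨w, rfl⟩, ?_⟩
            rw [Set.mem_singleton_iff.mp hL]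
            apply DL_empty_of_not_disjoint
            rw [Finset.not_disjoint_iff]
            refine ⟨ev M w a, Finset.mem_image_of_mem _ ha, ?_⟩
            rw [hwab]
            exact Finset.mem_image_of_mem _ hb
      rw [hrange]
      have hinj : Set.InjOn DD ↑(pairsSet Q S.card) := by
        intro P hP P' hP' hPP
        have d1 := (Finset.mem_filter.mp (Finset.mem_coe.mp hP)).2.1
        have d2 := (Finset.mem_filter.mp (Finset.mem_coe.mp hP')).2.1
        obtain ⟨e1, e2⟩ := DL_inj hT E0 hmin h2 d1 d2 hPP
        exact Prod.ext e1 e2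
      have hfin1 : (DD '' ↑(pairsSet Q S.card)).Finite :=
        Set.Finite.image _ (Set.toFinite _)
      have hdisj2 : Disjoint (DD '' ↑(pairsSet Q S.card)) ({∅} : Set (Set (List A))) := by
        rw [Set.disjoint_singleton_right]
        rintro ⟨P, hP, hP0⟩
        have d1 := (Finset.mem_filter.mp (Finset.mem_coe.mp hP)).2.1
        have hne : (DD P).Nonempty := DL_nonempty hT E0 hmin h2 P.1 P.2 d1
        rw [hP0] at hne
        exact Set.not_nonempty_empty hne
      rw [Set.ncard_union_eq hdisj2 hfin1 (Set.finite_singleton _),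
        Set.ncard_image_of_injOn hinj, Set.ncard_coe_finset, Set.ncard_singleton,
        card_pairsSet]
      rw [← hn, Psi, if_neg ?_]
      · omega
      · push_neg
        constructor
        · omega
        · omega

/-! ### The converse direction: maximal complexity forces the conditions -/

lemma pairs_reachable_of_max (hn3 : 3 ≤ Fintype.card Q) (S : Finset Q) (hs1 : 1 ≤ S.card)
    (hs2 : S.card + 1 ≤ Fintype.card Q)
    (hcx : stateComplexity (atom M ↑S) = Psi (Fintype.card Q) S.card) :
    ∀ P ∈ pairsSet Q S.card, ∃ x, pairOf M S x = P := by
  set n := Fintype.card Q with hn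
  set DD : Finset Q × Finset Q → Set (List A) := fun P => DL M P.1 P.2 with hDD
  set Rd : Set (Finset Q × Finset Q) :=
    {P | P ∈ Set.range (pairOf M S) ∧ Disjoint P.1 P.2} with hRd
  have hSne : S.Nonempty := Finset.card_pos.mp hs1
  have hScne : Sᶜ.Nonempty := by
    rw [← Finset.card_pos, Finset.card_compl]
    omega
  have hsub : Rd ⊆ ↑(pairsSet Q S.card) := by
    rintro P ⟨⟨x, rfl⟩, hdisj⟩
    refine Finset.mem_coe.mpr (Finset.mem_filter.mpr ⟨Finset.mem_univ _, hdisj,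
      Finset.card_pos.mpr (hSne.image _), Finset.card_image_le,
      Finset.card_pos.mpr (hScne.image _), ?_⟩)
    calc (pairOf M S x).2.card ≤ Sᶜ.card := Finset.card_image_le
      _ = n - S.card := by rw [Finset.card_compl]
  have hcx2 : (DD '' Set.range (pairOf M S)).ncard = Psi n S.card := by
    rw [← hcx, stateComplexity_eq_ncard_range, range_quotLang_atom]
  have himgsub : DD '' Set.range (pairOf M S) ⊆ DD '' Rd ∪ {∅} := by
    rintro L ⟨P, hP, rfl⟩
    by_cases hdisj : Disjoint P.1 P.2
    · exact Or.inl ⟨P, ⟨hP, hdisj⟩, rfl⟩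
    · exact Or.inr (DL_empty_of_not_disjoint hdisj)
  have hfinRd : Rd.Finite := Set.toFinite _
  have h1 : (DD '' Set.range (pairOf M S)).ncard ≤ (DD '' Rd).ncard + 1 := by
    calc (DD '' Set.range (pairOf M S)).ncard
        ≤ (DD '' Rd ∪ {∅}).ncard := Set.ncard_le_ncard himgsub
          ((Set.Finite.image _ hfinRd).union (Set.finite_singleton _))
      _ ≤ (DD '' Rd).ncard + ({∅} : Set (Set (List A))).ncard := Set.ncard_union_le _ _
      _ = (DD '' Rd).ncard + 1 := by rw [Set.ncard_singleton]
  have h2 : (DD '' Rd).ncard ≤ Rd.ncard := Set.ncard_image_le hfinRd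
  have h3 : Rd.ncard ≤ (pairsSet Q S.card).card := by
    rw [← Set.ncard_coe_finset]
    exact Set.ncard_le_ncard hsub (Set.toFinite _)
  have hPsi : Psi n S.card = (pairsSet Q S.card).card + 1 := by
    rw [Psi, if_neg (by push_neg; constructor <;> omega), card_pairsSet, ← hn]
    omega
  have hRdcard : (pairsSet Q S.card).card ≤ Rd.ncard := by omega
  have heq : Rd = ↑(pairsSet Q S.card) := by
    apply Set.eq_of_subset_of_ncard_le hsub ?_ (Set.toFinite _)
    rw [Set.ncard_coe_finset]
    exact hRdcard
  intro P hP
  have hPRd : P ∈ Rd := by rw [heq]; exact Finset.mem_coe.mpr hP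
  exact hPRd.1

lemma perm_to_of_max (hn3 : 3 ≤ Fintype.card Q) (S : Finset Q) (hs1 : 1 ≤ S.card)
    (hs2 : S.card + 1 ≤ Fintype.card Q)
    (hcx : stateComplexity (atom M ↑S) = Psi (Fintype.card Q) S.card) :
    ∀ X : Finset Q, X.card = S.card → ∃ v, Bijective (ev M v) ∧ S.image (ev M v) = X := by
  intro X hX
  have hP : (X, Xᶜ) ∈ pairsSet Q S.card := by
    rw [pairsSet, Finset.mem_filter]
    refine ⟨Finset.mem_univ _, disjoint_compl_right, ?_, ?_, ?_, ?_⟩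
    · show 1 ≤ X.card; omega
    · show X.card ≤ S.card; omega
    · show 1 ≤ Xᶜ.card; rw [Finset.card_compl]; omega
    · show Xᶜ.card ≤ Fintype.card Q - S.card; rw [Finset.card_compl, hX]
  obtain ⟨x, hx⟩ := pairs_reachable_of_max hn3 S hs1 hs2 hcx (X, Xᶜ) hP
  have h1 : S.image (ev M x) = X := congrArg Prod.fst hx
  have h2 : Sᶜ.image (ev M x) = Xᶜ := congrArg Prod.snd hx
  have hsurj : Surjective (ev M x) := by
    intro z
    by_cases hz : z ∈ X
    · rw [← h1] at hz
      obtain ⟨u, -, hu⟩ := Finset.mem_image.mp hz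
      exact ⟨u, hu⟩
    · have hz' : z ∈ Xᶜ := Finset.mem_compl.mpr hz
      rw [← h2] at hz'
      obtain ⟨u, -, hu⟩ := Finset.mem_image.mp hz'
      exact ⟨u, hu⟩
  exact ⟨x, ⟨Finite.injective_iff_surjective.mpr hsurj, hsurj⟩, h1⟩

lemma homog_of_max (hn3 : 3 ≤ Fintype.card Q) (S : Finset Q) (hs1 : 1 ≤ S.card)
    (hs2 : S.card + 1 ≤ Fintype.card Q)
    (hcx : stateComplexity (atom M ↑S) = Psi (Fintype.card Q) S.card) :
    ∀ X Y : Finset Q, X.card = S.card → Y.card = S.card →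
      ∃ v, Bijective (ev M v) ∧ X.image (ev M v) = Y := by
  intro X Y hX hY
  obtain ⟨vx, hvx, hx⟩ := perm_to_of_max hn3 S hs1 hs2 hcx X hX
  obtain ⟨vy, hvy, hy⟩ := perm_to_of_max hn3 S hs1 hs2 hcx Y hY
  obtain ⟨vi, hvi, hleft, hright⟩ := exists_inv M hvx
  refine ⟨vi ++ vy, ?_, ?_⟩
  · rw [ev_append]
    exact hvy.comp hvi
  · rw [image_append, ← hx, Finset.image_image, Finset.image_image, Function.comp_assoc,
      hleft, Function.comp_id, hy]

lemma rank_word_of_max (hn3 : 3 ≤ Fintype.card Q) (S : Finset Q) (hs1 : 1 ≤ S.card)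
    (hs2 : S.card + 1 ≤ Fintype.card Q)
    (hcx : stateComplexity (atom M ↑S) = Psi (Fintype.card Q) S.card) :
    ∃ x : List A, x ≠ [] ∧ (Set.range (ev M x)).ncard = Fintype.card Q - 1 := by
  set n := Fintype.card Q with hn
  -- choose an admissible pair of total size `n - 1`
  obtain ⟨X, Y, hP, hXY⟩ : ∃ X Y : Finset Q, (X, Y) ∈ pairsSet Q S.card ∧
      X.card + Y.card = n - 1 := by
    by_cases hcase : S.card + 2 ≤ n
    · obtain ⟨Y, hYsub, hYcard⟩ := Finset.exists_subset_card_eq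
        (show n - 1 - S.card ≤ Sᶜ.card by rw [Finset.card_compl]; omega)
      refine ⟨S, Y, ?_, by omega⟩
      rw [pairsSet, Finset.mem_filter]
      refine ⟨Finset.mem_univ _, ?_, ?_, ?_, ?_, ?_⟩
      · rw [Finset.disjoint_left]
        intro a haS haY
        exact Finset.mem_compl.mp (hYsub haY) haS
      · show 1 ≤ S.card; omega
      · show S.card ≤ S.card; exact le_refl _
      · show 1 ≤ Y.card; omega
      · show Y.card ≤ n - S.card; omega
    · -- S.card = n - 1
      obtain ⟨X, hXsub, hXcard⟩ := Finset.exists_subset_card_eq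
        (show n - 2 ≤ S.card by omega)
      have hSc : Sᶜ.card = n - S.card := Finset.card_compl S
      refine ⟨X, Sᶜ, ?_, by omega⟩
      rw [pairsSet, Finset.mem_filter]
      refine ⟨Finset.mem_univ _, ?_, ?_, ?_, ?_, ?_⟩
      · rw [Finset.disjoint_left]
        intro a haX haS
        exact Finset.mem_compl.mp haS (hXsub haX)
      · show 1 ≤ X.card; omega
      · show X.card ≤ S.card; omega
      · show 1 ≤ Sᶜ.card; omega
      · show Sᶜ.card ≤ n - S.card; omega
  obtain ⟨x, hx⟩ := pairs_reachable_of_max hn3 S hs1 hs2 hcx (X, Y) hP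
  have h1 : S.image (ev M x) = X := congrArg Prod.fst hx
  have h2 : Sᶜ.image (ev M x) = Y := congrArg Prod.snd hx
  have hdisj := (Finset.mem_filter.mp hP).2.1
  have hrank : (Set.range (ev M x)).ncard = n - 1 := by
    rw [range_eq_image_univ, Set.ncard_coe_finset]
    have huniv : (Finset.univ : Finset Q) = S ∪ Sᶜ := by
      rw [Finset.union_compl]
    rw [huniv, Finset.image_union, h1, h2, Finset.card_union_of_disjoint hdisj, hXY]
  refine ⟨x, ?_, hrank⟩
  rintro rfl
  rw [ev_nil, Set.range_id, Set.ncard_univ, Nat.card_eq_fintype_card] at hrank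
  omega

lemma atom_preim_nonempty (S : Finset Q) (hne : (atom M ↑S).Nonempty) (x : List A) :
    (atom M ↑(Finset.univ.filter (fun q => ev M x q ∈ S))).Nonempty := by
  obtain ⟨v, hv⟩ := hne
  refine ⟨x ++ v, ?_⟩
  intro q
  have heval : M.evalFrom q (x ++ v) = M.evalFrom (ev M x q) v :=
    DFA.evalFrom_of_append M q x v
  rw [heval]
  have hmem : (ev M x q ∈ (↑S : Set Q)) ↔ ev M x q ∈ S := Iff.rfl
  constructor
  · intro hacc
    have := (hv (ev M x q)).mp hacc
    simp only [Finset.coe_filter, Set.mem_setOf_eq, Finset.mem_univ, true_and]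
    exact hmem.mp this
  · intro hq
    simp only [Finset.coe_filter, Set.mem_setOf_eq, Finset.mem_univ, true_and] at hq
    exact (hv (ev M x q)).mpr (hmem.mpr hq)

/-! ### Propagating nonempty atoms across sizes -/

lemma good_shift (hn3 : 3 ≤ Fintype.card Q) (E0 : Elem M) {k : ℕ} (hk1 : 1 ≤ k)
    (hk2 : k + 1 ≤ Fintype.card Q) (S : Finset Q) (hS : S.card = k)
    (hne : (atom M ↑S).Nonempty)
    (hcx : stateComplexity (atom M ↑S) = Psi (Fintype.card Q) S.card) :
    ∀ S' : Finset Q, S'.card = k → (atom M ↑(preim E0 S')).Nonempty := by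
  intro S' hS'
  obtain ⟨v, hv, hvim⟩ := homog_of_max hn3 S (by omega) (by omega) hcx S' S
    (by omega) rfl
  have hmem : ∀ u, ev M v u ∈ S ↔ u ∈ S' := by
    intro u
    constructor
    · intro hu
      rw [← hvim] at hu
      obtain ⟨u', hu', huu⟩ := Finset.mem_image.mp hu
      exact hv.1 huu ▸ hu'
    · intro hu
      rw [← hvim]
      exact Finset.mem_image_of_mem _ hu
  have heq : Finset.univ.filter (fun q => ev M (E0.w ++ v) q ∈ S) = preim E0 S' := by
    ext q
    simp only [Finset.mem_filter, Finset.mem_univ, true_and, preim]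
    rw [ev_append]
    exact hmem (ev M E0.w q)
  have := atom_preim_nonempty S hne (E0.w ++ v)
  rwa [heq] at this

lemma good_up (hn3 : 3 ≤ Fintype.card Q) (E0 : Elem M) {k : ℕ} (hk1 : 1 ≤ k)
    (hk2 : k + 1 ≤ Fintype.card Q) (S : Finset Q) (hS : S.card = k)
    (hne : (atom M ↑S).Nonempty)
    (hcx : stateComplexity (atom M ↑S) = Psi (Fintype.card Q) S.card) :
    ∃ T : Finset Q, T.card = k + 1 ∧ (atom M ↑T).Nonempty := by
  -- a set of size k containing `c` avoiding `r`
  obtain ⟨T₀, hT₀sub, hT₀card⟩ := Finset.exists_subset_card_eq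
    (show k - 1 ≤ ((Finset.univ : Finset Q) \ {E0.c, E0.r}).card by
      rw [Finset.card_sdiff_of_subset (Finset.subset_univ _), Finset.card_univ,
        Finset.card_pair E0.c_ne_r]
      omega)
  have hcT₀ : E0.c ∉ T₀ := fun h => by
    have := hT₀sub h
    simp at this
  have hrT₀ : E0.r ∉ T₀ := fun h => by
    have := hT₀sub h
    simp at this
  set S' := insert E0.c T₀ with hS'
  have hS'card : S'.card = k := by
    rw [hS', Finset.card_insert_of_notMem hcT₀, hT₀card]
    omega
  have hrS' : E0.r ∉ S' := by
    rw [hS', Finset.mem_insert]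
    push_neg
    exact ⟨fun h => E0.c_ne_r h.symm, hrT₀⟩
  have hcS' : E0.c ∈ S' := Finset.mem_insert_self _ _
  refine ⟨preim E0 S', ?_, good_shift hn3 E0 hk1 hk2 S hS hne hcx S' hS'card⟩
  rw [preim_card_mem E0 S' hrS' hcS', hS'card]

lemma good_down (hn3 : 3 ≤ Fintype.card Q) (E0 : Elem M) {k : ℕ} (hk1 : 2 ≤ k)
    (hk2 : k + 1 ≤ Fintype.card Q) (S : Finset Q) (hS : S.card = k)
    (hne : (atom M ↑S).Nonempty)
    (hcx : stateComplexity (atom M ↑S) = Psi (Fintype.card Q) S.card) :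
    ∃ T : Finset Q, T.card = k - 1 ∧ (atom M ↑T).Nonempty := by
  obtain ⟨T₀, hT₀sub, hT₀card⟩ := Finset.exists_subset_card_eq
    (show k - 1 ≤ ((Finset.univ : Finset Q) \ {E0.c, E0.r}).card by
      rw [Finset.card_sdiff_of_subset (Finset.subset_univ _), Finset.card_univ,
        Finset.card_pair E0.c_ne_r]
      omega)
  have hcT₀ : E0.c ∉ T₀ := fun h => by
    have := hT₀sub h
    simp at this
  have hrT₀ : E0.r ∉ T₀ := fun h => by
    have := hT₀sub h
    simp at this
  set S' := insert E0.r T₀ with hS'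
  have hS'card : S'.card = k := by
    rw [hS', Finset.card_insert_of_notMem hrT₀, hT₀card]
    omega
  have hpre : preim E0 S' = preim E0 T₀ := by
    ext q
    simp only [preim, Finset.mem_filter, Finset.mem_univ, true_and, hS',
      Finset.mem_insert]
    constructor
    · rintro (h | h)
      · exact absurd h (E0.ne_r q)
      · exact h
    · exact fun h => Or.inr h
  refine ⟨preim E0 S', ?_, good_shift hn3 E0 (by omega) hk2 S hS hne hcx S' hS'card⟩
  rw [hpre, preim_card_notmem E0 T₀ hrT₀ hcT₀, hT₀card]

/-- Every size in `[1, n-1]` is realized by a nonempty atom. -/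
lemma good_all (hmin : IsMinimal M) (hn3 : 3 ≤ Fintype.card Q)
    (hcxAll : ∀ S : Finset Q, (atom M ↑S).Nonempty →
      stateComplexity (atom M ↑S) = Psi (Fintype.card Q) S.card)
    (E0 : Elem M) :
    ∀ k, 1 ≤ k → k + 1 ≤ Fintype.card Q →
      ∃ S : Finset Q, S.card = k ∧ (atom M ↑S).Nonempty := by
  set n := Fintype.card Q with hn
  set F : Finset Q := M.accept.toFinset with hF
  have hFat : (atom M ↑F).Nonempty := by
    refine ⟨[], ?_⟩
    intro q
    rw [DFA.evalFrom_nil]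
    simp [hF]
  have hf1 : 1 ≤ F.card := by
    obtain ⟨⟨s, hs⟩, -⟩ := accept_both hmin (by omega)
    exact Finset.card_pos.mpr ⟨s, by simp [hF, hs]⟩
  have hf2 : F.card + 1 ≤ n := by
    obtain ⟨-, ⟨s, hs⟩⟩ := accept_both hmin (by omega)
    have : F ≠ Finset.univ := by
      intro h
      exact hs (by simpa [hF] using Finset.eq_univ_iff_forall.mp h s)
    have := Finset.card_lt_card (Finset.ssubset_univ_iff.mpr this)
    rw [Finset.card_univ] at this
    omega
  have main : ∀ j : ℕ, ∀ k, 1 ≤ k → k + 1 ≤ n →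
      ((k ≤ F.card ∧ F.card - k = j) ∨ (F.card ≤ k ∧ k - F.card = j)) →
      ∃ S : Finset Q, S.card = k ∧ (atom M ↑S).Nonempty := by
    intro j
    induction j with
    | zero =>
      intro k hk1 hk2 hj
      have : k = F.card := by omega
      exact ⟨F, this ▸ rfl, hFat⟩
    | succ j ih =>
      intro k hk1 hk2 hj
      rcases hj with ⟨hle, hj⟩ | ⟨hge, hj⟩
      · -- go down from k+1
        obtain ⟨S, hS, hSne⟩ := ih (k + 1) (by omega) (by omega) (Or.inl ⟨by omega, by omega⟩)
        obtain ⟨T, hT, hTne⟩ := good_down hn3 E0 (show 2 ≤ k + 1 by omega)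
          (show k + 1 + 1 ≤ n by omega) S hS hSne (hcxAll S hSne)
        exact ⟨T, by omega, hTne⟩
      · -- go up from k-1
        obtain ⟨S, hS, hSne⟩ := ih (k - 1) (by omega) (by omega) (Or.inr ⟨by omega, by omega⟩)
        obtain ⟨T, hT, hTne⟩ := good_up hn3 E0 (show 1 ≤ k - 1 by omega)
          (show k - 1 + 1 ≤ n by omega) S hS hSne (hcxAll S hSne)
        exact ⟨T, by omega, hTne⟩
  intro k hk1 hk2
  by_cases hk : k ≤ F.card
  · exact main (F.card - k) k hk1 hk2 (Or.inl ⟨hk, rfl⟩)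
  · exact main (k - F.card) k hk1 hk2 (Or.inr ⟨by omega, rfl⟩)

/-! ### Final assembly -/

theorem conditions_of_max (hmin : IsMinimal M) (hn3 : 3 ≤ Fintype.card Q)
    (hcxAll : ∀ S : Finset Q, (atom M ↑S).Nonempty →
      stateComplexity (atom M ↑S) = Psi (Fintype.card Q) S.card) :
    (∃ w : List A, w ≠ [] ∧ (Set.range (ev M w)).ncard = Fintype.card Q - 1) ∧
      SetTrans M := by
  set n := Fintype.card Q with hn
  set F : Finset Q := M.accept.toFinset with hF
  have hFat : (atom M ↑F).Nonempty := by
    refine ⟨[], ?_⟩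
    intro q
    rw [DFA.evalFrom_nil]
    simp [hF]
  have hf1 : 1 ≤ F.card := by
    obtain ⟨⟨s, hs⟩, -⟩ := accept_both hmin (by omega)
    exact Finset.card_pos.mpr ⟨s, by simp [hF, hs]⟩
  have hf2 : F.card + 1 ≤ n := by
    obtain ⟨-, ⟨s, hs⟩⟩ := accept_both hmin (by omega)
    have hFu : F ≠ Finset.univ := by
      intro h
      exact hs (by simpa [hF] using Finset.eq_univ_iff_forall.mp h s)
    have := Finset.card_lt_card (Finset.ssubset_univ_iff.mpr hFu)
    rw [Finset.card_univ] at this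
    omega
  obtain ⟨x, hx0, hxr⟩ := rank_word_of_max hn3 F hf1 hf2 (hcxAll F hFat)
  obtain ⟨E0, -⟩ := elem_of_rank hn3 hxr
  refine ⟨⟨x, hx0, hxr⟩, ?_⟩
  intro X Y hXne hcard
  by_cases hk : X.card + 1 ≤ n
  · have hX1 : 1 ≤ X.card := Finset.card_pos.mpr hXne
    obtain ⟨S, hS, hSne⟩ := good_all hmin hn3 hcxAll E0 X.card hX1 hk
    exact homog_of_max hn3 S (by omega) (by omega) (hcxAll S hSne) X Y
      (by omega) (by omega)
  · have hXle : X.card ≤ n := le_of_le_of_eq (Finset.card_le_univ _) Finset.card_univ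
    have hXu : X = Finset.univ := Finset.eq_univ_of_card X (by omega)
    have hYle : Y.card ≤ n := le_of_le_of_eq (Finset.card_le_univ _) Finset.card_univ
    have hYu : Y = Finset.univ := Finset.eq_univ_of_card Y (by omega)
    refine ⟨[], ?_, ?_⟩
    · rw [ev_nil]
      exact Function.bijective_id
    · rw [ev_nil, Finset.image_id, hXu, hYu]

lemma setTrans_of_statement
    (h : ∀ k : ℕ, 1 ≤ k → k ≤ Fintype.card Q → ∀ X Y : Set Q, X.ncard = k →
      Y.ncard = k → ∃ w, Bijective (ev M w) ∧ (ev M w) '' X = Y) :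
    SetTrans M := by
  intro X Y hXne hcard
  have h1 : 1 ≤ X.card := Finset.card_pos.mpr hXne
  have h2 : X.card ≤ Fintype.card Q :=
    le_of_le_of_eq (Finset.card_le_univ _) Finset.card_univ
  obtain ⟨w, hw, him⟩ := h X.card h1 h2 ↑X ↑Y (Set.ncard_coe_finset X)
    (by rw [Set.ncard_coe_finset, hcard])
  refine ⟨w, hw, ?_⟩
  apply Finset.coe_injective
  rw [Finset.coe_image, him]

lemma statement_of_setTrans (hT : SetTrans M) :
    ∀ k : ℕ, 1 ≤ k → k ≤ Fintype.card Q → ∀ X Y : Set Q, X.ncard = k →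
      Y.ncard = k → ∃ w, Bijective (ev M w) ∧ (ev M w) '' X = Y := by
  intro k hk1 hk2 X Y hX hY
  have hX' : X.toFinset.card = k := by rw [← Set.ncard_eq_toFinset_card']; exact hX
  have hY' : Y.toFinset.card = k := by rw [← Set.ncard_eq_toFinset_card']; exact hY
  obtain ⟨w, hw, him⟩ := hT X.toFinset Y.toFinset
    (Finset.card_pos.mp (by omega)) (by rw [hX', hY'])
  refine ⟨w, hw, ?_⟩
  calc (ev M w) '' X = (ev M w) '' ↑X.toFinset := by rw [Set.coe_toFinset]
    _ = ↑(X.toFinset.image (ev M w)) := by rw [Finset.coe_image]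
    _ = ↑Y.toFinset := by rw [him]
    _ = Y := Set.coe_toFinset Y

end S10
end

/-- characterization of maximally atomic languages. For a minimal
DFA `M` with `n ≥ 3` states the following are equivalent: (1) the recognized
language is maximally atomic; (2) every nonempty atom has maximal state
complexity; (3) some nonempty word induces a transformation of rank `n - 1`
and `P(M)` is set-transitive. -/
theorem statement10 {A Q : Type*} [Fintype A] [Fintype Q] (M : DFA A Q)
    (n : ℕ) (hQ : Fintype.card Q = n) (hn : 3 ≤ n) (hmin : IsMinimal M) :
    ((∀ S : Set Q, (atom M S).Nonempty ∧
        stateComplexity (atom M S) = Psi n S.ncard) ↔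
      (∀ S : Set Q, (atom M S).Nonempty →
        stateComplexity (atom M S) = Psi n S.ncard)) ∧
    ((∀ S : Set Q, (atom M S).Nonempty →
        stateComplexity (atom M S) = Psi n S.ncard) ↔
      ((∃ w : List A, w ≠ [] ∧
          (Set.range (fun q => M.evalFrom q w)).ncard = n - 1) ∧
        (∀ k : ℕ, 1 ≤ k → k ≤ n → ∀ X Y : Set Q, X.ncard = k → Y.ncard = k →
          ∃ w : List A, Function.Bijective (fun q => M.evalFrom q w) ∧
            (fun q => M.evalFrom q w) '' X = Y))) := by
  subst hQ
  classical
  -- condition (2) implies condition (3)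
  have toCond3 : (∀ S : Set Q, (atom M S).Nonempty →
        stateComplexity (atom M S) = Psi (Fintype.card Q) S.ncard) →
      ((∃ w : List A, w ≠ [] ∧
          (Set.range (fun q => M.evalFrom q w)).ncard = Fintype.card Q - 1) ∧
        (∀ k : ℕ, 1 ≤ k → k ≤ Fintype.card Q → ∀ X Y : Set Q, X.ncard = k →
          Y.ncard = k → ∃ w : List A,
            Function.Bijective (fun q => M.evalFrom q w) ∧
            (fun q => M.evalFrom q w) '' X = Y)) := by
    intro h2
    have hcxAll : ∀ S : Finset Q, (atom M ↑S).Nonempty →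
        stateComplexity (atom M ↑S) = Psi (Fintype.card Q) S.card := by
      intro S hne
      have := h2 ↑S hne
      rwa [Set.ncard_coe_finset] at this
    obtain ⟨⟨w, hw0, hwr⟩, hT⟩ := S10.conditions_of_max hmin hn hcxAll
    exact ⟨⟨w, hw0, hwr⟩, S10.statement_of_setTrans hT⟩
  -- condition (3) implies condition (1)
  have fromCond3 : ((∃ w : List A, w ≠ [] ∧
          (Set.range (fun q => M.evalFrom q w)).ncard = Fintype.card Q - 1) ∧
        (∀ k : ℕ, 1 ≤ k → k ≤ Fintype.card Q → ∀ X Y : Set Q, X.ncard = k →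
          Y.ncard = k → ∃ w : List A,
            Function.Bijective (fun q => M.evalFrom q w) ∧
            (fun q => M.evalFrom q w) '' X = Y)) →
      (∀ S : Set Q, (atom M S).Nonempty ∧
        stateComplexity (atom M S) = Psi (Fintype.card Q) S.ncard) := by
    rintro ⟨⟨w, hw0, hwr⟩, hTstat⟩ S
    have hT : S10.SetTrans M := S10.setTrans_of_statement hTstat
    obtain ⟨E0, -⟩ := S10.elem_of_rank hn hwr
    have := S10.maximal_of_trans hmin hn hT E0 S.toFinset
    rw [Set.coe_toFinset, ← Set.ncard_eq_toFinset_card'] at this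
    exact this
  constructor
  · constructor
    · intro h1 S _
      exact (h1 S).2
    · intro h2 S
      exact fromCond3 (toCond3 h2) S
  · constructor
    · exact toCond3
    · intro h3 S _
      exact (fromCond3 h3 S).2
end

section
/- Let M = (Q, Σ, δ, q₀, F) be a DFA in which every state is reachable from q₀, recognizing L = {w : q₀·w ∈ F}. Then for all words u, v ∈ Σ*: (∀ q ∈ Q, q·u ∈ F ↔ q·v ∈ F) if and only if u and v are related by the syntactic left congruence of L, i.e., ∀ z ∈ Σ*, zu ∈ L ↔ zv ∈ L. Consequently, the atoms of L are precisely the classes of the syntactic left congruence of L. -/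

theorem statement11_aux {A Q : Type*} (M : DFA A Q)
    (hreach : ∀ q : Q, ∃ w : List A, M.evalFrom M.start w = q)
    (L : Set (List A)) (hL : L = {w | M.evalFrom M.start w ∈ M.accept})
    (u v : List A) :
    (∀ q : Q, M.evalFrom q u ∈ M.accept ↔ M.evalFrom q v ∈ M.accept) ↔
      (∀ z : List A, z ++ u ∈ L ↔ z ++ v ∈ L) := by
  subst hL
  constructor
  · intro h z
    simp only [Set.mem_setOf_eq, DFA.evalFrom_of_append]
    exact h _
  · intro h q
    obtain ⟨w, hw⟩ := hreach q
    have := h w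
    simpa only [Set.mem_setOf_eq, DFA.evalFrom_of_append, hw] using this

/-- in a DFA all of whose states are reachable, two words act
equally on the states with respect to acceptance iff they are related by the
syntactic left congruence of the recognized language; consequently the atoms
are precisely the classes of the syntactic left congruence. -/
theorem statement11 {A Q : Type*} [Fintype A] [Fintype Q] (M : DFA A Q)
    (hreach : ∀ q : Q, ∃ w : List A, M.evalFrom M.start w = q)
    (L : Set (List A)) (hL : L = {w | M.evalFrom M.start w ∈ M.accept}) :
    (∀ u v : List A,
      (∀ q : Q, M.evalFrom q u ∈ M.accept ↔ M.evalFrom q v ∈ M.accept) ↔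
      (∀ z : List A, z ++ u ∈ L ↔ z ++ v ∈ L)) ∧
    (∀ u : List A,
      atom M {q | M.evalFrom q u ∈ M.accept} =
        {v | ∀ z : List A, z ++ u ∈ L ↔ z ++ v ∈ L}) := by

  refine ⟨statement11_aux M hreach L hL, fun u => ?_⟩
  ext v
  simp only [atom, Set.mem_setOf_eq]
  rw [← statement11_aux M hreach L hL u v]
  constructor
  · intro h q; exact (h q).symm
  · intro h q; exact (h q).symm
end

section
/- Let M = (Q, Σ, δ, q₀, F) be a DFA in which every state is reachable from q₀, recognizing L = {w : q₀·w ∈ F}. Then the number of subsets S ⊆ Q for which the atom A_S is nonempty equals the state complexity of the reversal language L^R = {w^R : w ∈ L} (the number of Myhill–Nerode right-congruence classes of L^R). -/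
/-- the number of nonempty atoms of a DFA all of whose states are
reachable equals the state complexity of the reversal of the recognized
language. -/
theorem statement12 {A Q : Type*} [Fintype A] [Fintype Q] (M : DFA A Q)
    (hreach : ∀ q : Q, ∃ w : List A, M.evalFrom M.start w = q)
    (L : Set (List A)) (hL : L = {w | M.evalFrom M.start w ∈ M.accept}) :
    Nat.card {S : Set Q // (atom M S).Nonempty} =
      stateComplexity (List.reverse '' L) := by
  classical
  set f : List A → Set Q := fun w => {q | M.evalFrom q w ∈ M.accept} with hf
  -- membership in the reversed language
  have hmem : ∀ w : List A, w ∈ List.reverse '' L ↔ M.evalFrom M.start w.reverse ∈ M.accept := by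
    intro w
    constructor
    · rintro ⟨v, hv, rfl⟩
      rw [List.reverse_reverse]
      rw [hL] at hv; exact hv
    · intro h
      exact ⟨w.reverse, by rw [hL]; exact h, List.reverse_reverse w⟩
  -- the key characterization of the right congruence
  have hcong : ∀ x y : List A, (rightCong (List.reverse '' L)).r x y ↔
      f x.reverse = f y.reverse := by
    intro x y
    constructor
    · intro h
      ext q
      obtain ⟨w, hw⟩ := hreach q
      have := h w.reverse
      rw [hmem, hmem, List.reverse_append, List.reverse_append, List.reverse_reverse,
        DFA.evalFrom_of_append, DFA.evalFrom_of_append, hw] at this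
      exact this
    · intro h z
      rw [hmem, hmem, List.reverse_append, List.reverse_append,
        DFA.evalFrom_of_append, DFA.evalFrom_of_append]
      exact Set.ext_iff.mp h (M.evalFrom M.start z.reverse)
  -- nonempty atoms are exactly the range of f
  have hatom : ∀ S : Set Q, (atom M S).Nonempty ↔ S ∈ Set.range f := by
    intro S
    constructor
    · rintro ⟨w, hw⟩
      refine ⟨w, ?_⟩; ext q; exact hw q
    · rintro ⟨w, rfl⟩
      exact ⟨w, fun q => Iff.rfl⟩
  have e1 : {S : Set Q // (atom M S).Nonempty} ≃ Set.range f :=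
    Equiv.subtypeEquivRight hatom
  -- quotient by right congruence equiv range of f
  let g : Quotient (rightCong (List.reverse '' L)) → Set.range f :=
    Quotient.lift (fun x => ⟨f x.reverse, x.reverse, rfl⟩)
      (fun x y h => Subtype.ext ((hcong x y).mp h))
  have hg : Function.Bijective g := by
    constructor
    · intro a b
      induction a using Quotient.ind
      induction b using Quotient.ind
      intro h
      exact Quotient.sound ((hcong _ _).mpr (congrArg Subtype.val h))
    · rintro ⟨S, w, rfl⟩
      exact ⟨⟦w.reverse⟧, Subtype.ext (by simp [g])⟩
  have e2 : Quotient (rightCong (List.reverse '' L)) ≃ Set.range f :=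
    Equiv.ofBijective g hg
  rw [stateComplexity, Nat.card_congr e1, Nat.card_congr e2]
end
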